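/- arXiv:cs/0610027 — 9 statements merged into one kernel-verified Lean document; each statement's English description precedes it below -/
import Mathlib

section
/- Weak games are positionally determined: for every position p of a weak game, exactly one of the players has a winning strategy from p, and the winning player has a positional (memoryless) winning strategy from p. -/
def prefixIn {S : Type} (τ : Set (List S)) (f : ℕ → S) : Prop :=
  ∀ k : ℕ, (List.ofFn fun i : Fin (k + 1) => f i) ∈ τ

/-- A two-player game on a graph: positions of player 1 are those satisfying `own1`,
positions of player 2 the others; `rank` is used for the weak winning condition. -/
structure Game (S : Type) where
  succ : S → S → Prop
  own1 : S → Prop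
  rank : S → ℕ

namespace Game

variable {S : Type}

def IsPlay (G : Game S) (π : List S) : Prop := π ≠ [] ∧ π.Chain' G.succ

def Terminal (G : Game S) (p : S) : Prop := ∀ q, ¬ G.succ p q

/-- Does player `l` (`true` = player 1, `false` = player 2) own position `p`? -/
def Owns (G : Game S) (l : Bool) (p : S) : Prop := if l then G.own1 p else ¬ G.own1 p

/-- A strategy for player `l` from `p`, represented as its tree of finite plays. -/
def IsStrategy (G : Game S) (l : Bool) (p : S) (τ : Set (List S)) : Prop :=
  [p] ∈ τ ∧
  (∀ π ∈ τ, G.IsPlay π ∧ π.head? = some p) ∧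
  (∀ π ∈ τ, π ≠ [p] → π.dropLast ∈ τ) ∧
  (∀ π ∈ τ, ∀ q, π.getLast? = some q → G.Owns l q → (∃ q', G.succ q q') →
    ∃! q', G.succ q q' ∧ π ++ [q'] ∈ τ) ∧
  (∀ π ∈ τ, ∀ q, π.getLast? = some q → ¬ G.Owns l q → ∀ q', G.succ q q' → π ++ [q'] ∈ τ)

/-- A strategy is positional if the chosen successor depends only on the current position. -/
def Positional (G : Game S) (l : Bool) (τ : Set (List S)) : Prop :=
  ∀ π₁ π₂ q q₁ q₂, π₁ ∈ τ → π₂ ∈ τ →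
    π₁.getLast? = some q → π₂.getLast? = some q → G.Owns l q →
    π₁ ++ [q₁] ∈ τ → π₂ ++ [q₂] ∈ τ → q₁ = q₂

/-- An infinite play is winning for player `l` iff its eventually-constant rank has the
right parity (even for player 1, odd for player 2). -/
def InfWin (G : Game S) (l : Bool) (f : ℕ → S) : Prop :=
  ∃ N, (∀ j, N ≤ j → G.rank (f j) = G.rank (f N)) ∧
    G.rank (f N) % 2 = (if l then 0 else 1)

/-- A winning strategy: every complete finite play following it ends in an opponent
position, and every infinite play following it has the right limit-rank parity. -/
def IsWinningStrategy (G : Game S) (l : Bool) (p : S) (τ : Set (List S)) : Prop :=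
  G.IsStrategy l p τ ∧
  (∀ π ∈ τ, ∀ q, π.getLast? = some q → G.Terminal q → ¬ G.Owns l q) ∧
  (∀ f : ℕ → S, prefixIn τ f → G.InfWin l f)

end Game

/-- A weak game: finitely branching, with ranks non-increasing along edges. -/
structure WeakGame (S : Type) extends Game S where
  finBranch : ∀ p, {q | succ p q}.Finite
  rank_mono : ∀ p q, succ p q → rank q ≤ rank p


open Classical

namespace WGaux

variable {S : Type}

noncomputable def pl (n : ℕ) : Bool := decide (n % 2 = 0)

lemma owns_not (G : Game S) (l : Bool) (p : S) : G.Owns (!l) p ↔ ¬ G.Owns l p := by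
  cases l <;> simp [Game.Owns]

lemma not_terminal_iff (G : Game S) (p : S) : ¬ G.Terminal p ↔ ∃ q, G.succ p q := by
  simp [Game.Terminal]

def Tgt (G : Game S) (n : ℕ) (prev : S → Bool) : Set S :=
  {q | G.rank q < n ∧ prev q = !pl n} ∪ {q | G.rank q = n ∧ G.Terminal q ∧ G.Owns (pl n) q}

def att (G : Game S) (n : ℕ) (prev : S → Bool) : ℕ → Set S
  | 0 => Tgt G n prev
  | k+1 => att G n prev k ∪
      {p | G.rank p = n ∧ G.Owns (!pl n) p ∧ ∃ q, G.succ p q ∧ q ∈ att G n prev k} ∪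
      {p | G.rank p = n ∧ G.Owns (pl n) p ∧ ¬ G.Terminal p ∧ ∀ q, G.succ p q → q ∈ att G n prev k}

def Att (G : Game S) (n : ℕ) (prev : S → Bool) : Set S := ⋃ k, att G n prev k

lemma att_mono (G : Game S) (n : ℕ) (prev : S → Bool) {k k' : ℕ} (h : k ≤ k') :
    att G n prev k ⊆ att G n prev k' := by
  induction h with
  | refl => exact subset_rfl
  | step _ ih => exact ih.trans (by intro x hx; exact Or.inl (Or.inl hx))

lemma rank_le_of_mem_att (G : Game S) {n : ℕ} {prev : S → Bool} {k : ℕ} {q : S}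
    (h : q ∈ att G n prev k) : G.rank q ≤ n := by
  induction k with
  | zero =>
    rcases h with h | h
    · exact le_of_lt h.1
    · exact le_of_eq h.1
  | succ k ih =>
    rcases h with (h | h) | h
    · exact ih h
    · exact le_of_eq h.1
    · exact le_of_eq h.1

lemma mem_Tgt_of_rank_lt (G : Game S) {n : ℕ} {prev : S → Bool} {k : ℕ} {q : S}
    (hlt : G.rank q < n) (h : q ∈ att G n prev k) : q ∈ Tgt G n prev := by
  induction k with
  | zero => exact h
  | succ k ih =>
    rcases h with (h | h) | h
    · exact ih h
    · exact absurd h.1 (Nat.ne_of_lt hlt)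
    · exact absurd h.1 (Nat.ne_of_lt hlt)

lemma att_congr (G : Game S) (n : ℕ) {prev₁ prev₂ : S → Bool}
    (h : ∀ q, G.rank q < n → prev₁ q = prev₂ q) (k : ℕ) :
    att G n prev₁ k = att G n prev₂ k := by
  induction k with
  | zero =>
    unfold att Tgt
    ext q
    constructor <;> (rintro (⟨h1, h2⟩ | h2))
    · exact Or.inl ⟨h1, (h q h1).symm ▸ h2⟩
    · exact Or.inr h2
    · exact Or.inl ⟨h1, (h q h1) ▸ h2⟩
    · exact Or.inr h2
  | succ k ih => unfold att; rw [ih]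

lemma Att_congr (G : Game S) (n : ℕ) {prev₁ prev₂ : S → Bool}
    (h : ∀ q, G.rank q < n → prev₁ q = prev₂ q) :
    Att G n prev₁ = Att G n prev₂ := by
  unfold Att
  ext x
  simp only [Set.mem_iUnion]
  exact exists_congr fun k => by rw [att_congr G n h k]

lemma mem_Att_iff_aux (G : Game S) {n : ℕ} {prev : S → Bool} {q : S} :
    q ∈ Att G n prev ↔ ∃ k, q ∈ att G n prev k := by
  simp [Att, Set.mem_iUnion]

noncomputable def W (G : Game S) : ℕ → S → Bool
  | 0, _ => true
  | (n+1), p => if G.rank p < n then W G n p else if p ∈ Att G n (W G n) then !pl n else pl n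

noncomputable def winner (G : Game S) (p : S) : Bool := W G (G.rank p + 1) p

lemma Wstab (G : Game S) : ∀ m p, G.rank p < m → W G m p = winner G p := by
  intro m
  induction m with
  | zero => intro p h; omega
  | succ m ih =>
    intro p h
    by_cases h' : G.rank p < m
    · rw [show W G (m+1) p = W G m p by rw [W, if_pos h'], ih p h']
    · have : G.rank p = m := by omega
      subst this; rfl

lemma winner_eq (G : Game S) (p : S) :
    winner G p = if p ∈ Att G (G.rank p) (winner G) then !pl (G.rank p) else pl (G.rank p) := by
  have : winner G p = W G (G.rank p + 1) p := rfl
  rw [this, W, if_neg (lt_irrefl _),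
    Att_congr G (G.rank p) (fun q hq => Wstab G (G.rank p) q hq)]

lemma mem_Att_iff (G : Game S) {n : ℕ} {q : S} (h : G.rank q ≤ n) :
    q ∈ Att G n (winner G) ↔ winner G q = !pl n := by
  rcases lt_or_eq_of_le h with h | h
  · constructor
    · intro hq
      obtain ⟨k, hk⟩ := (mem_Att_iff_aux G).1 hq
      rcases mem_Tgt_of_rank_lt G h hk with h1 | h1
      · exact h1.2
      · exact absurd h1.1 (Nat.ne_of_lt h)
    · intro hw
      exact (mem_Att_iff_aux G).2 ⟨0, Or.inl ⟨h, hw⟩⟩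
  · subst h
    rw [winner_eq G q]
    constructor
    · intro hq; rw [if_pos hq]
    · intro hw
      by_contra hq
      rw [if_neg hq] at hw
      cases pl (G.rank q) <;> simp_all


noncomputable def dep (G : Game S) (p : S) : ℕ :=
  if h : ∃ k, p ∈ att G (G.rank p) (winner G) k then Nat.find h else 0

lemma dep_spec (G : Game S) {p : S} (h : p ∈ Att G (G.rank p) (winner G)) :
    p ∈ att G (G.rank p) (winner G) (dep G p) ∧
      ∀ k < dep G p, p ∉ att G (G.rank p) (winner G) k := by
  have h' := (mem_Att_iff_aux G).1 h
  rw [dep, dif_pos h']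
  exact ⟨Nat.find_spec h', fun k hk => Nat.find_min h' hk⟩

lemma dep_le (G : Game S) {p : S} {k : ℕ} (h : p ∈ att G (G.rank p) (winner G) k) :
    dep G p ≤ k := by
  have h' : ∃ k, p ∈ att G (G.rank p) (winner G) k := ⟨k, h⟩
  rw [dep, dif_pos h']
  exact Nat.find_min' h' h

/-- Properties of elements of `att n winner k`. -/
lemma att_elem (G : Game S) {n k : ℕ} {q : S} (h : q ∈ att G n (winner G) k) :
    winner G q = !pl n ∧ (G.rank q < n ∨ (G.rank q = n ∧ dep G q ≤ k)) := by
  have hle := rank_le_of_mem_att G h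
  have hA : q ∈ Att G n (winner G) := (mem_Att_iff_aux G).2 ⟨k, h⟩
  refine ⟨(mem_Att_iff G hle).1 hA, ?_⟩
  rcases lt_or_eq_of_le hle with h' | h'
  · exact Or.inl h'
  · exact Or.inr ⟨h', dep_le G (h' ▸ h)⟩

lemma terminal_mem_Tgt (G : Game S) {n k : ℕ} {prev : S → Bool} {p : S}
    (hT : G.Terminal p) (h : p ∈ att G n prev k) : p ∈ Tgt G n prev := by
  induction k with
  | zero => exact h
  | succ k ih =>
    rcases h with (h | h) | h
    · exact ih h
    · obtain ⟨q, hq, _⟩ := h.2.2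
      exact absurd hq (hT q)
    · exact absurd hT h.2.2.1

/-- L1: terminal positions are not owned by their winner. -/
lemma terminal_not_owns (G : Game S) {p : S} (hT : G.Terminal p) :
    ¬ G.Owns (winner G p) p := by
  set n := G.rank p with hn
  rw [winner_eq G p]
  by_cases hA : p ∈ Att G n (winner G)
  · rw [if_pos hA]
    obtain ⟨k, hk⟩ := (mem_Att_iff_aux G).1 hA
    rcases terminal_mem_Tgt G hT hk with h1 | h1
    · exact absurd h1.1 (lt_irrefl _)
    · intro hc
      exact (owns_not G (pl n) p).1 hc h1.2.2
  · rw [if_neg hA]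
    intro hc
    exact hA ((mem_Att_iff_aux G).2 ⟨0, Or.inr ⟨rfl, hT, hc⟩⟩)


lemma bool_resolve {a b : Bool} (h : a ≠ !b) : a = b := by
  cases a <;> cases b <;> simp_all

lemma bool_not_ne (b : Bool) : (!b) ≠ b := by cases b <;> simp

/-- Closure of the attractor under the universal rule, using finite branching. -/
lemma att_closure (G : Game S) (hfin : ∀ p, {q | G.succ p q}.Finite) {n : ℕ} {p : S}
    (hrk : G.rank p = n) (hP : G.Owns (pl n) p) (hT : ¬ G.Terminal p)
    (hall : ∀ q, G.succ p q → q ∈ Att G n (winner G)) : p ∈ Att G n (winner G) := by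
  have hex : ∀ q, G.succ p q → ∃ k, q ∈ att G n (winner G) k := fun q hq =>
    (mem_Att_iff_aux G).1 (hall q hq)
  choose K hK using hex
  set F := (hfin p).toFinset with hF
  set k := F.sup (fun q => if h : G.succ p q then K q h else 0) with hk
  have hmem : ∀ q, G.succ p q → q ∈ att G n (winner G) k := by
    intro q hq
    have hqF : q ∈ F := (Set.Finite.mem_toFinset _).2 hq
    have : K q hq ≤ k := by
      have := Finset.le_sup (f := fun q => if h : G.succ p q then K q h else 0) hqF
      simpa [dif_pos hq] using this
    exact att_mono G n (winner G) this (hK q hq)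
  exact (mem_Att_iff_aux G).2 ⟨k + 1, Or.inr ⟨hrk, hP, hT, hmem⟩⟩

/-- A successor `q` of `p` is good if it has the same winner and, when the winner
disagrees with the parity at `p`, the measure strictly decreases. -/
def good (G : Game S) (p q : S) : Prop :=
  winner G q = winner G p ∧
    (winner G p ≠ pl (G.rank p) →
      G.rank q < G.rank p ∨ (G.rank q = G.rank p ∧ dep G q < dep G p))

/-- L2 and L3: the winner of a nonterminal position can preserve his win. -/
lemma step (G : Game S) (hfin : ∀ p, {q | G.succ p q}.Finite)
    (hmono : ∀ p q, G.succ p q → G.rank q ≤ G.rank p) (p : S) (hT : ¬ G.Terminal p) :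
    (G.Owns (winner G p) p → ∃ q, G.succ p q ∧ good G p q) ∧
    (¬ G.Owns (winner G p) p → ∀ q, G.succ p q → good G p q) := by
  by_cases hA : p ∈ Att G (G.rank p) (winner G)
  · have hw : winner G p = !pl (G.rank p) := (mem_Att_iff G le_rfl).1 hA
    obtain ⟨hmem, hmin⟩ := dep_spec G hA
    have hd : dep G p ≠ 0 := by
      intro h0
      rw [h0] at hmem
      rcases hmem with h1 | h1
      · exact absurd h1.1 (lt_irrefl _)
      · exact absurd h1.2.1 hT
    obtain ⟨k', hk'⟩ : ∃ k', dep G p = k' + 1 := ⟨dep G p - 1, by omega⟩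
    rw [hk'] at hmem
    have hgood : ∀ q, q ∈ att G (G.rank p) (winner G) k' → good G p q := by
      intro q hq
      obtain ⟨hw', hm⟩ := att_elem G hq
      refine ⟨hw'.trans hw.symm, fun _ => ?_⟩
      rcases hm with hm | hm
      · exact Or.inl hm
      · exact Or.inr ⟨hm.1, by omega⟩
    rcases hmem with (h1 | h1) | h1
    · exact absurd h1 (hmin k' (by omega))
    · obtain ⟨_, hO, q, hq, hqk⟩ := h1
      constructor
      · intro _; exact ⟨q, hq, hgood q hqk⟩
      · intro hno; exact absurd (hw ▸ hO) hno
    · obtain ⟨_, hP, _, hall⟩ := h1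
      constructor
      · intro hOwns
        rw [hw] at hOwns
        exact absurd hP ((owns_not G _ p).1 hOwns)
      · intro _ q hq; exact hgood q (hall q hq)
  · have hw : winner G p = pl (G.rank p) := by rw [winner_eq G p, if_neg hA]
    have hgood : ∀ q, G.succ p q → q ∉ Att G (G.rank p) (winner G) → good G p q := by
      intro q hq hqA
      refine ⟨?_, fun hne => absurd hw hne⟩
      have : winner G q ≠ !pl (G.rank p) := fun hc =>
        hqA ((mem_Att_iff G (hmono p q hq)).2 hc)
      rw [bool_resolve this, hw]
    constructor
    · intro hOwns
      rw [hw] at hOwns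
      by_contra hcon
      push_neg at hcon
      have hall : ∀ q, G.succ p q → q ∈ Att G (G.rank p) (winner G) := by
        intro q hq
        by_contra hqA
        exact absurd (hgood q hq hqA) (hcon q hq)
      exact hA (att_closure G hfin rfl hOwns hT hall)
    · intro _ q hq
      refine hgood q hq (fun hqA => hA ?_)
      obtain ⟨k, hk⟩ := (mem_Att_iff_aux G).1 hqA
      have hO : G.Owns (!pl (G.rank p)) p := by
        rename_i hno
        exact (owns_not G _ p).2 (hw ▸ hno)
      exact (mem_Att_iff_aux G).2 ⟨k + 1, Or.inl (Or.inr ⟨rfl, hO, q, hq, hk⟩)⟩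


section Strat

variable (G : Game S) (hfin : ∀ p, {q | G.succ p q}.Finite)
  (hmono : ∀ p q, G.succ p q → G.rank q ≤ G.rank p)

noncomputable def sigma (p : S) : S :=
  if h : ¬ G.Terminal p ∧ G.Owns (winner G p) p then
    Classical.choose ((step G hfin hmono p h.1).1 h.2)
  else p

lemma sigma_spec {p : S} (hT : ¬ G.Terminal p) (hO : G.Owns (winner G p) p) :
    G.succ p (sigma G hfin hmono p) ∧ good G p (sigma G hfin hmono p) := by
  rw [sigma, dif_pos ⟨hT, hO⟩]
  exact Classical.choose_spec ((step G hfin hmono p hT).1 hO)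

/-- The consistency relation defining the strategy tree of player `w`. -/
def Rel (w : Bool) (a b : S) : Prop :=
  G.succ a b ∧ (G.Owns w a → b = sigma G hfin hmono a)

lemma consec {w : Bool} {a b : S} (hw : winner G a = w) (hR : Rel G hfin hmono w a b) :
    winner G b = w ∧ (w ≠ pl (G.rank a) →
      G.rank b < G.rank a ∨ (G.rank b = G.rank a ∧ dep G b < dep G a)) := by
  have hT : ¬ G.Terminal a := fun hc => hc b hR.1
  have hg : good G a b := by
    by_cases hO : G.Owns w a
    · have := sigma_spec G hfin hmono hT (hw ▸ hO)
      rw [← hR.2 hO] at this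
      exact this.2
    · exact (step G hfin hmono a hT).2 (fun hc => hO (hw ▸ hc)) b hR.1
  exact ⟨hg.1.trans hw, fun hne => hg.2 (hw ▸ hne)⟩

/-- The positional strategy tree for the winner of `p`. -/
def tau (p : S) : Set (List S) :=
  {π | π ≠ [] ∧ π.head? = some p ∧ π.Chain' (Rel G hfin hmono (winner G p))}

lemma last_winner {w : Bool} {p : S} (hw : winner G p = w) :
    ∀ π : List S, π.Chain' (Rel G hfin hmono w) → π.head? = some p →
      ∀ q, π.getLast? = some q → winner G q = w := by
  intro π
  induction π using List.reverseRecOn with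
  | nil => intro _ h; simp at h
  | append_singleton l a ih =>
    intro hch hhd q hq
    rw [List.getLast?_concat] at hq
    obtain rfl : q = a := by injection hq with h; exact h.symm
    rcases eq_or_ne l [] with rfl | hl
    · simp at hhd
      subst hhd
      exact hw
    · obtain ⟨hch1, _, hjun⟩ := List.isChain_append.1 hch
      have hlast : l.getLast? = some (l.getLast hl) := List.getLast?_eq_getLast hl
      have hR : Rel G hfin hmono w (l.getLast hl) q := hjun _ hlast q rfl
      have hwl : winner G (l.getLast hl) = w := by
        refine ih hch1 ?_ _ hlast
        rwa [List.head?_append_of_ne_nil l hl] at hhd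
      exact (consec G hfin hmono hwl hR).1

end Strat


lemma nat_stabilize (g : ℕ → ℕ) (h : ∀ i, g (i+1) ≤ g i) : ∃ N, ∀ j, N ≤ j → g j = g N := by
  have hmono : ∀ i j, i ≤ j → g j ≤ g i := by
    intro i j hij
    induction hij with
    | refl => exact le_refl _
    | step _ ih => exact (h _).trans ih
  have hex : ∃ m, ∃ i, g i = m := ⟨g 0, 0, rfl⟩
  obtain ⟨N, hN⟩ := Nat.find_spec hex
  refine ⟨N, fun j hj => le_antisymm (hmono N j hj) ?_⟩
  rw [hN]
  exact Nat.find_min' hex ⟨j, rfl⟩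

lemma nat_no_descent (d : ℕ → ℕ) (h : ∀ k, d (k+1) < d k) : False := by
  have key : ∀ k, d k + k ≤ d 0 := by
    intro k
    induction k with
    | zero => simp
    | succ k ih => have := h k; omega
  have := key (d 0 + 1)
  omega

section Strat2

variable (G : Game S) (hfin : ∀ p, {q | G.succ p q}.Finite)
  (hmono : ∀ p q, G.succ p q → G.rank q ≤ G.rank p)

lemma tau_extend {p : S} {π : List S} (h : π ∈ tau G hfin hmono p) {q q' : S}
    (hlast : π.getLast? = some q) (hR : Rel G hfin hmono (winner G p) q q') :
    π ++ [q'] ∈ tau G hfin hmono p := by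
  obtain ⟨hne, hhd, hch⟩ := h
  refine ⟨by simp, by rwa [List.head?_append_of_ne_nil π hne], ?_⟩
  refine List.isChain_append.2 ⟨hch, List.isChain_singleton q', ?_⟩
  intro x hx y hy
  rw [hlast] at hx
  injection hx with hx
  injection hy with hy
  subst hx; subst hy
  exact hR

lemma tau_junction {p : S} {π : List S} {q q' : S} (h : π ++ [q'] ∈ tau G hfin hmono p)
    (hlast : π.getLast? = some q) : Rel G hfin hmono (winner G p) q q' := by
  have := (List.isChain_append.1 h.2.2).2.2
  exact this q hlast q' rfl

lemma tau_last_winner {p : S} {π : List S} (h : π ∈ tau G hfin hmono p) {q : S}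
    (hlast : π.getLast? = some q) : winner G q = winner G p :=
  last_winner G hfin hmono rfl π h.2.2 h.2.1 q hlast

lemma tau_infwin (p : S) (f : ℕ → S) (hpf : prefixIn (tau G hfin hmono p) f) :
    G.InfWin (winner G p) f := by
  have hf0 : f 0 = p := by
    have := (hpf 0).2.1
    simp [List.ofFn_succ] at this
    exact this
  have hstep : ∀ j, Rel G hfin hmono (winner G p) (f j) (f (j + 1)) := by
    intro j
    have hch := (hpf (j + 1)).2.2
    change List.IsChain _ _ at hch
    rw [List.isChain_iff_getElem] at hch
    have hlen : (List.ofFn fun i : Fin (j + 2) => f i).length = j + 2 := List.length_ofFn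
    have hj : j < (List.ofFn fun i : Fin (j + 2) => f i).length - 1 := by omega
    have e1 : ∀ (i : ℕ) (hi : i < (List.ofFn fun i : Fin (j + 2) => f i).length),
        (List.ofFn fun i : Fin (j + 2) => f i).get ⟨i, hi⟩ = f i := by
      intro i hi
      simp only [List.get_ofFn]
      congr 1
    have := hch j (by rw [hlen]; omega)
    simpa only [List.getElem_ofFn, Fin.val_mk] using this
  have hw : ∀ j, winner G (f j) = winner G p := by
    intro j
    induction j with
    | zero => rw [hf0]
    | succ j ih => exact (consec G hfin hmono ih (hstep j)).1
  obtain ⟨N, hN⟩ := nat_stabilize (fun j => G.rank (f j)) (fun j => hmono _ _ (hstep j).1)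
  have hpar : pl (G.rank (f N)) = winner G p := by
    by_contra hne
    have hdec : ∀ k, dep G (f (N + (k + 1))) < dep G (f (N + k)) := by
      intro k
      have h1 := (consec G hfin hmono (hw (N + k)) (hstep (N + k))).2
      have hr1 : G.rank (f (N + k)) = G.rank (f N) := hN _ (by omega)
      have hr2 : G.rank (f (N + k + 1)) = G.rank (f N) := hN _ (by omega)
      have := h1 (by rw [hr1]; exact fun hc => hne hc.symm)
      rcases this with h2 | h2
      · omega
      · have : N + (k + 1) = N + k + 1 := by omega
        rw [this]
        exact h2.2
    exact absurd hdec (fun h => nat_no_descent (fun k => dep G (f (N + k))) h)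
  refine ⟨N, hN, ?_⟩
  cases hcw : winner G p with
  | false => rw [hcw] at hpar; simp [pl] at hpar; simp; omega
  | true => rw [hcw] at hpar; simp [pl] at hpar; simp [hpar]

lemma tau_main (p : S) :
    G.IsWinningStrategy (winner G p) p (tau G hfin hmono p) ∧
    G.Positional (winner G p) (tau G hfin hmono p) := by
  have hmem0 : [p] ∈ tau G hfin hmono p := ⟨by simp, rfl, List.isChain_singleton p⟩
  constructor
  · refine ⟨⟨hmem0, ?_, ?_, ?_, ?_⟩, ?_, tau_infwin G hfin hmono p⟩
    · -- plays with head p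
      intro π h
      exact ⟨⟨h.1, List.IsChain.imp (fun a b hab => hab.1) h.2.2⟩, h.2.1⟩
    · -- dropLast
      intro π h hne1
      obtain ⟨hne, hhd, hch⟩ := h
      have heq := List.dropLast_append_getLast hne
      have hdl : π.dropLast ≠ [] := by
        intro hc
        rw [hc, List.nil_append] at heq
        rw [← heq] at hhd hne1
        simp at hhd
        exact hne1 (by rw [hhd])
      refine ⟨hdl, ?_, ?_⟩
      · rw [← heq, List.head?_append_of_ne_nil _ hdl] at hhd
        exact hhd
      · rw [← heq] at hch
        exact (List.isChain_append.1 hch).1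
    · -- player's moves
      intro π h q hlast hO hex
      obtain ⟨q0, hq0⟩ := hex
      have hT : ¬ G.Terminal q := fun hc => hc q0 hq0
      have hwq : winner G q = winner G p := tau_last_winner G hfin hmono h hlast
      have hspec := sigma_spec G hfin hmono hT (by rwa [hwq])
      refine ⟨sigma G hfin hmono q, ⟨hspec.1, ?_⟩, ?_⟩
      · exact tau_extend G hfin hmono h hlast ⟨hspec.1, fun _ => rfl⟩
      · intro y hy
        exact (tau_junction G hfin hmono hy.2 hlast).2 hO
    · -- opponent's moves
      intro π h q hlast hO q' hq'
      exact tau_extend G hfin hmono h hlast ⟨hq', fun hc => absurd hc hO⟩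
    · -- finite complete plays
      intro π h q hlast hT
      rw [← tau_last_winner G hfin hmono h hlast]
      exact terminal_not_owns G hT
  · -- positional
    intro π₁ π₂ q q₁ q₂ h₁ h₂ hl₁ hl₂ hO he₁ he₂
    rw [(tau_junction G hfin hmono he₁ hl₁).2 hO, (tau_junction G hfin hmono he₂ hl₂).2 hO]

end Strat2


section Clash

variable {S : Type}

lemma clash_ext (G : Game S) {p : S} {τ₁ τ₂ : Set (List S)}
    (h1 : G.IsWinningStrategy true p τ₁) (h2 : G.IsWinningStrategy false p τ₂) :
    ∀ π, π ∈ τ₁ → π ∈ τ₂ → ∃ q', π ++ [q'] ∈ τ₁ ∧ π ++ [q'] ∈ τ₂ := by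
  intro π hm1 hm2
  have hne : π ≠ [] := (h1.1.2.1 π hm1).1.1
  have hlast : π.getLast? = some (π.getLast hne) := List.getLast?_eq_getLast hne
  set q := π.getLast hne with hq
  by_cases hT : G.Terminal q
  · exfalso
    have a1 := h1.2.1 π hm1 q hlast hT
    have a2 := h2.2.1 π hm2 q hlast hT
    simp [Game.Owns] at a1 a2
    exact a1 a2
  · obtain ⟨q0, hq0⟩ : ∃ q0, G.succ q q0 := by
      by_contra hc
      push_neg at hc
      exact hT hc
    by_cases ho : G.own1 q
    · obtain ⟨q', ⟨hs, hmem⟩, _⟩ :=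
        h1.1.2.2.2.1 π hm1 q hlast (by simpa [Game.Owns] using ho) ⟨q0, hq0⟩
      exact ⟨q', hmem, h2.1.2.2.2.2 π hm2 q hlast (by simpa [Game.Owns] using ho) q' hs⟩
    · obtain ⟨q', ⟨hs, hmem⟩, _⟩ :=
        h2.1.2.2.2.1 π hm2 q hlast (by simpa [Game.Owns] using ho) ⟨q0, hq0⟩
      exact ⟨q', h1.1.2.2.2.2 π hm1 q hlast (by simpa [Game.Owns] using ho) q' hs, hmem⟩

noncomputable def joint (τ₁ τ₂ : Set (List S)) (p : S)
    (ext : ∀ π, π ∈ τ₁ → π ∈ τ₂ → ∃ q', π ++ [q'] ∈ τ₁ ∧ π ++ [q'] ∈ τ₂)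
    (h0 : [p] ∈ τ₁ ∧ [p] ∈ τ₂) : ℕ → {π : List S // π ∈ τ₁ ∧ π ∈ τ₂}
  | 0 => ⟨[p], h0⟩
  | k+1 =>
      let x := joint τ₁ τ₂ p ext h0 k
      ⟨x.1 ++ [Classical.choose (ext x.1 x.2.1 x.2.2)],
       Classical.choose_spec (ext x.1 x.2.1 x.2.2)⟩

lemma joint_ofFn (τ₁ τ₂ : Set (List S)) (p : S)
    (ext : ∀ π, π ∈ τ₁ → π ∈ τ₂ → ∃ q', π ++ [q'] ∈ τ₁ ∧ π ++ [q'] ∈ τ₂)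
    (h0 : [p] ∈ τ₁ ∧ [p] ∈ τ₂) :
    ∀ k, (joint τ₁ τ₂ p ext h0 k).1 =
      List.ofFn (fun i : Fin (k+1) =>
        ((joint τ₁ τ₂ p ext h0 i).1.getLast?).getD p) := by
  intro k
  induction k with
  | zero => simp [joint]
  | succ k ih =>
    have hstep : (joint τ₁ τ₂ p ext h0 (k+1)).1 =
        (joint τ₁ τ₂ p ext h0 k).1 ++
          [Classical.choose (ext (joint τ₁ τ₂ p ext h0 k).1
            (joint τ₁ τ₂ p ext h0 k).2.1 (joint τ₁ τ₂ p ext h0 k).2.2)] := rfl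
    have hlastval : ((joint τ₁ τ₂ p ext h0 (k+1)).1.getLast?).getD p =
        Classical.choose (ext (joint τ₁ τ₂ p ext h0 k).1
            (joint τ₁ τ₂ p ext h0 k).2.1 (joint τ₁ τ₂ p ext h0 k).2.2) := by
      rw [hstep, List.getLast?_concat]
      rfl
    rw [List.ofFn_succ' (fun i : Fin (k+2) => ((joint τ₁ τ₂ p ext h0 i).1.getLast?).getD p)]
    rw [List.concat_eq_append, hstep]
    congr 1
    simp only [Fin.val_last]
    rw [hlastval]

lemma clash (G : Game S) {p : S} {τ₁ τ₂ : Set (List S)}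
    (h1 : G.IsWinningStrategy true p τ₁) (h2 : G.IsWinningStrategy false p τ₂) : False := by
  have ext := clash_ext G h1 h2
  have h0 : [p] ∈ τ₁ ∧ [p] ∈ τ₂ := ⟨h1.1.1, h2.1.1⟩
  set jf : ℕ → S := fun k => ((joint τ₁ τ₂ p ext h0 k).1.getLast?).getD p with hjf
  have hofn := joint_ofFn τ₁ τ₂ p ext h0
  have pf1 : prefixIn τ₁ jf := by
    intro k
    rw [← hofn k]
    exact (joint τ₁ τ₂ p ext h0 k).2.1
  have pf2 : prefixIn τ₂ jf := by
    intro k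
    rw [← hofn k]
    exact (joint τ₁ τ₂ p ext h0 k).2.2
  obtain ⟨N₁, hN₁, hp₁⟩ := h1.2.2 jf pf1
  obtain ⟨N₂, hN₂, hp₂⟩ := h2.2.2 jf pf2
  simp at hp₁ hp₂
  have e1 := hN₁ (max N₁ N₂) (le_max_left _ _)
  have e2 := hN₂ (max N₁ N₂) (le_max_right _ _)
  omega

end Clash

end WGaux

/-- Weak games are positionally determined: from every position exactly one of the two
players has a winning strategy, and the winner has a positional winning strategy. -/
theorem weakGame_positional_determinacy {S : Type} (G : WeakGame S) (p : S) :
    Xor' (∃ τ, G.toGame.IsWinningStrategy true p τ)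
         (∃ τ, G.toGame.IsWinningStrategy false p τ) ∧
    (∀ l : Bool, (∃ τ, G.toGame.IsWinningStrategy l p τ) →
      ∃ τ, G.toGame.IsWinningStrategy l p τ ∧ G.toGame.Positional l τ) := by
  have hfin := G.finBranch
  have hmono := G.rank_mono
  obtain ⟨hwin, hpos⟩ := WGaux.tau_main G.toGame hfin hmono p
  constructor
  · cases hcw : WGaux.winner G.toGame p with
    | true =>
      rw [hcw] at hwin
      refine Or.inl ⟨⟨_, hwin⟩, ?_⟩
      rintro ⟨τ₂, h2⟩
      exact WGaux.clash G.toGame hwin h2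
    | false =>
      rw [hcw] at hwin
      refine Or.inr ⟨⟨_, hwin⟩, ?_⟩
      rintro ⟨τ₁, h1⟩
      exact WGaux.clash G.toGame h1 hwin
  · intro l hl
    by_cases hlw : l = WGaux.winner G.toGame p
    · subst hlw
      exact ⟨_, hwin, hpos⟩
    · exfalso
      obtain ⟨τ', h'⟩ := hl
      cases hb : WGaux.winner G.toGame p with
      | true =>
        rw [hb] at hwin hlw
        have hlf : l = false := by cases l <;> simp_all
        rw [hlf] at h'
        exact WGaux.clash G.toGame hwin h'
      | false =>
        rw [hb] at hwin hlw
        have hlt : l = true := by cases l <;> simp_all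
        rw [hlt] at h'
        exact WGaux.clash G.toGame h' hwin
end

section
/- If α is a consistent signature assignment for a weak game G, then for every position p in the domain of α, player 1 has a positional winning strategy from p in G. -/
/-- Lexicographic (non-strict) order on pairs of naturals. -/
def lexLe (x y : ℕ × ℕ) : Prop := x.1 < y.1 ∨ (x.1 = y.1 ∧ x.2 ≤ y.2)

/-- Lexicographic strict order on pairs of naturals. -/
def lexLt (x y : ℕ × ℕ) : Prop := x.1 < y.1 ∨ (x.1 = y.1 ∧ x.2 < y.2)

/-- A consistent signature assignment for a game: a partial map `α` to ℕ such that
at player-1 positions of its domain some successor stays in the domain with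
lexicographically non-increasing `(rank, α)` (strictly decreasing when the rank is odd),
and at player-2 positions of the domain all successors satisfy this. -/
def ConsistentSig {S : Type} (G : Game S) (α : S → Option ℕ) : Prop :=
  (∀ p m, α p = some m → G.own1 p →
    ∃ p', G.succ p p' ∧ ∃ m', α p' = some m' ∧
      lexLe (G.rank p', m') (G.rank p, m) ∧
      (G.rank p % 2 = 1 → lexLt (G.rank p', m') (G.rank p, m))) ∧
  (∀ p m, α p = some m → ¬ G.own1 p →
    ∀ p', G.succ p p' → ∃ m', α p' = some m' ∧
      lexLe (G.rank p', m') (G.rank p, m) ∧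
      (G.rank p % 2 = 1 → lexLt (G.rank p', m') (G.rank p, m)))


open Classical in
/-- The successor chosen by player 1 at position `q` (when `q` is owned by player 1
and lies in the domain of `α`). -/
noncomputable def sigPick {S : Type} (G : WeakGame S) (α : S → Option ℕ)
    (hα : ConsistentSig G.toGame α) (q : S) : S :=
  if h : (α q).isSome ∧ G.own1 q then
    (hα.1 q ((α q).get h.1) (Option.some_get h.1).symm h.2).choose
  else q

lemma sigPick_spec {S : Type} (G : WeakGame S) (α : S → Option ℕ)
    (hα : ConsistentSig G.toGame α) {q : S} (h1 : (α q).isSome) (h2 : G.own1 q) :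
    G.succ q (sigPick G α hα q) ∧ ∃ m', α (sigPick G α hα q) = some m' ∧
      lexLe (G.rank (sigPick G α hα q), m') (G.rank q, (α q).get h1) ∧
      (G.rank q % 2 = 1 → lexLt (G.rank (sigPick G α hα q), m') (G.rank q, (α q).get h1)) := by
  rw [sigPick, dif_pos (⟨h1, h2⟩ : (α q).isSome ∧ G.own1 q)]
  exact (hα.1 q ((α q).get h1) (Option.some_get h1).symm h2).choose_spec

/-- One step of play consistent with player 1's positional choice. -/
def SigRel {S : Type} (G : WeakGame S) (α : S → Option ℕ)
    (hα : ConsistentSig G.toGame α) (q q' : S) : Prop :=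
  G.succ q q' ∧ (G.own1 q → q' = sigPick G α hα q)

/-- The positional strategy tree induced by the signature assignment. -/
def SigStrat {S : Type} (G : WeakGame S) (α : S → Option ℕ)
    (hα : ConsistentSig G.toGame α) (p : S) : Set (List S) :=
  {π | π.head? = some p ∧ π.Chain' (SigRel G α hα) ∧ ∀ q ∈ π, (α q).isSome}

lemma sigStrat_extend {S : Type} (G : WeakGame S) (α : S → Option ℕ)
    (hα : ConsistentSig G.toGame α) (p : S) {π : List S} {q q' : S}
    (hπ : π ∈ SigStrat G α hα p) (hl : π.getLast? = some q)
    (hR : SigRel G α hα q q') (hd : (α q').isSome) :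
    π ++ [q'] ∈ SigStrat G α hα p := by
  obtain ⟨h1, h2, h3⟩ := hπ
  refine ⟨?_, ?_, ?_⟩
  · cases π with
    | nil => simp at h1
    | cons a t => simpa using h1
  · rw [List.Chain', List.isChain_append]
    refine ⟨h2, List.isChain_singleton q', ?_⟩
    intro x hx y hy
    simp only [List.head?_cons, Option.mem_def, Option.some.injEq] at hy
    rw [hl] at hx
    simp only [Option.mem_def, Option.some.injEq] at hx
    subst hx; subst hy; exact hR
  · intro x hx
    rcases List.mem_append.1 hx with h | h
    · exact h3 x h
    · simp only [List.mem_singleton] at h; subst h; exact hd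

lemma getLast?_mem' {α : Type*} {l : List α} {q : α} (h : l.getLast? = some q) : q ∈ l := by
  obtain ⟨hne, rfl⟩ := List.mem_getLast?_eq_getLast (Option.mem_def.2 h)
  exact List.getLast_mem hne

/-- If `α` is a consistent signature assignment for a weak game, then player 1 has a
positional winning strategy from every position in the domain of `α`. -/
theorem consistentSig_gives_player1_positional_win {S : Type} (G : WeakGame S)
    (α : S → Option ℕ) (hα : ConsistentSig G.toGame α) (p : S) (hp : (α p).isSome) :
    ∃ τ, G.toGame.IsWinningStrategy true p τ ∧ G.toGame.Positional true τ := by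
  classical
  refine ⟨SigStrat G α hα p, ⟨⟨?_, ?_, ?_, ?_, ?_⟩, ?_, ?_⟩, ?_⟩
  · -- [p] ∈ τ
    exact ⟨rfl, List.isChain_singleton p, by simpa using hp⟩
  · -- plays
    rintro π ⟨h1, h2, h3⟩
    have hne : π ≠ [] := by intro h; rw [h] at h1; simp at h1
    exact ⟨⟨hne, h2.imp fun _ _ h => h.1⟩, h1⟩
  · -- dropLast closed
    rintro π ⟨h1, h2, h3⟩ hne
    cases π with
    | nil => simp at h1
    | cons a t =>
      simp only [List.head?_cons, Option.some.injEq] at h1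
      subst h1
      cases t with
      | nil => exact absurd rfl hne
      | cons b s =>
        exact ⟨by simp, h2.prefix (List.dropLast_prefix _),
          fun q hq => h3 q ((List.dropLast_prefix _).subset hq)⟩
  · -- player-1 moves: unique extension
    rintro π hπ q hl hq _
    have hqmem : q ∈ π := getLast?_mem' hl
    have hqd : (α q).isSome := hπ.2.2 q hqmem
    have hq1 : G.own1 q := by simpa [Game.Owns] using hq
    obtain ⟨hsucc, m', hm', _⟩ := sigPick_spec G α hα hqd hq1
    refine ⟨sigPick G α hα q, ⟨hsucc, ?_⟩, ?_⟩
    · exact sigStrat_extend G α hα p hπ hl ⟨hsucc, fun _ => rfl⟩ (by simp [hm'])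
    · rintro q' ⟨hs', hmem'⟩
      have := hmem'.2.1
      rw [List.Chain', List.isChain_append] at this
      have := this.2.2 q (by rw [hl]; rfl) q' rfl
      exact this.2 hq1
  · -- player-2 moves: all extensions
    rintro π hπ q hl hq q' hs'
    have hqmem : q ∈ π := getLast?_mem' hl
    have hqd : (α q).isSome := hπ.2.2 q hqmem
    have hq2 : ¬ G.own1 q := by simpa [Game.Owns] using hq
    obtain ⟨m', hm', _⟩ := hα.2 q ((α q).get hqd) (Option.some_get hqd).symm hq2 q' hs'
    exact sigStrat_extend G α hα p hπ hl ⟨hs', fun h => absurd h hq2⟩ (by simp [hm'])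
  · -- terminal positions belong to player 2
    rintro π hπ q hl hterm hq
    have hqd : (α q).isSome := hπ.2.2 q (getLast?_mem' hl)
    have hq1 : G.own1 q := by simpa [Game.Owns] using hq
    obtain ⟨hsucc, _⟩ := sigPick_spec G α hα hqd hq1
    exact hterm _ hsucc
  · -- infinite plays
    intro f hf
    have hdom : ∀ j, (α (f j)).isSome := by
      intro j
      exact (hf j).2.2 (f j) (List.mem_ofFn.2 ⟨⟨j, Nat.lt_succ_self j⟩, rfl⟩)
    have hstep : ∀ j, SigRel G α hα (f j) (f (j + 1)) := by
      intro j
      have hc := (hf (j + 1)).2.1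
      rw [List.Chain', List.isChain_iff_getElem] at hc
      have hlen : j + 1 < (List.ofFn fun i : Fin (j + 1 + 1) => f i).length := by simp
      have := hc j hlen
      simp only [List.getElem_ofFn] at this
      simpa using this
    set m : ℕ → ℕ := fun j => (α (f j)).get (hdom j) with hm
    have hdec : ∀ j, lexLe (G.rank (f (j + 1)), m (j + 1)) (G.rank (f j), m j) ∧
        (G.rank (f j) % 2 = 1 → lexLt (G.rank (f (j + 1)), m (j + 1)) (G.rank (f j), m j)) := by
      intro j
      obtain ⟨hs, hmove⟩ := hstep j
      by_cases ho : G.own1 (f j)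
      · have hpe := hmove ho
        obtain ⟨_, m', hm', hle, hlt⟩ := sigPick_spec G α hα (hdom j) ho
        have hmj : m (j + 1) = m' := by
          have : α (f (j + 1)) = some m' := by rw [hpe]; exact hm'
          simp [hm, this]
        rw [hmj]
        rw [hpe]
        exact ⟨hle, hlt⟩
      · obtain ⟨m', hm', hle, hlt⟩ :=
          hα.2 (f j) (m j) (Option.some_get (hdom j)).symm ho (f (j + 1)) hs
        have hmj : m (j + 1) = m' := by simp [hm, hm']
        rw [hmj]; exact ⟨hle, hlt⟩
    have hrk : ∀ a b, a ≤ b → G.rank (f b) ≤ G.rank (f a) := by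
      intro a b hab
      induction b, hab using Nat.le_induction with
      | base => exact le_rfl
      | succ n hn ih => exact le_trans (G.rank_mono _ _ (hstep n).1) ih
    obtain ⟨N, hN⟩ : ∃ N, G.rank (f N) = sInf (Set.range fun j => G.rank (f j)) := by
      have := Nat.sInf_mem (Set.range_nonempty fun j => G.rank (f j))
      obtain ⟨N, hN⟩ := this
      exact ⟨N, hN⟩
    have hconst : ∀ j, N ≤ j → G.rank (f j) = G.rank (f N) := by
      intro j hj
      refine le_antisymm (hrk N j hj) ?_
      rw [hN]
      exact Nat.sInf_le ⟨j, rfl⟩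
    refine ⟨N, hconst, ?_⟩
    by_contra hodd
    simp only [if_true] at hodd
    have hodd' : G.rank (f N) % 2 = 1 := by omega
    have hdesc : ∀ j, N ≤ j → m (j + 1) < m j := by
      intro j hj
      have h1 : G.rank (f j) % 2 = 1 := by rw [hconst j hj]; exact hodd'
      have := (hdec j).2 h1
      rcases this with h | h
      · exfalso
        have e1 : G.rank (f (j + 1)) = G.rank (f N) := hconst (j + 1) (le_trans hj (Nat.le_succ j))
        have e2 : G.rank (f j) = G.rank (f N) := hconst j hj
        simp only at h
        omega
      · exact h.2
    have key : ∀ k, m (N + k) + k ≤ m N := by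
      intro k
      induction k with
      | zero => simp
      | succ n ih =>
        have := hdesc (N + n) (Nat.le_add_right N n)
        have : m (N + (n + 1)) < m (N + n) := by
          rw [← Nat.add_assoc]; exact this
        omega
    have := key (m N + 1)
    omega
  · -- positional
    rintro π₁ π₂ q q₁ q₂ _ _ hl₁ hl₂ hq hm₁ hm₂
    have hq1 : G.own1 q := by simpa [Game.Owns] using hq
    have e1 : q₁ = sigPick G α hα q := by
      have hc := hm₁.2.1
      rw [List.Chain', List.isChain_append] at hc
      exact (hc.2.2 q (by rw [hl₁]; rfl) q₁ rfl).2 hq1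
    have e2 : q₂ = sigPick G α hα q := by
      have hc := hm₂.2.1
      rw [List.Chain', List.isChain_append] at hc
      exact (hc.2.2 q (by rw [hl₂]; rfl) q₂ rfl).2 hq1
    rw [e1, e2]
end

section
/- In every weak game G there exists a consistent signature assignment α such that for every position p not in the domain of α, player 2 has a positional winning strategy from p. -/
namespace WGProof

open Classical

variable {S : Type} (G : WeakGame S)

/-- Safety (greatest-fixed-point style) goodness at an even rank `r`, relative to a
predicate `low` describing good positions of lower rank. -/
def EvenGood (low : S → Prop) (r : ℕ) (p : S) : Prop :=
  ∃ X : S → Prop, (∀ x, X x → G.rank x = r ∧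
      ((G.own1 x ∧ ∃ q, G.succ x q ∧ ((G.rank q < r ∧ low q) ∨ X q)) ∨
       (¬ G.own1 x ∧ ∀ q, G.succ x q → ((G.rank q < r ∧ low q) ∨ X q)))) ∧ X p

/-- Attractor (least-fixed-point) goodness with counter `n` at an odd rank `r`. -/
def OddGood (low : S → Prop) (r : ℕ) : ℕ → S → Prop
  | 0 => fun _ => False
  | n+1 => fun p => G.rank p = r ∧
      ((G.own1 p ∧ ∃ q, G.succ p q ∧ ((G.rank q < r ∧ low q) ∨ OddGood low r n q)) ∨
       (¬ G.own1 p ∧ ∀ q, G.succ p q → ((G.rank q < r ∧ low q) ∨ OddGood low r n q)))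

/-- Good positions of rank `< r`. -/
def GoodB : ℕ → S → Prop
  | 0 => fun _ => False
  | r+1 => fun p => GoodB r p ∨
      (G.rank p = r ∧ (if r % 2 = 0 then EvenGood G (GoodB r) r p
                       else ∃ n, OddGood G (GoodB r) r n p))

def Good (p : S) : Prop := GoodB G (G.rank p + 1) p

lemma oddGood_rank {low r n p} (h : OddGood G low r n p) : G.rank p = r := by
  cases n with
  | zero => exact h.elim
  | succ n => exact h.1

lemma evenGood_rank {low r p} (h : EvenGood G low r p) : G.rank p = r := by
  obtain ⟨X, hX, hp⟩ := h
  exact (hX p hp).1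

lemma goodB_rank {r p} (h : GoodB G r p) : G.rank p < r := by
  induction r with
  | zero => exact h.elim
  | succ r ih =>
    rcases h with h | h
    · exact Nat.lt_succ_of_lt (ih h)
    · exact Nat.lt_succ_of_le (le_of_eq h.1)

lemma goodB_good {r p} (h : GoodB G r p) : Good G p := by
  induction r with
  | zero => exact h.elim
  | succ r ih =>
    rcases h with h | h
    · exact ih h
    · unfold Good
      rw [h.1]
      exact Or.inr h

lemma goodB_mono {r r' p} (hr : r ≤ r') (h : GoodB G r p) : GoodB G r' p := by
  induction hr with
  | refl => exact h
  | step _ ih => exact Or.inl ih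

lemma good_goodB {r p} (h : Good G p) (hr : G.rank p < r) : GoodB G r p :=
  goodB_mono G hr h

lemma goodB_iff {r p} : GoodB G r p ↔ G.rank p < r ∧ Good G p :=
  ⟨fun h => ⟨goodB_rank G h, goodB_good G h⟩, fun ⟨h1, h2⟩ => good_goodB G h2 h1⟩

lemma good_iff_even {p} (hp : G.rank p % 2 = 0) :
    Good G p ↔ EvenGood G (GoodB G (G.rank p)) (G.rank p) p := by
  unfold Good
  show (GoodB G (G.rank p) p ∨ _) ↔ _
  rw [if_pos hp]
  constructor
  · rintro (h | h)
    · exact absurd (goodB_rank G h) (lt_irrefl _)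
    · exact h.2
  · exact fun h => Or.inr ⟨rfl, h⟩

lemma good_iff_odd {p} (hp : G.rank p % 2 = 1) :
    Good G p ↔ ∃ n, OddGood G (GoodB G (G.rank p)) (G.rank p) n p := by
  unfold Good
  show (GoodB G (G.rank p) p ∨ _) ↔ _
  have : ¬ (G.rank p % 2 = 0) := by omega
  rw [if_neg this]
  constructor
  · rintro (h | h)
    · exact absurd (goodB_rank G h) (lt_irrefl _)
    · exact h.2
  · exact fun h => Or.inr ⟨rfl, h⟩

lemma oddGood_succ {low r} : ∀ {n : ℕ} {p}, OddGood G low r n p → OddGood G low r (n+1) p := by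
  intro n
  induction n with
  | zero => exact fun h => h.elim
  | succ m ih =>
    intro p h
    refine ⟨h.1, ?_⟩
    rcases h.2 with ⟨h1, q, hq, hc⟩ | ⟨h1, hall⟩
    · exact Or.inl ⟨h1, q, hq, hc.imp id ih⟩
    · exact Or.inr ⟨h1, fun q hq => (hall q hq).imp id ih⟩

lemma oddGood_mono {low r p} {n n' : ℕ} (hn : n ≤ n') (h : OddGood G low r n p) :
    OddGood G low r n' p := by
  induction hn with
  | refl => exact h
  | step _ ih => exact oddGood_succ G ih

/-- Bound an existential counter uniformly over a finite set. -/
lemma bdd_of_finite {α : Type} {s : Set α} (hs : s.Finite) (P : ℕ → α → Prop)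
    (mono : ∀ {m n x}, m ≤ n → P m x → P n x)
    (h : ∀ x ∈ s, ∃ n, P n x) : ∃ N, ∀ x ∈ s, P N x := by
  refine Set.Finite.induction_on
    (motive := fun s _ => (∀ x ∈ s, ∃ n, P n x) → ∃ N, ∀ x ∈ s, P N x) s hs ?_ ?_ h
  · exact fun _ => ⟨0, fun x hx => hx.elim⟩
  · rintro a t - - ih h
    obtain ⟨N, hN⟩ := ih (fun x hx => h x (Set.mem_insert_of_mem a hx))
    obtain ⟨n, hn⟩ := h a (Set.mem_insert a t)
    refine ⟨max n N, fun x hx => ?_⟩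
    rcases hx with rfl | hx
    · exact mono (le_max_left _ _) hn
    · exact mono (le_max_right _ _) (hN x hx)

/-- The signature of a good position: attractor counter at odd ranks, 0 at even ranks. -/
noncomputable def sig (p : S) : ℕ :=
  if h : G.rank p % 2 = 1 ∧ Good G p then
    Nat.find ((good_iff_odd G h.1).mp h.2)
  else 0

noncomputable def alphaMap (p : S) : Option ℕ :=
  if Good G p then some (sig G p) else none

lemma rank_succ_cases {p q} (h : G.succ p q) :
    G.rank q < G.rank p ∨ G.rank q = G.rank p :=
  (lt_or_eq_of_le (G.rank_mono p q h)).imp id id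

/-- The consistency of `alphaMap` at a good position: a single successor statement. -/
lemma good_step {p q : S} (hq : G.succ p q)
    (hgood : Good G q)
    (hlow : G.rank q < G.rank p ∨
      (G.rank q = G.rank p ∧ sig G q ≤ sig G p ∧ (G.rank p % 2 = 1 → sig G q < sig G p))) :
    ∃ m', alphaMap G q = some m' ∧
      lexLe (G.rank q, m') (G.rank p, sig G p) ∧
      (G.rank p % 2 = 1 → lexLt (G.rank q, m') (G.rank p, sig G p)) := by
  refine ⟨sig G q, by simp [alphaMap, hgood], ?_, ?_⟩
  · rcases hlow with h | ⟨h1, h2, _⟩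
    · exact Or.inl h
    · exact Or.inr ⟨h1, h2⟩
  · intro hodd
    rcases hlow with h | ⟨h1, _, h3⟩
    · exact Or.inl h
    · exact Or.inr ⟨h1, h3 hodd⟩

/-- Main step property of good positions. -/
lemma good_main {p : S} (hp : Good G p) :
    (G.own1 p → ∃ q, G.succ p q ∧ ∃ m', alphaMap G q = some m' ∧
      lexLe (G.rank q, m') (G.rank p, sig G p) ∧
      (G.rank p % 2 = 1 → lexLt (G.rank q, m') (G.rank p, sig G p))) ∧
    (¬ G.own1 p → ∀ q, G.succ p q → ∃ m', alphaMap G q = some m' ∧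
      lexLe (G.rank q, m') (G.rank p, sig G p) ∧
      (G.rank p % 2 = 1 → lexLt (G.rank q, m') (G.rank p, sig G p))) := by
  set r := G.rank p with hr
  rcases Nat.mod_two_eq_zero_or_one r with hpar | hpar
  · -- even rank
    have hEG := (good_iff_even G hpar).mp hp
    obtain ⟨X, hX, hXp⟩ := hEG
    have key : ∀ q, ((G.rank q < r ∧ GoodB G r q) ∨ X q) → G.succ p q →
        Good G q ∧ (G.rank q < r ∨ (G.rank q = r ∧ sig G q ≤ sig G p ∧
          (G.rank p % 2 = 1 → sig G q < sig G p))) := by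
      intro q hq _
      rcases hq with ⟨h1, h2⟩ | hXq
      · exact ⟨goodB_good G h2, Or.inl h1⟩
      · have hrq : G.rank q = r := (hX q hXq).1
        have hgq : Good G q := by
          rw [good_iff_even G (by rw [hrq]; exact hpar), hrq]
          exact ⟨X, hX, hXq⟩
        have hsq : sig G q = 0 := by
          unfold sig
          rw [dif_neg]
          rintro ⟨h, _⟩
          rw [hrq] at h; omega
        have hsp : sig G p = 0 := by
          unfold sig
          rw [dif_neg]
          rintro ⟨h, _⟩
          rw [← hr] at h; omega
        exact ⟨hgq, Or.inr ⟨hrq, by omega, fun h => absurd h (by omega)⟩⟩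
    constructor
    · intro hown
      rcases (hX p hXp).2 with ⟨_, q, hq, hc⟩ | ⟨hno, _⟩
      · exact ⟨q, hq, good_step G hq (key q hc hq).1 (key q hc hq).2⟩
      · exact absurd hown hno
    · intro hown q hq
      rcases (hX p hXp).2 with ⟨h1, _⟩ | ⟨_, hall⟩
      · exact absurd h1 hown
      · exact good_step G hq (key q (hall q hq) hq).1 (key q (hall q hq) hq).2
  · -- odd rank
    have hex := (good_iff_odd G hpar).mp hp
    have hsp : sig G p = Nat.find hex := by
      unfold sig
      rw [dif_pos ⟨hpar, hp⟩]
    obtain ⟨m, hm⟩ : ∃ m, Nat.find hex = m + 1 := by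
      cases h : Nat.find hex with
      | zero => have h2 := Nat.find_spec hex; rw [h] at h2; exact h2.elim
      | succ m => exact ⟨m, rfl⟩
    have hfs : OddGood G (GoodB G r) r (m + 1) p := by rw [← hm]; exact Nat.find_spec hex
    rw [hm] at hsp
    have key : ∀ k q, ((G.rank q < r ∧ GoodB G r q) ∨ OddGood G (GoodB G r) r k q) →
        k ≤ m → G.succ p q →
        Good G q ∧ (G.rank q < r ∨ (G.rank q = r ∧ sig G q ≤ sig G p ∧
          (G.rank p % 2 = 1 → sig G q < sig G p))) := by
      intro k q hq hk _
      rcases hq with ⟨h1, h2⟩ | hOq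
      · exact ⟨goodB_good G h2, Or.inl h1⟩
      · have hrq : G.rank q = r := oddGood_rank G hOq
        have hparq : G.rank q % 2 = 1 := by rw [hrq]; exact hpar
        have hexq : ∃ k, OddGood G (GoodB G (G.rank q)) (G.rank q) k q := by
          rw [hrq]; exact ⟨k, hOq⟩
        have hgq : Good G q := (good_iff_odd G hparq).mpr hexq
        have hsq : sig G q ≤ k := by
          unfold sig
          rw [dif_pos ⟨hparq, hgq⟩]
          apply Nat.find_le
          rw [hrq]
          exact hOq
        exact ⟨hgq, Or.inr ⟨hrq, by omega, fun _ => by omega⟩⟩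
    constructor
    · intro hown
      rcases hfs.2 with ⟨_, q, hq, hc⟩ | ⟨hno, _⟩
      · exact ⟨q, hq, good_step G hq (key m q hc le_rfl hq).1 (key m q hc le_rfl hq).2⟩
      · exact absurd hown hno
    · intro hown q hq
      rcases hfs.2 with ⟨h1, _⟩ | ⟨_, hall⟩
      · exact absurd h1 hown
      · exact good_step G hq (key m q (hall q hq) le_rfl hq).1 (key m q (hall q hq) le_rfl hq).2

/-- Player 2's "forcing" counter at even bad ranks. -/
def EvenBad (r : ℕ) : ℕ → S → Prop
  | 0 => fun _ => False
  | n+1 => fun p => G.rank p = r ∧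
     ((G.own1 p ∧ ∀ q, G.succ p q →
        ((G.rank q < r → ¬ Good G q) ∧ (G.rank q = r → EvenBad r n q))) ∨
      (¬ G.own1 p ∧ ∃ q, G.succ p q ∧
        ((G.rank q < r ∧ ¬ Good G q) ∨ (G.rank q = r ∧ EvenBad r n q))))

lemma evenBad_succ {r} : ∀ {n : ℕ} {p}, EvenBad G r n p → EvenBad G r (n+1) p := by
  intro n
  induction n with
  | zero => exact fun h => h.elim
  | succ m ih =>
    intro p h
    refine ⟨h.1, ?_⟩
    rcases h.2 with ⟨h1, hall⟩ | ⟨h1, q, hq, hc⟩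
    · exact Or.inl ⟨h1, fun q hq => ⟨(hall q hq).1, fun hr => ih ((hall q hq).2 hr)⟩⟩
    · exact Or.inr ⟨h1, q, hq, hc.imp id (fun ⟨a, b⟩ => ⟨a, ih b⟩)⟩

lemma evenBad_mono {r p} {n n' : ℕ} (hn : n ≤ n') (h : EvenBad G r n p) :
    EvenBad G r n' p := by
  induction hn with
  | refl => exact h
  | step _ ih => exact evenBad_succ G ih

lemma evenBad_not_good {r} (hr : r % 2 = 0) :
    ∀ {n : ℕ} {p}, EvenBad G r n p → ¬ Good G p := by
  intro n
  induction n with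
  | zero => exact fun h => h.elim
  | succ m ih =>
    intro p h hgood
    have hrk : G.rank p = r := h.1
    obtain ⟨X, hX, hXp⟩ := (good_iff_even G (by rw [hrk]; exact hr)).mp hgood
    rw [hrk] at hX
    rcases h.2 with ⟨h1, hall⟩ | ⟨h1, q, hq, hc⟩
    · rcases (hX p hXp).2 with ⟨_, q, hq, hc⟩ | ⟨hno, _⟩
      · rcases hc with ⟨hlt, hgb⟩ | hXq
        · exact (hall q hq).1 hlt (goodB_good G hgb)
        · have hrq : G.rank q = r := (hX q hXq).1
          have : Good G q := by
            rw [good_iff_even G (by rw [hrq]; exact hr), hrq]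
            exact ⟨X, hX, hXq⟩
          exact ih ((hall q hq).2 hrq) this
      · exact hno h1
    · rcases (hX p hXp).2 with ⟨ho, _⟩ | ⟨_, hall⟩
      · exact h1 ho
      · rcases hc with ⟨hlt, hbad⟩ | ⟨hrq, hEB⟩
        · rcases hall q hq with ⟨_, hgb⟩ | hXq
          · exact hbad (goodB_good G hgb)
          · exact absurd (hX q hXq).1 (by omega)
        · rcases hall q hq with ⟨hlt, _⟩ | hXq
          · omega
          · have : Good G q := by
              rw [good_iff_even G (by rw [hrq]; exact hr), hrq]
              exact ⟨X, hX, hXq⟩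
            exact ih hEB this

lemma evenBad_exists {p : S} (hpar : G.rank p % 2 = 0) (hbad : ¬ Good G p) :
    ∃ n, EvenBad G (G.rank p) n p := by
  by_contra hno
  push_neg at hno
  apply hbad
  rw [good_iff_even G hpar]
  refine ⟨fun x => G.rank x = G.rank p ∧ ∀ n, ¬ EvenBad G (G.rank p) n x, ?_, rfl, hno⟩
  rintro x ⟨hrx, hx⟩
  refine ⟨hrx, ?_⟩
  by_cases hown : G.own1 x
  · refine Or.inl ⟨hown, ?_⟩
    by_contra hnoq
    push_neg at hnoq
    have hbd : ∀ q ∈ {q | G.succ x q}, ∃ n,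
        (G.rank q < G.rank p → ¬ Good G q) ∧
          (G.rank q = G.rank p → EvenBad G (G.rank p) n q) := by
      intro q hq
      have h1 := hnoq q hq
      have hle : G.rank q ≤ G.rank x := G.rank_mono x q hq
      rcases lt_or_eq_of_le hle with hlt | heq
      · rw [hrx] at hlt
        refine ⟨0, fun _ hgq => h1.1 hlt (good_goodB G hgq hlt),
          fun h => absurd h (by omega)⟩
      · rw [hrx] at heq
        have h2 : ¬ (∀ n, ¬ EvenBad G (G.rank p) n q) := fun hq2 => by obtain ⟨n, hn⟩ := h1.2 heq; exact hq2 n hn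
        push_neg at h2
        obtain ⟨n, hn⟩ := h2
        exact ⟨n, fun h => absurd h (by omega), fun _ => hn⟩
    obtain ⟨N, hN⟩ := bdd_of_finite (G.finBranch x)
      (fun n q => (G.rank q < G.rank p → ¬ Good G q) ∧
        (G.rank q = G.rank p → EvenBad G (G.rank p) n q))
      (fun hmn hx => ⟨hx.1, fun h => evenBad_mono G hmn (hx.2 h)⟩) hbd
    exact hx (N + 1) ⟨hrx, Or.inl ⟨hown, fun q hq => hN q hq⟩⟩
  · refine Or.inr ⟨hown, fun q hq => ?_⟩
    have h1 : ∀ n, ¬ ((G.rank q < G.rank p ∧ ¬ Good G q) ∨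
        (G.rank q = G.rank p ∧ EvenBad G (G.rank p) n q)) := by
      intro n hcon
      exact hx (n + 1) ⟨hrx, Or.inr ⟨hown, q, hq, hcon⟩⟩
    have hle : G.rank q ≤ G.rank x := G.rank_mono x q hq
    rcases lt_or_eq_of_le hle with hlt | heq
    · rw [hrx] at hlt
      have hgq : Good G q := by
        by_contra hbq
        exact h1 0 (Or.inl ⟨hlt, hbq⟩)
      exact Or.inl ⟨hlt, good_goodB G hgq hlt⟩
    · rw [hrx] at heq
      exact Or.inr ⟨heq, fun n hEB => h1 n (Or.inr ⟨heq, hEB⟩)⟩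

/-- The counter used by player 2 at bad even positions. -/
noncomputable def ctr (p : S) : ℕ :=
  if h : G.rank p % 2 = 0 ∧ ¬ Good G p then Nat.find (evenBad_exists G h.1 h.2) else 0

/-- A good move for player 2 out of a bad position. -/
def stepOK (p q : S) : Prop :=
  G.succ p q ∧ ¬ Good G q ∧
    (G.rank q < G.rank p ∨ (G.rank q = G.rank p ∧ (G.rank p % 2 = 0 → ctr G q < ctr G p)))

lemma ctr_le {p : S} (hpar : G.rank p % 2 = 0) (hbad : ¬ Good G p) {n}
    (h : EvenBad G (G.rank p) n p) : ctr G p ≤ n := by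
  unfold ctr
  rw [dif_pos ⟨hpar, hbad⟩]
  exact Nat.find_le h

lemma ctr_spec {p : S} (hpar : G.rank p % 2 = 0) (hbad : ¬ Good G p) :
    EvenBad G (G.rank p) (ctr G p) p := by
  unfold ctr
  rw [dif_pos ⟨hpar, hbad⟩]
  exact Nat.find_spec (evenBad_exists G hpar hbad)

/-- Any move of player 1 from a bad position is a `stepOK` move. -/
lemma bad_own1_step {p q : S} (hbad : ¬ Good G p) (hown : G.own1 p) (hq : G.succ p q) :
    stepOK G p q := by
  rcases Nat.mod_two_eq_zero_or_one (G.rank p) with hpar | hpar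
  · -- even rank
    have hEB := ctr_spec G hpar hbad
    obtain ⟨m, hm⟩ : ∃ m, ctr G p = m + 1 := by
      cases h : ctr G p with
      | zero => rw [h] at hEB; exact hEB.elim
      | succ m => exact ⟨m, rfl⟩
    rw [hm] at hEB
    rcases hEB.2 with ⟨_, hall⟩ | ⟨hno, _⟩
    · rcases rank_succ_cases G hq with hlt | heq
      · exact ⟨hq, (hall q hq).1 hlt, Or.inl hlt⟩
      · have hEBq := (hall q hq).2 heq
        have hbq : ¬ Good G q := evenBad_not_good G hpar hEBq
        refine ⟨hq, hbq, Or.inr ⟨heq, fun _ => ?_⟩⟩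
        have := ctr_le G (by rw [heq]; exact hpar) hbq (by rw [heq]; exact hEBq)
        omega
    · exact absurd hown hno
  · -- odd rank
    have hno : ∀ n, ¬ OddGood G (GoodB G (G.rank p)) (G.rank p) n p := by
      intro n hn
      exact hbad ((good_iff_odd G hpar).mpr ⟨n, hn⟩)
    have key : ∀ n, ¬ ((G.rank q < G.rank p ∧ GoodB G (G.rank p) q) ∨
        OddGood G (GoodB G (G.rank p)) (G.rank p) n q) := by
      intro n hcon
      exact hno (n + 1) ⟨rfl, Or.inl ⟨hown, q, hq, hcon⟩⟩
    have hbq : ¬ Good G q := by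
      intro hgq
      rcases rank_succ_cases G hq with hlt | heq
      · exact key 0 (Or.inl ⟨hlt, good_goodB G hgq hlt⟩)
      · obtain ⟨n, hn⟩ := (good_iff_odd G (by rw [heq]; exact hpar)).mp hgq
        rw [heq] at hn
        exact key n (Or.inr hn)
    refine ⟨hq, hbq, ?_⟩
    rcases rank_succ_cases G hq with hlt | heq
    · exact Or.inl hlt
    · exact Or.inr ⟨heq, fun h => absurd h (by omega)⟩

/-- Player 2 has a `stepOK` move from a bad nonterminal position she owns. -/
lemma bad_own2_step {p : S} (hbad : ¬ Good G p) (hown : ¬ G.own1 p)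
    (hnt : ∃ q, G.succ p q) : ∃ q, stepOK G p q := by
  rcases Nat.mod_two_eq_zero_or_one (G.rank p) with hpar | hpar
  · -- even rank
    have hEB := ctr_spec G hpar hbad
    obtain ⟨m, hm⟩ : ∃ m, ctr G p = m + 1 := by
      cases h : ctr G p with
      | zero => rw [h] at hEB; exact hEB.elim
      | succ m => exact ⟨m, rfl⟩
    rw [hm] at hEB
    rcases hEB.2 with ⟨ho, _⟩ | ⟨_, q, hq, hc⟩
    · exact absurd ho hown
    · rcases hc with ⟨hlt, hbq⟩ | ⟨heq, hEBq⟩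
      · exact ⟨q, hq, hbq, Or.inl hlt⟩
      · have hbq : ¬ Good G q := evenBad_not_good G hpar hEBq
        refine ⟨q, hq, hbq, Or.inr ⟨heq, fun _ => ?_⟩⟩
        have := ctr_le G (by rw [heq]; exact hpar) hbq (by rw [heq]; exact hEBq)
        omega
  · -- odd rank
    by_contra hno2
    push_neg at hno2
    apply hbad
    rw [good_iff_odd G hpar]
    have hbd : ∀ q ∈ {q | G.succ p q}, ∃ n,
        (G.rank q < G.rank p ∧ GoodB G (G.rank p) q) ∨
          OddGood G (GoodB G (G.rank p)) (G.rank p) n q := by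
      intro q hq
      have hns := hno2 q
      have hgq : Good G q := by
        by_contra hbq
        rcases rank_succ_cases G hq with hlt | heq
        · exact hns ⟨hq, hbq, Or.inl hlt⟩
        · exact hns ⟨hq, hbq, Or.inr ⟨heq, fun h => absurd h (by omega)⟩⟩
      rcases rank_succ_cases G hq with hlt | heq
      · exact ⟨0, Or.inl ⟨hlt, good_goodB G hgq hlt⟩⟩
      · obtain ⟨n, hn⟩ := (good_iff_odd G (by rw [heq]; exact hpar)).mp hgq
        rw [heq] at hn
        exact ⟨n, Or.inr hn⟩
    obtain ⟨N, hN⟩ := bdd_of_finite (G.finBranch p)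
      (fun n q => (G.rank q < G.rank p ∧ GoodB G (G.rank p) q) ∨
          OddGood G (GoodB G (G.rank p)) (G.rank p) n q)
      (fun hmn hx => hx.imp id (oddGood_mono G hmn)) hbd
    exact ⟨N + 1, rfl, Or.inr ⟨hown, fun q hq => hN q hq⟩⟩

/-- Bad terminal positions belong to player 1. -/
lemma bad_terminal_own1 {p : S} (hbad : ¬ Good G p) (ht : ∀ q, ¬ G.succ p q) :
    G.own1 p := by
  by_contra hown
  apply hbad
  rcases Nat.mod_two_eq_zero_or_one (G.rank p) with hpar | hpar
  · rw [good_iff_even G hpar]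
    refine ⟨fun x => x = p, ?_, rfl⟩
    rintro x rfl
    exact ⟨rfl, Or.inr ⟨hown, fun q hq => absurd hq (ht q)⟩⟩
  · rw [good_iff_odd G hpar]
    exact ⟨1, rfl, Or.inr ⟨hown, fun q hq => absurd hq (ht q)⟩⟩

/-- Player 2's positional choice function. -/
noncomputable def choice (p : S) : S :=
  if h : ∃ q, stepOK G p q then h.choose else p

lemma choice_spec {p : S} (h : ∃ q, stepOK G p q) : stepOK G p (choice G p) := by
  unfold choice
  rw [dif_pos h]
  exact h.choose_spec

/-- The relation cut out by player 2's positional strategy. -/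
def StratR (a b : S) : Prop := G.succ a b ∧ (¬ G.own1 a → b = choice G a)

/-- The strategy tree of player 2 from `p₀`. -/
def stratTree (p₀ : S) : Set (List S) :=
  {π | π ≠ [] ∧ π.head? = some p₀ ∧ π.Chain' (StratR G)}

lemma stratR_bad {a b : S} (hbad : ¬ Good G a) (h : StratR G a b) : ¬ Good G b := by
  by_cases hown : G.own1 a
  · exact (bad_own1_step G hbad hown h.1).2.1
  · have hc := h.2 hown
    have hex : ∃ q, stepOK G a q := bad_own2_step G hbad hown ⟨b, h.1⟩
    rw [hc]
    exact (choice_spec G hex).2.1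

lemma stratR_decr {a b : S} (hbad : ¬ Good G a) (h : StratR G a b) :
    G.rank b < G.rank a ∨ (G.rank b = G.rank a ∧ (G.rank a % 2 = 0 → ctr G b < ctr G a)) := by
  by_cases hown : G.own1 a
  · exact (bad_own1_step G hbad hown h.1).2.2
  · have hc := h.2 hown
    have hex : ∃ q, stepOK G a q := bad_own2_step G hbad hown ⟨b, h.1⟩
    rw [hc]
    exact (choice_spec G hex).2.2

lemma chain_all_bad : ∀ (π : List S) (a : S), ¬ Good G a → (a :: π).Chain' (StratR G) →
    ∀ x ∈ a :: π, ¬ Good G x := by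
  intro π
  induction π with
  | nil =>
    rintro a ha _ x hx
    rcases List.mem_singleton.mp hx with rfl
    exact ha
  | cons b l ih =>
    intro a ha hch x hx
    have hR : StratR G a b := List.isChain_cons_cons.mp hch |>.1
    have hch' : (b :: l).Chain' (StratR G) := List.isChain_cons_cons.mp hch |>.2
    have hb : ¬ Good G b := stratR_bad G ha hR
    rcases List.mem_cons.mp hx with rfl | hx
    · exact ha
    · exact ih b hb hch' x hx

lemma mem_stratTree_bad {p₀ : S} (hbad : ¬ Good G p₀) {π : List S}
    (hπ : π ∈ stratTree G p₀) : ∀ x ∈ π, ¬ Good G x := by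
  obtain ⟨hne, hhd, hch⟩ := hπ
  cases π with
  | nil => exact absurd rfl hne
  | cons a l =>
    have : a = p₀ := by simpa using hhd
    subst this
    exact chain_all_bad G l a hbad hch

/-- An antitone sequence of naturals is eventually constant. -/
lemma eventually_const (g : ℕ → ℕ) (hg : ∀ i, g (i+1) ≤ g i) :
    ∃ N, ∀ j, N ≤ j → g j = g N := by
  have hmono : ∀ i j, i ≤ j → g j ≤ g i := by
    intro i j hij
    induction hij with
    | refl => exact le_rfl
    | step _ ih => exact le_trans (hg _) ih
  have hne : (Set.range g).Nonempty := ⟨g 0, 0, rfl⟩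
  obtain ⟨N, hN⟩ := Nat.sInf_mem hne
  refine ⟨N, fun j hj => ?_⟩
  have h1 : g j ≤ g N := hmono N j hj
  have h2 : sInf (Set.range g) ≤ g j := Nat.sInf_le ⟨j, rfl⟩
  omega

/-- No strictly decreasing sequence of naturals. -/
lemma no_strict_desc (h : ℕ → ℕ) (hh : ∀ i, h (i+1) < h i) : False := by
  have : ∀ i, h i + i ≤ h 0 := by
    intro i
    induction i with
    | zero => omega
    | succ i ih => have := hh i; omega
  have := this (h 0 + 1)
  omega

/-- Infinite plays following the strategy from a bad position are won by player 2. -/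
lemma inf_play_win {p₀ : S} (hbad : ¬ Good G p₀) (f : ℕ → S) (hf0 : f 0 = p₀)
    (hstep : ∀ i, StratR G (f i) (f (i+1))) :
    ∃ N, (∀ j, N ≤ j → G.rank (f j) = G.rank (f N)) ∧ G.rank (f N) % 2 = 1 := by
  have hbadf : ∀ i, ¬ Good G (f i) := by
    intro i
    induction i with
    | zero => rw [hf0]; exact hbad
    | succ i ih => exact stratR_bad G ih (hstep i)
  have hdecr : ∀ i, G.rank (f (i+1)) ≤ G.rank (f i) :=
    fun i => G.rank_mono _ _ (hstep i).1
  obtain ⟨N, hN⟩ := eventually_const (fun i => G.rank (f i)) hdecr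
  refine ⟨N, hN, ?_⟩
  rcases Nat.mod_two_eq_zero_or_one (G.rank (f N)) with hpar | hpar
  · exfalso
    apply no_strict_desc (fun j => ctr G (f (N + j)))
    intro j
    have h1 := stratR_decr G (hbadf (N + j)) (hstep (N + j))
    have e1 : G.rank (f (N + j)) = G.rank (f N) := hN _ (Nat.le_add_right _ _)
    have e2 : G.rank (f (N + j + 1)) = G.rank (f N) := hN _ (by omega)
    rcases h1 with hlt | ⟨_, hctr⟩
    · omega
    · have : G.rank (f (N + j)) % 2 = 0 := by rw [e1]; exact hpar
      exact hctr this
  · exact hpar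

lemma owns_false_iff (q : S) : G.toGame.Owns false q ↔ ¬ G.own1 q := by
  simp [Game.Owns]

lemma mem_stratTree_getLast_bad {p₀ : S} (hbad : ¬ Good G p₀) {π : List S} {q : S}
    (hπ : π ∈ stratTree G p₀) (hq : π.getLast? = some q) : ¬ Good G q := by
  have hmem : q ∈ π := by
    obtain ⟨h, rfl⟩ := List.mem_getLast?_eq_getLast hq
    exact List.getLast_mem h
  exact mem_stratTree_bad G hbad hπ q hmem

lemma extend_mem_stratTree {p₀ : S} {π : List S} {q c : S}
    (hπ : π ∈ stratTree G p₀) (hq : π.getLast? = some q) (hR : StratR G q c) :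
    π ++ [c] ∈ stratTree G p₀ := by
  obtain ⟨hne, hhd, hch⟩ := hπ
  refine ⟨by simp, ?_, ?_⟩
  · rw [List.head?_append]
    cases hh : π.head? with
    | none => rw [hh] at hhd; exact absurd hhd (by simp)
    | some a => rw [hh] at hhd; simpa [hh] using hhd
  · unfold List.Chain'
    rw [List.isChain_append]
    refine ⟨hch, List.isChain_singleton c, ?_⟩
    intro x hx y hy
    rw [hq] at hx
    simp at hx hy
    subst hx; subst hy
    exact hR

lemma extend_stratR {p₀ : S} {π : List S} {q c : S}
    (hπ : π ++ [c] ∈ stratTree G p₀) (hq : π.getLast? = some q) : StratR G q c := by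
  obtain ⟨-, -, hch⟩ := hπ
  unfold List.Chain' at hch
  rw [List.isChain_append] at hch
  apply hch.2.2 q (by rw [hq]; rfl) c
  rfl

lemma strat_winning {p₀ : S} (hbad : ¬ Good G p₀) :
    G.toGame.IsWinningStrategy false p₀ (stratTree G p₀) ∧
      G.toGame.Positional false (stratTree G p₀) := by
  have hOwns : ∀ q, G.toGame.Owns false q ↔ ¬ G.own1 q := owns_false_iff G
  constructor
  · refine ⟨⟨⟨by simp, rfl, List.isChain_singleton p₀⟩, ?_, ?_, ?_, ?_⟩, ?_, ?_⟩
    · -- plays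
      rintro π ⟨hne, hhd, hch⟩
      exact ⟨⟨hne, hch.imp (fun a b h => h.1)⟩, hhd⟩
    · -- dropLast closed
      rintro π hπ hne1
      obtain ⟨hne, hhd, hch⟩ := hπ
      cases π with
      | nil => exact absurd rfl hne
      | cons a l =>
        have ha : a = p₀ := by simpa using hhd
        cases l with
        | nil => exact absurd (by rw [ha]) hne1
        | cons b l' =>
          have hd : (a :: b :: l').dropLast = a :: (b :: l').dropLast :=
            List.dropLast_cons₂
          refine ⟨by simp [hd], by simp [hd, ha], ?_⟩
          have hfull := List.dropLast_append_getLast (l := a :: b :: l') (by simp)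
          unfold List.Chain' at hch
          rw [← hfull, List.isChain_append] at hch
          exact hch.1
    · -- player-2 moves are unique
      rintro π hπ q hq ho ⟨q'', hq''⟩
      have hbq : ¬ Good G q := mem_stratTree_getLast_bad G hbad hπ hq
      have hown : ¬ G.own1 q := (hOwns q).mp ho
      have hex : ∃ c, stepOK G q c := bad_own2_step G hbq hown ⟨q'', hq''⟩
      have hsp := choice_spec G hex
      refine ⟨choice G q, ⟨hsp.1, extend_mem_stratTree G hπ hq ⟨hsp.1, fun _ => rfl⟩⟩, ?_⟩
      rintro y ⟨-, hy⟩
      exact (extend_stratR G hy hq).2 hown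
    · -- player-1 moves all allowed
      rintro π hπ q hq ho q' hq'
      have hown : G.own1 q := not_not.mp (fun h => ho ((hOwns q).mpr h))
      exact extend_mem_stratTree G hπ hq ⟨hq', fun h => absurd hown h⟩
    · -- finite complete plays end in player-1 positions
      rintro π hπ q hq ht
      have hbq : ¬ Good G q := mem_stratTree_getLast_bad G hbad hπ hq
      rw [hOwns q]
      exact not_not.mpr (bad_terminal_own1 G hbq ht)
    · -- infinite plays
      intro f hf
      have hf0 : f 0 = p₀ := by
        have h0 := hf 0
        obtain ⟨-, hhd, -⟩ := h0
        simpa [List.ofFn_succ] using hhd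
      have hstep : ∀ i, StratR G (f i) (f (i+1)) := by
        intro i
        obtain ⟨-, -, hch⟩ := hf (i + 1)
        unfold List.Chain' at hch
        rw [List.isChain_iff_getElem] at hch
        have := hch i (by rw [List.length_ofFn]; omega)
        rw [List.getElem_ofFn, List.getElem_ofFn] at this
        exact this
      obtain ⟨N, hN, hpar⟩ := inf_play_win G hbad f hf0 hstep
      exact ⟨N, hN, by simpa using hpar⟩
  · -- positional
    rintro π₁ π₂ q q₁ q₂ h₁ h₂ hl₁ hl₂ ho he₁ he₂
    have hown : ¬ G.own1 q := (hOwns q).mp ho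
    rw [(extend_stratR G he₁ hl₁).2 hown, (extend_stratR G he₂ hl₂).2 hown]

end WGProof
/-- Every weak game admits a consistent signature assignment such that player 2 has a
positional winning strategy from every position outside its domain. -/
theorem exists_consistentSig_player2_wins_outside {S : Type} (G : WeakGame S) :
    ∃ α : S → Option ℕ, ConsistentSig G.toGame α ∧
      ∀ p : S, α p = none →
        ∃ τ, G.toGame.IsWinningStrategy false p τ ∧ G.toGame.Positional false τ := by
  classical
  refine ⟨WGProof.alphaMap G, ⟨?_, ?_⟩, ?_⟩
  · intro p m hm hown
    have hg : WGProof.Good G p := by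
      by_contra h
      rw [WGProof.alphaMap, if_neg h] at hm
      exact nomatch hm
    have hms : m = WGProof.sig G p := by
      rw [WGProof.alphaMap, if_pos hg] at hm
      exact (Option.some_injective _ hm).symm
    subst hms
    exact (WGProof.good_main G hg).1 hown
  · intro p m hm hown
    have hg : WGProof.Good G p := by
      by_contra h
      rw [WGProof.alphaMap, if_neg h] at hm
      exact nomatch hm
    have hms : m = WGProof.sig G p := by
      rw [WGProof.alphaMap, if_pos hg] at hm
      exact (Option.some_injective _ hm).symm
    subst hms
    exact (WGProof.good_main G hg).2 hown
  · intro p hp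
    have hbad : ¬ WGProof.Good G p := by
      intro h
      rw [WGProof.alphaMap, if_pos h] at hp
      exact nomatch hp
    exact ⟨WGProof.stratTree G p, WGProof.strat_winning G hbad⟩
end

section
/- For every weak game G and every position p, player 1 has a positional winning strategy from p if and only if there exists a consistent signature assignment for G whose domain contains p. -/
section Aux
variable {S : Type}

lemma owns_true (G : Game S) (q : S) : G.Owns true q ↔ G.own1 q := by simp [Game.Owns]

lemma mem_of_getLast?' {l : List S} {a : S} (h : l.getLast? = some a) : a ∈ l := by
  obtain ⟨ys, rfl⟩ := List.getLast?_eq_some_iff.mp h; simp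

lemma chain'_last_step {R : S → S → Prop} {π : List S} {q q' : S}
    (hch : (π ++ [q']).Chain' R) (hlast : π.getLast? = some q) : R q q' := by
  exact (List.isChain_append.mp hch).2.2 q (by rw [Option.mem_def]; exact hlast) q' rfl

theorem bwd (G : WeakGame S) (p : S)
    (α : S → Option ℕ) (hα : ConsistentSig G.toGame α) (hp : (α p).isSome) :
    ∃ τ, G.toGame.IsWinningStrategy true p τ ∧ G.toGame.Positional true τ := by
  classical
  set g := G.toGame with hg
  have hσ0 : ∀ q : S, ∃ q', ∀ m, α q = some m → g.own1 q →
      g.succ q q' ∧ ∃ m', α q' = some m' ∧ lexLe (g.rank q', m') (g.rank q, m) ∧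
        (g.rank q % 2 = 1 → lexLt (g.rank q', m') (g.rank q, m)) := by
    intro q
    by_cases h1 : g.own1 q
    · cases hm : α q with
      | none => exact ⟨q, fun m hm' => by cases hm'⟩
      | some m =>
        obtain ⟨q', h⟩ := hα.1 q m hm h1
        refine ⟨q', fun m' hm' _ => ?_⟩
        injection hm' with e; subst e; exact h
    · exact ⟨q, fun m hm h => absurd h h1⟩
  choose σ hσ using hσ0
  set R : S → S → Prop := fun q q' => g.succ q q' ∧ (g.own1 q → q' = σ q) with hR
  set τ : Set (List S) :=
    {π | π ≠ [] ∧ π.Chain' R ∧ π.head? = some p ∧ ∀ q ∈ π, (α q).isSome} with hτ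
  obtain ⟨mp, hmp⟩ := Option.isSome_iff_exists.mp hp
  -- extension lemma
  have extend_mem : ∀ π ∈ τ, ∀ q, π.getLast? = some q → ∀ q', R q q' → (α q').isSome →
      π ++ [q'] ∈ τ := by
    rintro π ⟨hne, hch, hhd, hdom⟩ q hlast q' hRq hq'
    refine ⟨by simp, ?_, ?_, ?_⟩
    · change List.IsChain R _; rw [List.isChain_append]
      refine ⟨hch, List.isChain_singleton _, ?_⟩
      intro x hx y hy
      rw [Option.mem_def, hlast] at hx
      rw [Option.mem_def] at hy
      simp only [List.head?_cons, Option.some.injEq] at hy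
      cases hx; cases hy; exact hRq
    · cases π with
      | nil => exact absurd rfl hne
      | cons a l => simpa using hhd
    · intro x hx
      rcases List.mem_append.mp hx with h | h
      · exact hdom x h
      · simp only [List.mem_singleton] at h; subst h; exact hq'
  have hmem_tau : ∀ π ∈ τ, ∀ q ∈ π, (α q).isSome := fun π hπ => hπ.2.2.2
  -- main facts about positions in plays
  have hstep : ∀ q, (α q).isSome → g.own1 q → R q (σ q) ∧ (α (σ q)).isSome := by
    intro q hq h1
    obtain ⟨m, hm⟩ := Option.isSome_iff_exists.mp hq
    obtain ⟨hsucc, m', hm', _⟩ := hσ q m hm h1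
    exact ⟨⟨hsucc, fun _ => rfl⟩, by simp [hm']⟩
  refine ⟨τ, ⟨⟨?_, ?_, ?_, ?_, ?_⟩, ?_, ?_⟩, ?_⟩
  · -- [p] ∈ τ
    exact ⟨by simp, List.isChain_singleton p, rfl, by simp [hmp]⟩
  · -- plays
    rintro π ⟨hne, hch, hhd, _⟩
    exact ⟨⟨hne, hch.imp fun a b h => h.1⟩, hhd⟩
  · -- dropLast
    rintro π ⟨hne, hch, hhd, hdom⟩ hnp
    cases π with
    | nil => exact absurd rfl hne
    | cons a l =>
      simp only [List.head?_cons, Option.some.injEq] at hhd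
      subst hhd
      cases l with
      | nil => exact absurd rfl hnp
      | cons b t =>
        refine ⟨by simp [List.dropLast_cons₂], ?_, ?_, ?_⟩
        · exact hch.prefix (List.dropLast_prefix _)
        · simp [List.dropLast_cons₂]
        · intro x hx
          exact hdom x ((List.dropLast_sublist _).mem hx)
  · -- player 1 moves
    rintro π hπ q hlast h1 _
    rw [owns_true] at h1
    have hq : (α q).isSome := hmem_tau π hπ q (mem_of_getLast?' hlast)
    obtain ⟨hRq, hq'⟩ := hstep q hq h1
    refine ⟨σ q, ⟨hRq.1, extend_mem π hπ q hlast (σ q) hRq hq'⟩, ?_⟩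
    rintro y ⟨hsy, hymem⟩
    exact (chain'_last_step hymem.2.1 hlast).2 h1
  · -- player 2 moves
    rintro π hπ q hlast h1 q' hsucc
    rw [owns_true] at h1
    have hq : (α q).isSome := hmem_tau π hπ q (mem_of_getLast?' hlast)
    obtain ⟨m, hm⟩ := Option.isSome_iff_exists.mp hq
    obtain ⟨m', hm', _⟩ := hα.2 q m hm h1 q' hsucc
    exact extend_mem π hπ q hlast q' ⟨hsucc, fun h => absurd h h1⟩ (by simp [hm'])
  · -- finite wins
    rintro π hπ q hlast hterm h1
    rw [owns_true] at h1
    have hq : (α q).isSome := hmem_tau π hπ q (mem_of_getLast?' hlast)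
    obtain ⟨hRq, _⟩ := hstep q hq h1
    exact hterm (σ q) hRq.1
  · -- infinite wins
    intro f hf
    have hedge : ∀ k, R (f k) (f (k + 1)) := by
      intro k
      have hc := (hf (k + 1)).2.1
      change List.IsChain R _ at hc; rw [List.isChain_iff_getElem] at hc
      have := hc k (by simp)
      simp only [List.get_eq_getElem, List.getElem_ofFn] at this
      exact this
    have hdom : ∀ k, (α (f k)).isSome := by
      intro k
      exact hmem_tau _ (hf k) (f k) (by
        have : f k ∈ List.ofFn fun i : Fin (k + 1) => f i := by
          rw [List.mem_ofFn]; exact ⟨Fin.last k, rfl⟩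
        exact this)
    have hmono : ∀ j k, j ≤ k → g.rank (f k) ≤ g.rank (f j) := by
      intro j k hjk
      induction k with
      | zero => simp_all
      | succ k ih =>
        rcases Nat.lt_or_ge j (k + 1) with h | h
        · exact le_trans (G.rank_mono _ _ (hedge k).1) (ih (by omega))
        · have : j = k + 1 := by omega
          subst this; exact le_refl _
    obtain ⟨N, hN⟩ : sInf (Set.range fun k => g.rank (f k)) ∈ Set.range fun k => g.rank (f k) :=
      Nat.sInf_mem ⟨g.rank (f 0), 0, rfl⟩
    have hconst : ∀ j, N ≤ j → g.rank (f j) = g.rank (f N) := by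
      intro j hj
      have h1 : g.rank (f j) ≤ g.rank (f N) := hmono N j hj
      have h2 : sInf (Set.range fun k => g.rank (f k)) ≤ g.rank (f j) :=
        Nat.sInf_le ⟨j, rfl⟩
      have hN' : g.rank (f N) = sInf (Set.range fun k => g.rank (f k)) := hN
      omega
    refine ⟨N, hconst, ?_⟩
    suffices hpar : g.rank (f N) % 2 = 0 by simpa using hpar
    by_contra hodd0
    have hodd : g.rank (f N) % 2 = 1 := by omega
    set s : ℕ → ℕ := fun j => (α (f (N + j))).get (hdom _) with hs
    have hdec : ∀ j, s (j + 1) < s j := by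
      intro j
      have hm : α (f (N + j)) = some (s j) := by simp [hs]
      have hrj : g.rank (f (N + j)) = g.rank (f N) := hconst _ (by omega)
      have hrj1 : g.rank (f (N + j + 1)) = g.rank (f N) := hconst _ (by omega)
      have key : ∃ m', α (f (N + j + 1)) = some m' ∧
          lexLt (g.rank (f (N + j + 1)), m') (g.rank (f (N + j)), s j) := by
        by_cases h1 : g.own1 (f (N + j))
        · have heq := (hedge (N + j)).2 h1
          obtain ⟨_, m', hm', _, hlt⟩ := hσ (f (N + j)) (s j) hm h1
          rw [← heq] at hm'
          exact ⟨m', hm', by rw [heq]; exact hlt (by omega)⟩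
        · obtain ⟨m', hm', _, hlt⟩ := hα.2 _ (s j) hm h1 _ (hedge (N + j)).1
          exact ⟨m', hm', hlt (by omega)⟩
      obtain ⟨m', hm', hlt⟩ := key
      have hm'' : m' = s (j + 1) := by
        have : α (f (N + (j + 1))) = some (s (j + 1)) := by simp [hs]
        rw [show N + (j + 1) = N + j + 1 by omega] at this
        rw [this] at hm'; injection hm' with e; exact e.symm
      rcases hlt with h | h
      · omega
      · rw [hm''] at h; exact h.2
    have hbound : ∀ j, s j + j ≤ s 0 := by
      intro j
      induction j with
      | zero => omega
      | succ j ih => have := hdec j; omega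
    have := hbound (s 0 + 1); omega
  · -- positional
    rintro π₁ π₂ q q₁ q₂ hπ₁ hπ₂ hl₁ hl₂ hown h₁ h₂
    rw [owns_true] at hown
    have e₁ := (chain'_last_step h₁.2.1 hl₁).2 hown
    have e₂ := (chain'_last_step h₂.2.1 hl₂).2 hown
    rw [e₁, e₂]

end Aux

section Fwd
variable {S : Type}

/-- The edge relation of the strategy subgraph. -/
def EdgeRel (G : Game S) (τ : Set (List S)) (q q' : S) : Prop :=
  G.succ q q' ∧ ∃ π ∈ τ, π.getLast? = some q ∧ π ++ [q'] ∈ τ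

/-- There is a strategy path of length `n` from `q` all whose later ranks equal `r`. -/
def ReachN (G : Game S) (τ : Set (List S)) (r : ℕ) (q : S) (n : ℕ) : Prop :=
  ∃ f : ℕ → S, f 0 = q ∧ ∀ k < n, EdgeRel G τ (f k) (f (k + 1)) ∧ G.rank (f (k + 1)) = r

lemma ReachN_zero (G : Game S) (τ : Set (List S)) (r : ℕ) (q : S) : ReachN G τ r q 0 :=
  ⟨fun _ => q, rfl, fun k hk => absurd hk (by omega)⟩

lemma ReachN_mono (G : Game S) (τ : Set (List S)) (r : ℕ) (q : S) {m n : ℕ} (h : m ≤ n)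
    (hr : ReachN G τ r q n) : ReachN G τ r q m := by
  obtain ⟨f, hf0, hf⟩ := hr
  exact ⟨f, hf0, fun k hk => hf k (by omega)⟩

lemma reach_step_out (G : Game S) (τ : Set (List S)) (r : ℕ) (q : S) (n : ℕ)
    (h : ReachN G τ r q (n + 1)) :
    ∃ q', EdgeRel G τ q q' ∧ G.rank q' = r ∧ ReachN G τ r q' n := by
  obtain ⟨f, hf0, hf⟩ := h
  refine ⟨f 1, by rw [← hf0]; exact (hf 0 (by omega)).1, (hf 0 (by omega)).2, ?_⟩
  exact ⟨fun k => f (k + 1), rfl, fun k hk => hf (k + 1) (by omega)⟩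

lemma reach_step_in (G : Game S) (τ : Set (List S)) (r : ℕ) (q q' : S) (n : ℕ)
    (hE : EdgeRel G τ q q') (hr : G.rank q' = r) (h : ReachN G τ r q' n) :
    ReachN G τ r q (n + 1) := by
  obtain ⟨f, hf0, hf⟩ := h
  refine ⟨fun k => match k with | 0 => q | (k + 1) => f k, rfl, ?_⟩
  intro k hk
  cases k with
  | zero =>
    show EdgeRel G τ q (f 0) ∧ G.rank (f 0) = r
    rw [hf0]; exact ⟨hE, hr⟩
  | succ j => exact hf j (by omega)

lemma koenig_step (G : WeakGame S) (τ : Set (List S)) (r : ℕ) (q : S)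
    (hq : ∀ n, ReachN G.toGame τ r q n) :
    ∃ q', EdgeRel G.toGame τ q q' ∧ G.toGame.rank q' = r ∧
      ∀ n, ReachN G.toGame τ r q' n := by
  classical
  by_contra hcon
  push_neg at hcon
  have hb : ∀ q' : S, ∃ m, (EdgeRel G.toGame τ q q' → G.toGame.rank q' = r →
      ¬ ReachN G.toGame τ r q' m) := by
    intro q'
    by_cases h : EdgeRel G.toGame τ q q' ∧ G.toGame.rank q' = r
    · obtain ⟨n, hn⟩ := hcon q' h.1 h.2
      exact ⟨n, fun _ _ => hn⟩
    · exact ⟨0, fun h1 h2 => absurd ⟨h1, h2⟩ h⟩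
  choose b hbs using hb
  set F := (G.finBranch q).toFinset with hF
  set N := F.sup b with hN
  obtain ⟨q', hE, hr, hRe⟩ := reach_step_out G.toGame τ r q N (hq (N + 1))
  have hq'F : q' ∈ F := (Set.Finite.mem_toFinset _).mpr hE.1
  exact hbs q' hE hr (ReachN_mono _ _ _ _ (Finset.le_sup hq'F) hRe)

lemma koenig_path (G : WeakGame S) (τ : Set (List S)) (r : ℕ) (q : S)
    (hq : ∀ n, ReachN G.toGame τ r q n) :
    ∃ f : ℕ → S, f 0 = q ∧ ∀ k, EdgeRel G.toGame τ (f k) (f (k + 1)) ∧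
      G.toGame.rank (f (k + 1)) = r := by
  classical
  have step := fun x : {y : S // ∀ n, ReachN G.toGame τ r y n} => koenig_step G τ r x.1 x.2
  choose nxt h1 h2 h3 using step
  set F : ℕ → {y : S // ∀ n, ReachN G.toGame τ r y n} :=
    fun n => Nat.rec ⟨q, hq⟩ (fun _ prev => ⟨nxt prev, h3 prev⟩) n with hF
  refine ⟨fun n => (F n).1, rfl, fun k => ?_⟩
  exact ⟨h1 (F k), h2 (F k)⟩

lemma extendA (G : Game S) {τ : Set (List S)} {p : S} (hs : G.IsStrategy true p τ)
    (hpos : G.Positional true τ) {π : List S} {q q' : S}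
    (hπ : π ∈ τ) (hlast : π.getLast? = some q) (hE : EdgeRel G τ q q') :
    π ++ [q'] ∈ τ := by
  obtain ⟨hsucc, π', hπ', hlast', hext'⟩ := hE
  by_cases h1 : G.own1 q
  · obtain ⟨y, ⟨hy1, hy2⟩, _⟩ := hs.2.2.2.1 π hπ q hlast ((owns_true G q).mpr h1) ⟨q', hsucc⟩
    have := hpos π π' q y q' hπ hπ' hlast hlast' ((owns_true G q).mpr h1) hy2 hext'
    rwa [this] at hy2
  · exact hs.2.2.2.2 π hπ q hlast (fun h => h1 ((owns_true G q).mp h)) q' hsucc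

lemma take_mem (G : Game S) {τ : Set (List S)} {p : S} (hs : G.IsStrategy true p τ) :
    ∀ d π, π ∈ τ → ∀ n, 0 < n → n + d = π.length → π.take n ∈ τ := by
  intro d
  induction d with
  | zero =>
    intro π hπ n hn hlen
    have h : n = π.length := by omega
    rw [h, List.take_length]; exact hπ
  | succ d ih =>
    intro π hπ n hn hlen
    have hne : π ≠ [p] := by
      intro h; rw [h] at hlen; simp at hlen; omega
    have hd := hs.2.2.1 π hπ hne
    have hlen' : n + d = π.dropLast.length := by
      rw [List.length_dropLast]; omega
    have hres := ih π.dropLast hd n hn hlen'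
    rwa [List.dropLast_eq_take, List.take_take, inf_of_le_left (by omega)] at hres

lemma glue (G : Game S) {τ : Set (List S)} {p : S} (hs : G.IsStrategy true p τ)
    (hpos : G.Positional true τ) {π₀ : List S} (hπ₀ : π₀ ∈ τ) {q : S}
    (hlast : π₀.getLast? = some q) {f : ℕ → S} (hf0 : f 0 = q)
    (hfE : ∀ k, EdgeRel G τ (f k) (f (k + 1))) :
    ∃ g : ℕ → S, prefixIn τ g ∧ ∀ k, g (π₀.length - 1 + k) = f k := by
  classical
  have hne : π₀ ≠ [] := by
    intro h; rw [h] at hlast; cases hlast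
  have hlen : 1 ≤ π₀.length := List.length_pos_iff.mpr hne
  set g : ℕ → S := fun i => if h : i < π₀.length then π₀[i] else f (i + 1 - π₀.length) with hg
  have claim1 : ∀ k, k + 1 ≤ π₀.length →
      (List.ofFn fun i : Fin (k + 1) => g i) = π₀.take (k + 1) := by
    intro k hk
    apply List.ext_getElem
    · simp only [List.length_ofFn, List.length_take]; omega
    · intro i h1 h2
      simp only [List.getElem_ofFn, List.getElem_take]
      have hi : i < π₀.length := by
        simp only [List.length_ofFn] at h1; omega
      simp only [hg]
      rw [dif_pos hi]
  have claim2 : ∀ n, π₀.length ≤ n → (List.ofFn fun i : Fin n => g i) =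
      π₀ ++ List.ofFn fun i : Fin (n - π₀.length) => f (i + 1) := by
    intro n hn
    apply List.ext_getElem
    · simp only [List.length_ofFn, List.length_append]; omega
    · intro i h1 h2
      simp only [List.getElem_ofFn, List.getElem_append, List.length_ofFn]
      by_cases hi : i < π₀.length
      · rw [dif_pos hi]; simp only [hg]; rw [dif_pos hi]
      · rw [dif_neg hi]; simp only [hg]; rw [dif_neg hi]
        show f (i + 1 - π₀.length) = f (i - π₀.length + 1)
        congr 1
        omega
  have mem2 : ∀ j, (π₀ ++ List.ofFn fun i : Fin j => f (i + 1)) ∈ τ ∧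
      (π₀ ++ List.ofFn fun i : Fin j => f (i + 1)).getLast? = some (f j) := by
    intro j
    induction j with
    | zero => simpa [hf0] using ⟨hπ₀, hlast⟩
    | succ j ih =>
      have hsplit : (List.ofFn fun i : Fin (j + 1) => f (↑i + 1)) =
          (List.ofFn fun i : Fin j => f (↑i + 1)) ++ [f (j + 1)] := by
        rw [List.ofFn_succ']
        simp [List.concat_eq_append]
      rw [hsplit, ← List.append_assoc]
      exact ⟨extendA G hs hpos ih.1 ih.2 (hfE j), List.getLast?_concat⟩
  refine ⟨g, ?_, ?_⟩
  · intro k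
    rcases Nat.lt_or_ge (k + 1) (π₀.length + 1) with h | h
    · rw [claim1 k (by omega)]
      exact take_mem G hs (π₀.length - (k + 1)) π₀ hπ₀ (k + 1) (by omega) (by omega)
    · rw [claim2 (k + 1) (by omega)]
      exact (mem2 _).1
  · intro k
    cases k with
    | zero =>
      have h : π₀.length - 1 < π₀.length := by omega
      have h2 : π₀[π₀.length - 1]? = some q := by
        rw [← List.getLast?_eq_getElem?]; exact hlast
      rw [List.getElem?_eq_getElem h] at h2
      simp only [hg]
      rw [show π₀.length - 1 + 0 = π₀.length - 1 by omega, dif_pos h, hf0]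
      exact Option.some_inj.mp h2
    | succ k =>
      have h : ¬ (π₀.length - 1 + (k + 1) < π₀.length) := by omega
      simp only [hg]
      rw [dif_neg h]
      congr 1
      omega

lemma no_unbounded (G : WeakGame S) {τ : Set (List S)} {p : S}
    (hw : G.toGame.IsWinningStrategy true p τ) (hpos : G.toGame.Positional true τ)
    {q : S} (hWq : ∃ π ∈ τ, π.getLast? = some q) (hodd : G.toGame.rank q % 2 = 1) :
    ∃ n, ¬ ReachN G.toGame τ (G.toGame.rank q) q n := by
  by_contra hcon
  push_neg at hcon
  obtain ⟨f, hf0, hf⟩ := koenig_path G τ _ q hcon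
  obtain ⟨π₀, hπ₀, hlast⟩ := hWq
  obtain ⟨g, hg, hgk⟩ := glue G.toGame hw.1 hpos hπ₀ hlast hf0 (fun k => (hf k).1)
  obtain ⟨M, hM, hpar⟩ := hw.2.2 g hg
  have h1 : G.toGame.rank (g (π₀.length - 1 + M)) = G.toGame.rank q := by
    rw [hgk M]
    cases M with
    | zero => rw [hf0]
    | succ m => exact (hf m).2
  have h2 := hM (π₀.length - 1 + M) (by omega)
  have hpar0 : G.toGame.rank (g M) % 2 = 0 := by simpa using hpar
  have h4 : G.toGame.rank q = G.toGame.rank (g M) := by rw [← h1, h2]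
  rw [h4] at hodd
  omega

theorem fwd (G : WeakGame S) (p : S) (τ : Set (List S))
    (hw : G.toGame.IsWinningStrategy true p τ) (hpos : G.toGame.Positional true τ) :
    ∃ α : S → Option ℕ, ConsistentSig G.toGame α ∧ (α p).isSome := by
  classical
  have hs := hw.1
  have hterm := hw.2.1
  set W : S → Prop := fun q => ∃ π ∈ τ, π.getLast? = some q with hW
  set sg : S → ℕ := fun q =>
    if G.toGame.rank q % 2 = 1 then sSup {n | ReachN G.toGame τ (G.toGame.rank q) q n} else 0
    with hsg
  have hWE : ∀ q q', EdgeRel G.toGame τ q q' → W q' := by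
    rintro q q' ⟨_, π, hπ, _, hext⟩
    exact ⟨π ++ [q'], hext, List.getLast?_concat⟩
  have hbdd : ∀ q, W q → G.toGame.rank q % 2 = 1 →
      BddAbove {n | ReachN G.toGame τ (G.toGame.rank q) q n} := by
    intro q hWq hodd
    obtain ⟨n, hn⟩ := no_unbounded G hw hpos hWq hodd
    refine ⟨n, fun m hm => ?_⟩
    by_contra hc
    exact hn (ReachN_mono _ _ _ _ (by omega) hm)
  have hkey : ∀ q q', W q → EdgeRel G.toGame τ q q' →
      lexLe (G.toGame.rank q', sg q') (G.toGame.rank q, sg q) ∧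
        (G.toGame.rank q % 2 = 1 → lexLt (G.toGame.rank q', sg q') (G.toGame.rank q, sg q)) := by
    intro q q' hWq hE
    have hle : G.toGame.rank q' ≤ G.toGame.rank q := G.rank_mono _ _ hE.1
    rcases Nat.lt_or_ge (G.toGame.rank q') (G.toGame.rank q) with hlt | hge
    · exact ⟨Or.inl hlt, fun _ => Or.inl hlt⟩
    · have heq : G.toGame.rank q' = G.toGame.rank q := by omega
      by_cases hodd : G.toGame.rank q % 2 = 1
      · have hW' : W q' := hWE q q' hE
        have hb' := hbdd q' hW' (by rw [heq]; exact hodd)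
        rw [heq] at hb'
        have hsgq' : sg q' = sSup {n | ReachN G.toGame τ (G.toGame.rank q) q' n} := by
          simp only [hsg]
          rw [heq, if_pos hodd]
        have hsgq : sg q = sSup {n | ReachN G.toGame τ (G.toGame.rank q) q n} := by
          simp only [hsg]
          rw [if_pos hodd]
        have hmem : ReachN G.toGame τ (G.toGame.rank q) q' (sg q') := by
          rw [hsgq']
          have h0 : (0 : ℕ) ∈ {n | ReachN G.toGame τ (G.toGame.rank q) q' n} := by
            simp only [Set.mem_setOf_eq]; exact ReachN_zero _ _ _ _
          exact Nat.sSup_mem ⟨0, h0⟩ hb'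
        have hsucc : ReachN G.toGame τ (G.toGame.rank q) q (sg q' + 1) :=
          reach_step_in _ _ _ _ _ _ hE heq hmem
        have hlt' : sg q' + 1 ≤ sg q := by
          rw [hsgq]
          exact le_csSup (hbdd q hWq hodd) hsucc
        exact ⟨Or.inr ⟨heq, by omega⟩, fun _ => Or.inr ⟨heq, by omega⟩⟩
      · have hsgq : sg q = 0 := by simp only [hsg]; rw [if_neg hodd]
        have hsgq' : sg q' = 0 := by simp only [hsg]; rw [heq, if_neg hodd]
        exact ⟨Or.inr ⟨heq, by omega⟩, fun h => absurd h hodd⟩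
  set α : S → Option ℕ := fun q => if W q then some (sg q) else none with hα
  have hαval : ∀ q, W q → α q = some (sg q) := by
    intro q h; simp only [hα]; rw [if_pos h]
  have hαdom : ∀ q m, α q = some m → W q ∧ m = sg q := by
    intro q m hm
    by_cases h : W q
    · simp only [hα] at hm
      rw [if_pos h] at hm
      exact ⟨h, (Option.some_inj.mp hm).symm⟩
    · simp only [hα] at hm
      rw [if_neg h] at hm
      cases hm
  refine ⟨α, ⟨?_, ?_⟩, ?_⟩
  · intro q m hm hown
    obtain ⟨hWq, hmv⟩ := hαdom q m hm
    subst hmv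
    obtain ⟨π, hπ, hlastπ⟩ := id hWq
    have hnt : ∃ q', G.toGame.succ q q' := by
      by_contra h
      push_neg at h
      exact hterm π hπ q hlastπ h ((owns_true _ q).mpr hown)
    obtain ⟨y, ⟨hy1, hy2⟩, _⟩ := hs.2.2.2.1 π hπ q hlastπ ((owns_true _ q).mpr hown) hnt
    have hE : EdgeRel G.toGame τ q y := ⟨hy1, π, hπ, hlastπ, hy2⟩
    obtain ⟨h1, h2⟩ := hkey q y hWq hE
    exact ⟨y, hy1, sg y, hαval y (hWE q y hE), h1, h2⟩
  · intro q m hm hown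
    obtain ⟨hWq, hmv⟩ := hαdom q m hm
    subst hmv
    intro q' hsucc
    obtain ⟨π, hπ, hlastπ⟩ := id hWq
    have hext := hs.2.2.2.2 π hπ q hlastπ (fun h => hown ((owns_true _ q).mp h)) q' hsucc
    have hE : EdgeRel G.toGame τ q q' := ⟨hsucc, π, hπ, hlastπ, hext⟩
    obtain ⟨h1, h2⟩ := hkey q q' hWq hE
    exact ⟨sg q', hαval q' (hWE q q' hE), h1, h2⟩
  · rw [hαval p ⟨[p], hs.1, rfl⟩]
    rfl

end Fwd


/-- Player 1 has a positional winning strategy from `p` iff some consistent signature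
assignment is defined at `p`. -/
theorem player1_positional_win_iff_consistentSig {S : Type} (G : WeakGame S) (p : S) :
    (∃ τ, G.toGame.IsWinningStrategy true p τ ∧ G.toGame.Positional true τ) ↔
      ∃ α : S → Option ℕ, ConsistentSig G.toGame α ∧ (α p).isSome := by
  constructor
  · rintro ⟨τ, hw, hpos⟩
    exact fwd G p τ hw hpos
  · rintro ⟨α, hα, hp⟩
    exact bwd G p α hα hp
end

section
/- Every infinite run of an incrementing counter automaton can be normalized so that its only incrementing errors are faulty decrements: for every run of an incrementing CA there exists a run over the same input word, visiting the same sequence of locations, whose only deviations from error-free semantics are decrement instructions that leave the counter unchanged. -/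
/-- Counter instructions: increment, decrement (requires positivity), zero test. -/
inductive CInstr where
  | inc (c : ℕ)
  | dec (c : ℕ)
  | ifz (c : ℕ)

/-- A counter automaton with ε-transitions and zero-testing; targets of ε-transitions
are not accepting. -/
structure CA (A : Type) where
  Q : Type
  qI : Q
  n : ℕ
  δ : Q → Option A → CInstr → Q → Prop
  F : Set Q
  instr_lt : ∀ q w l q', δ q w l q' →
    (match l with | .inc c => c < n | .dec c => c < n | .ifz c => c < n)
  eps_noacc : ∀ q l q', δ q none l q' → q' ∉ F

/-- Error-free execution of a counter instruction. -/
def cexec (l : CInstr) (v v' : ℕ → ℕ) : Prop :=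
  match l with
  | .inc c => v' = Function.update v c (v c + 1)
  | .dec c => 0 < v c ∧ v' = Function.update v c (v c - 1)
  | .ifz c => v c = 0 ∧ v' = v

/-- An error-free (Minsky) transition. -/
def MStep {A : Type} (M : CA A) (q : M.Q) (v : ℕ → ℕ) (w : Option A) (l : CInstr)
    (q' : M.Q) (v' : ℕ → ℕ) : Prop :=
  M.δ q w l q' ∧ cexec l v v'

/-- An incrementing transition: counters may erroneously increase before and after. -/
def IStep {A : Type} (M : CA A) (q : M.Q) (v : ℕ → ℕ) (w : Option A) (l : CInstr)
    (q' : M.Q) (v' : ℕ → ℕ) : Prop :=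
  ∃ vd vd' : ℕ → ℕ, v ≤ vd ∧ MStep M q vd w l q' vd' ∧ vd' ≤ v'

/-- A transition whose only possible incrementing error is a faulty decrement, which
leaves the counters unchanged. -/
def FStep {A : Type} (M : CA A) (q : M.Q) (v : ℕ → ℕ) (w : Option A) (l : CInstr)
    (q' : M.Q) (v' : ℕ → ℕ) : Prop :=
  M.δ q w l q' ∧ (cexec l v v' ∨ ∃ c : ℕ, l = CInstr.dec c ∧ v' = v)

/-- An infinite run of the incrementing counter automaton `M`. -/
def InfRun {A : Type} (M : CA A) (qs : ℕ → M.Q) (vs : ℕ → ℕ → ℕ)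
    (ws : ℕ → Option A) (ls : ℕ → CInstr) : Prop :=
  qs 0 = M.qI ∧ vs 0 = (fun _ => 0) ∧
  ∀ i : ℕ, IStep M (qs i) (vs i) (ws i) (ls i) (qs (i + 1)) (vs (i + 1))

/-- One normalized step: execute `l` on `v`, turning an impossible decrement into a
faulty (no-op) decrement. -/
def nstep (l : CInstr) (v : ℕ → ℕ) : ℕ → ℕ :=
  match l with
  | .inc c => Function.update v c (v c + 1)
  | .dec c => if 0 < v c then Function.update v c (v c - 1) else v
  | .ifz _ => v

lemma nstep_spec {A : Type} (M : CA A) {q : M.Q} {v v2 : ℕ → ℕ} {w : Option A}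
    {l : CInstr} {q' : M.Q} (u : ℕ → ℕ) (hle : u ≤ v)
    (h : IStep M q v w l q' v2) :
    FStep M q u w l q' (nstep l u) ∧ nstep l u ≤ v2 := by
  obtain ⟨vd, vd', hv, ⟨hδ, hexec⟩, hv'⟩ := h
  have hu : u ≤ vd := le_trans hle hv
  cases l with
  | inc c =>
    refine ⟨⟨hδ, Or.inl rfl⟩, ?_⟩
    intro d
    refine le_trans ?_ (le_trans (le_of_eq (congrFun hexec.symm d)) (hv' d))
    by_cases hdc : d = c
    · subst hdc; simp [nstep, Function.update_self]
      exact hu d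
    · simp [nstep, Function.update_of_ne hdc]
      exact hu d
  | dec c =>
    obtain ⟨hpos, hvd'⟩ := hexec
    by_cases hp : 0 < u c
    · refine ⟨⟨hδ, Or.inl ⟨hp, by simp [nstep, hp]⟩⟩, ?_⟩
      intro d
      refine le_trans ?_ (le_trans (le_of_eq (congrFun hvd'.symm d)) (hv' d))
      by_cases hdc : d = c
      · subst hdc
        have h2 : u d ≤ vd d := hu d
        simp only [nstep, hp, if_true, Function.update_self]
        omega
      · simp [nstep, hp, Function.update_of_ne hdc]
        exact hu d
    · refine ⟨⟨hδ, Or.inr ⟨c, rfl, by simp [nstep, hp]⟩⟩, ?_⟩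
      intro d
      simp only [nstep, hp, if_false]
      refine le_trans ?_ (le_trans (le_of_eq (congrFun hvd'.symm d)) (hv' d))
      by_cases hdc : d = c
      · subst hdc; omega
      · simp [Function.update_of_ne hdc]
        exact hu d
  | ifz c =>
    obtain ⟨hz, hvd'⟩ := hexec
    have huc : u c = 0 := Nat.le_zero.mp (hz ▸ hu c)
    exact ⟨⟨hδ, Or.inl ⟨huc, rfl⟩⟩, le_trans (hvd' ▸ hu) hv'⟩

/-- Every infinite run of an incrementing counter automaton can be normalized: there is a
run over the same input word, visiting the same locations and performing the same
instructions, whose only incrementing errors are faulty decrements that leave the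
counters unchanged. -/
theorem incrementingCA_run_normalization {A : Type} (M : CA A)
    (qs : ℕ → M.Q) (vs : ℕ → ℕ → ℕ) (ws : ℕ → Option A) (ls : ℕ → CInstr)
    (hrun : InfRun M qs vs ws ls) :
    ∃ vs' : ℕ → ℕ → ℕ, vs' 0 = (fun _ => 0) ∧
      ∀ i : ℕ, FStep M (qs i) (vs' i) (ws i) (ls i) (qs (i + 1)) (vs' (i + 1)) := by
  obtain ⟨-, hv0, hstep⟩ := hrun
  set vs' : ℕ → ℕ → ℕ := fun i => Nat.rec (motive := fun _ => ℕ → ℕ)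
    (fun _ => 0) (fun j v => nstep (ls j) v) i with hvs'
  have hle : ∀ i, vs' i ≤ vs i := by
    intro i
    induction i with
    | zero => rw [hv0]; exact le_refl _
    | succ j ih => exact (nstep_spec M (vs' j) ih (hstep j)).2
  exact ⟨vs', rfl, fun i => (nstep_spec M (vs' i) (hle i) (hstep i)).1⟩
end

section
/- Nonemptiness for incrementing counter automata over infinite words is in Π⁰₁ (co-recursively enumerable): the set of incrementing counter automata that have no accepting infinite run is recursively enumerable. Specifically, the procedure that repeatedly computes pruned finite reachability trees (stopping each branch at accepting locations or at states dominating an earlier state of the same branch) terminates if and only if the automaton has no accepting infinite run. -/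
/-- A witness of non-termination of the forward exploration procedure: an infinite run
with restricted errors (faulty decrements only), together with infinitely many restart
points at accepting locations, such that between consecutive restart points no state
dominates an earlier state of the same segment and no intermediate state is accepting. -/
def NonTermWitness {A : Type} (M : CA A) : Prop :=
  ∃ (qs : ℕ → M.Q) (vs : ℕ → ℕ → ℕ) (ws : ℕ → Option A) (ls : ℕ → CInstr) (k : ℕ → ℕ),
    qs 0 = M.qI ∧ vs 0 = (fun _ => 0) ∧
    (∀ i : ℕ, FStep M (qs i) (vs i) (ws i) (ls i) (qs (i + 1)) (vs (i + 1))) ∧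
    k 0 = 0 ∧ StrictMono k ∧
    (∀ m : ℕ, qs (k (m + 1)) ∈ M.F) ∧
    (∀ m i j : ℕ, k m ≤ i → i < j → j < k (m + 1) →
      ¬ (qs i = qs j ∧ vs i ≤ vs j)) ∧
    (∀ m i : ℕ, k m < i → i < k (m + 1) → qs i ∉ M.F)
section Aux

variable {A : Type}

lemma exists_seq {α : Type*} (P : ℕ → α → α → Prop) (Q : ℕ → α → Prop) (a0 : α)
    (h0 : Q 0 a0) (hstep : ∀ i a, Q i a → ∃ b, Q (i + 1) b ∧ P i a b) :
    ∃ f : ℕ → α, f 0 = a0 ∧ (∀ i, Q i (f i)) ∧ ∀ i, P i (f i) (f (i + 1)) := by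
  choose g hg1 hg2 using hstep
  let f : ∀ n : ℕ, {a : α // Q n a} :=
    fun n => Nat.rec ⟨a0, h0⟩ (fun i p => ⟨g i p.1 p.2, hg1 i p.1 p.2⟩) n
  exact ⟨fun n => (f n).1, rfl, fun i => (f i).2, fun i => hg2 i (f i).1 (f i).2⟩

lemma mono_step (M : CA A) {q : M.Q} {v : ℕ → ℕ} {w : Option A} {l : CInstr} {q' : M.Q}
    {v' : ℕ → ℕ} (h : FStep M q v w l q' v') {u : ℕ → ℕ} (hu : u ≤ v) :
    ∃ u', u' ≤ v' ∧ FStep M q u w l q' u' := by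
  obtain ⟨hd, hc | ⟨c, hl, hv⟩⟩ := h
  · cases l with
    | inc c =>
      refine ⟨Function.update u c (u c + 1), ?_, hd, Or.inl rfl⟩
      rw [hc]
      intro d
      by_cases hdc : d = c
      · subst hdc; simp only [Function.update_self]
        exact Nat.add_le_add_right (hu d) 1
      · simp only [Function.update_of_ne hdc]; exact hu d
    | dec c =>
      obtain ⟨hpos, hv'⟩ := hc
      by_cases hup : 0 < u c
      · refine ⟨Function.update u c (u c - 1), ?_, hd, Or.inl ⟨hup, rfl⟩⟩
        rw [hv']
        intro d
        by_cases hdc : d = c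
        · subst hdc; simp only [Function.update_self]
          exact Nat.sub_le_sub_right (hu d) 1
        · simp only [Function.update_of_ne hdc]; exact hu d
      · refine ⟨u, ?_, hd, Or.inr ⟨c, rfl, rfl⟩⟩
        rw [hv']
        intro d
        by_cases hdc : d = c
        · subst hdc; simp only [Function.update_self]; omega
        · simp only [Function.update_of_ne hdc]; exact hu d
    | ifz c =>
      obtain ⟨hz, hv'⟩ := hc
      have huz : u c = 0 := Nat.le_zero.mp (hz ▸ hu c)
      exact ⟨u, hv' ▸ hu, hd, Or.inl ⟨huz, rfl⟩⟩
  · exact ⟨u, hv ▸ hu, hd, Or.inr ⟨c, hl, rfl⟩⟩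

lemma istep_to_fstep (M : CA A) {q : M.Q} {v : ℕ → ℕ} {w : Option A} {l : CInstr} {q' : M.Q}
    {v' : ℕ → ℕ} (h : IStep M q v w l q' v') {u : ℕ → ℕ} (hu : u ≤ v) :
    ∃ u', u' ≤ v' ∧ FStep M q u w l q' u' := by
  obtain ⟨vd, vd', h1, ⟨hd, hc⟩, h2⟩ := h
  obtain ⟨u', hu', hf⟩ := mono_step M (⟨hd, Or.inl hc⟩ : FStep M q vd w l q' vd') (hu.trans h1)
  exact ⟨u', hu'.trans h2, hf⟩

lemma fstep_to_istep (M : CA A) {q : M.Q} {v : ℕ → ℕ} {w : Option A} {l : CInstr} {q' : M.Q}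
    {v' : ℕ → ℕ} (h : FStep M q v w l q' v') : IStep M q v w l q' v' := by
  obtain ⟨hd, hc | ⟨c, hl, hv⟩⟩ := h
  · exact ⟨v, v', le_refl _, ⟨hd, hc⟩, le_refl _⟩
  · subst hl; rw [hv]
    refine ⟨Function.update v c (v c + 1),
      Function.update (Function.update v c (v c + 1)) c (Function.update v c (v c + 1) c - 1),
      ?_, ⟨hd, ?_, rfl⟩, ?_⟩
    · intro d
      by_cases hdc : d = c
      · subst hdc; simp
      · simp [Function.update_of_ne hdc]
    · simp
    · intro d
      by_cases hdc : d = c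
      · subst hdc; simp
      · simp [Function.update_of_ne hdc]

end Aux
section Aux2

variable {A : Type}

/-- Bundled infinite sequence of configurations and labels. -/
structure ARun (A : Type) (M : CA A) where
  qs : ℕ → M.Q
  vs : ℕ → ℕ → ℕ
  ws : ℕ → Option A
  ls : ℕ → CInstr

/-- All steps are faulty-decrement steps. -/
def ARun.Steps {M : CA A} (R : ARun A M) : Prop :=
  ∀ i, FStep M (R.qs i) (R.vs i) (R.ws i) (R.ls i) (R.qs (i + 1)) (R.vs (i + 1))

/-- Good run: steps plus infinitely many accepting locations. -/
def ARun.Good {M : CA A} (R : ARun A M) : Prop :=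
  R.Steps ∧ ∀ N, ∃ i, N ≤ i ∧ R.qs i ∈ M.F

/-- Shift a run by `t`. -/
def ARun.shift {M : CA A} (R : ARun A M) (t : ℕ) : ARun A M :=
  ⟨fun i => R.qs (i + t), fun i => R.vs (i + t), fun i => R.ws (i + t), fun i => R.ls (i + t)⟩

lemma ARun.Steps.shift {M : CA A} {R : ARun A M} (h : R.Steps) (t : ℕ) :
    (R.shift t).Steps := by
  intro i
  have := h (i + t)
  simpa [ARun.shift, Nat.add_right_comm i t 1] using this

lemma ARun.Good.shift {M : CA A} {R : ARun A M} (h : R.Good) (t : ℕ) :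
    (R.shift t).Good := by
  refine ⟨h.1.shift t, fun N => ?_⟩
  obtain ⟨i, hi, hF⟩ := h.2 (N + t)
  exact ⟨i - t, by omega, by simpa [ARun.shift, Nat.sub_add_cancel (le_trans (Nat.le_add_left t N) hi)] using hF⟩

/-- Monotone simulation of an infinite faulty run from smaller counters. -/
lemma mono_run {M : CA A} (R : ARun A M) (hR : R.Steps) (u : ℕ → ℕ) (hu : u ≤ R.vs 0) :
    ∃ vs' : ℕ → ℕ → ℕ, vs' 0 = u ∧ (∀ i, vs' i ≤ R.vs i) ∧
      ∀ i, FStep M (R.qs i) (vs' i) (R.ws i) (R.ls i) (R.qs (i + 1)) (vs' (i + 1)) := by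
  obtain ⟨f, hf0, hfQ, hfP⟩ := exists_seq
    (fun i w w' => FStep M (R.qs i) w (R.ws i) (R.ls i) (R.qs (i + 1)) w')
    (fun i w => w ≤ R.vs i) u hu
    (fun i w hw => by
      obtain ⟨u', hu', hf⟩ := mono_step M (hR i) hw
      exact ⟨u', hu', hf⟩)
  exact ⟨f, hf0, hfQ, hfP⟩

/-- Glue a prefix of run `R` (up to index `a`) with run `S`, matching at the junction. -/
lemma glue_run {M : CA A} (R S : ARun A M) (a : ℕ)
    (hq : R.qs a = S.qs 0) (hv : R.vs a = S.vs 0)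
    (hR : ∀ i, i < a → FStep M (R.qs i) (R.vs i) (R.ws i) (R.ls i) (R.qs (i + 1)) (R.vs (i + 1)))
    (hS : S.Steps) :
    ∃ C : ARun A M, C.Steps ∧
      (∀ m, m ≤ a → C.qs m = R.qs m ∧ C.vs m = R.vs m) ∧
      (∀ m, a ≤ m → C.qs m = S.qs (m - a) ∧ C.vs m = S.vs (m - a)) := by
  refine ⟨⟨fun m => if m ≤ a then R.qs m else S.qs (m - a),
          fun m => if m ≤ a then R.vs m else S.vs (m - a),
          fun m => if m < a then R.ws m else S.ws (m - a),
          fun m => if m < a then R.ls m else S.ls (m - a)⟩, ?_, ?_, ?_⟩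
  · intro i
    simp only
    by_cases hia : i < a
    · simp only [if_pos hia, if_pos (le_of_lt hia), if_pos (Nat.succ_le_of_lt hia)]
      exact hR i hia
    · have h1 : ¬ (i + 1 ≤ a) := by omega
      simp only [if_neg hia, if_neg h1]
      by_cases hieq : i = a
      · subst hieq
        simp only [le_refl, if_pos, Nat.sub_self]
        have := hS 0
        rw [hq, hv]
        simpa [Nat.succ_sub (le_refl i)] using this
      · have h2 : ¬ (i ≤ a) := by omega
        simp only [if_neg h2]
        have := hS (i - a)
        have e1 : i - a + 1 = i + 1 - a := by omega
        rwa [e1] at this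
  · intro m hm; simp [if_pos hm]
  · intro m hm
    constructor
    · by_cases h : m ≤ a
      · have : m = a := le_antisymm h hm
        subst this; simp [hq]
      · simp [if_neg h]
    · by_cases h : m ≤ a
      · have : m = a := le_antisymm h hm
        subst this; simp [hv]
      · simp [if_neg h]

end Aux2
section Aux3

variable {A : Type}

/-- Cutting loops: strong induction on the position of the accepting location. -/
lemma seg_aux (M : CA A) :
    ∀ t : ℕ, ∀ R : ARun A M, R.Good → 0 < t → R.qs t ∈ M.F →
      (∀ m, 0 < m → m < t → R.qs m ∉ M.F) →
      ∃ (S : ARun A M) (t' : ℕ), S.Good ∧ S.qs 0 = R.qs 0 ∧ S.vs 0 = R.vs 0 ∧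
        0 < t' ∧ S.qs t' ∈ M.F ∧ (∀ m, 0 < m → m < t' → S.qs m ∉ M.F) ∧
        (∀ a b, a < b → b < t' → ¬(S.qs a = S.qs b ∧ S.vs a ≤ S.vs b)) := by
  intro t
  induction t using Nat.strong_induction_on with
  | _ t IH =>
    intro R hR ht hF hint
    by_cases hdom : ∃ a b, a < b ∧ b < t ∧ R.qs a = R.qs b ∧ R.vs a ≤ R.vs b
    · obtain ⟨a, b, hab, hbt, hq, hv⟩ := hdom
      -- simulate the suffix from b with the smaller counters at a
      have hshift : (R.shift b).Steps := hR.1.shift b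
      have hub : R.vs a ≤ (R.shift b).vs 0 := by
        simpa [ARun.shift] using hv
      obtain ⟨vs2, hvs20, hvs2le, hvs2steps⟩ := mono_run (R.shift b) hshift (R.vs a) hub
      set Sb : ARun A M := ⟨(R.shift b).qs, vs2, (R.shift b).ws, (R.shift b).ls⟩ with hSb
      have hSbsteps : Sb.Steps := hvs2steps
      have hqa : R.qs a = Sb.qs 0 := by simpa [hSb, ARun.shift] using hq
      have hva : R.vs a = Sb.vs 0 := by simp [hSb, hvs20]
      obtain ⟨C, hCsteps, hCpre, hCpost⟩ :=
        glue_run R Sb a hqa hva (fun i _ => hR.1 i) hSbsteps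
      have hCGood : C.Good := by
        refine ⟨hCsteps, fun N => ?_⟩
        obtain ⟨i, hi, hiF⟩ := hR.2 (N + a + b)
        refine ⟨i - b + a, by omega, ?_⟩
        have := (hCpost (i - b + a) (by omega)).1
        rw [this]
        have e : i - b + a - a = i - b := by omega
        rw [e]
        show (R.shift b).qs (i - b) ∈ M.F
        simpa [ARun.shift, Nat.sub_add_cancel (by omega : b ≤ i)] using hiF
      set t'' := a + (t - b) with ht''
      have htlt : t'' < t := by omega
      have ht''pos : 0 < t'' := by omega
      have hCt : C.qs t'' ∈ M.F := by
        have := (hCpost t'' (by omega)).1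
        rw [this]
        have e : t'' - a = t - b := by omega
        rw [e]
        show (R.shift b).qs (t - b) ∈ M.F
        simpa [ARun.shift, Nat.sub_add_cancel (le_of_lt hbt)] using hF
      have hCint : ∀ m, 0 < m → m < t'' → C.qs m ∉ M.F := by
        intro m hm0 hmt
        by_cases hma : m ≤ a
        · rw [(hCpre m hma).1]
          exact hint m hm0 (by omega)
        · rw [(hCpost m (by omega)).1]
          show (R.shift b).qs (m - a) ∉ M.F
          have e : m - a + b < t := by omega
          have e2 : 0 < m - a + b := by omega
          simpa [ARun.shift] using hint (m - a + b) e2 e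
      obtain ⟨S, t', hS⟩ := IH t'' htlt C hCGood ht''pos hCt hCint
      refine ⟨S, t', hS.1, ?_, ?_, hS.2.2.2⟩
      · rw [hS.2.1, (hCpre 0 (Nat.zero_le a)).1]
      · rw [hS.2.2.1, (hCpre 0 (Nat.zero_le a)).2]
    · exact ⟨R, t, hR, rfl, rfl, ht, hF, hint,
        fun a b hab hbt hc => hdom ⟨a, b, hab, hbt, hc.1, hc.2⟩⟩

/-- Segment extraction from a good run. -/
lemma seg (M : CA A) (R : ARun A M) (hR : R.Good) :
    ∃ (S : ARun A M) (t : ℕ), S.Good ∧ S.qs 0 = R.qs 0 ∧ S.vs 0 = R.vs 0 ∧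
      0 < t ∧ S.qs t ∈ M.F ∧ (∀ m, 0 < m → m < t → S.qs m ∉ M.F) ∧
      (∀ a b, a < b → b < t → ¬(S.qs a = S.qs b ∧ S.vs a ≤ S.vs b)) := by
  classical
  obtain ⟨i, hi1, hiF⟩ := hR.2 1
  have hex : ∃ n, 1 ≤ n ∧ R.qs n ∈ M.F := ⟨i, hi1, hiF⟩
  set t0 := Nat.find hex with ht0
  have hspec := Nat.find_spec hex
  have hmin : ∀ m, m < t0 → ¬(1 ≤ m ∧ R.qs m ∈ M.F) := fun m hm => Nat.find_min hex hm
  exact seg_aux M t0 R hR hspec.1 hspec.2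
    (fun m hm0 hmt => fun hmF => hmin m hmt ⟨hm0, hmF⟩)

end Aux3

/-- Correctness of the procedure witnessing Π⁰₁-membership of nonemptiness for
incrementing counter automata over infinite words: the forward exploration procedure
fails to terminate iff the automaton has an accepting infinite run (Büchi condition).
Hence the procedure terminates iff the infinite-word language is empty, so the
complement of nonemptiness is recursively enumerable. -/
theorem incrementingCA_procedure_nontermination_iff_accepting_run {A : Type} (M : CA A) :
    NonTermWitness M ↔
      ∃ (qs : ℕ → M.Q) (vs : ℕ → ℕ → ℕ) (ws : ℕ → Option A) (ls : ℕ → CInstr),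
        InfRun M qs vs ws ls ∧ ∀ N : ℕ, ∃ i : ℕ, N ≤ i ∧ qs i ∈ M.F := by
  classical
  constructor
  · rintro ⟨qs, vs, ws, ls, k, hq0, hv0, hstep, hk0, hkmono, hkF, -, -⟩
    refine ⟨qs, vs, ws, ls, ⟨hq0, hv0, fun i => fstep_to_istep M (hstep i)⟩, fun N => ?_⟩
    exact ⟨k (N + 1), le_trans (Nat.le_succ N) (hkmono.le_apply), hkF N⟩
  · rintro ⟨qs, vs, ws, ls, ⟨hq0, hv0, hstep⟩, hF⟩
    -- replace the incrementing run by a faulty-decrement-only run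
    obtain ⟨vs', hvs'0, -, hsteps'⟩ := exists_seq
      (fun i w w' => FStep M (qs i) w (ws i) (ls i) (qs (i + 1)) w')
      (fun i w => w ≤ vs i) (vs 0) (le_refl _)
      (fun i w hw => istep_to_fstep M (hstep i) hw)
    set R0 : ARun A M := ⟨qs, vs', ws, ls⟩ with hR0
    have hR0Good : R0.Good := ⟨hsteps', hF⟩
    obtain ⟨S0, t0, hS0G, hS0q, hS0v, hS0t, hS0F, hS0int, hS0dom⟩ := seg M R0 hR0Good
    -- iterate segment extraction
    obtain ⟨f, hf0, hQ, hP⟩ := exists_seq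
      (fun _ (p p' : ARun A M × ℕ) => p'.1.qs 0 = p.1.qs p.2 ∧ p'.1.vs 0 = p.1.vs p.2)
      (fun _ p => p.1.Good ∧ 0 < p.2 ∧ p.1.qs p.2 ∈ M.F ∧
        (∀ m, 0 < m → m < p.2 → p.1.qs m ∉ M.F) ∧
        (∀ a b, a < b → b < p.2 → ¬(p.1.qs a = p.1.qs b ∧ p.1.vs a ≤ p.1.vs b)))
      (S0, t0) ⟨hS0G, hS0t, hS0F, hS0int, hS0dom⟩
      (fun i p hp => by
        obtain ⟨S', t', hG, hq, hv, ht, hFt, hint, hdom⟩ := seg M (p.1.shift p.2) (hp.1.shift p.2)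
        refine ⟨(S', t'), ⟨hG, ht, hFt, hint, hdom⟩, ?_, ?_⟩
        · rw [hq]; show p.1.qs (0 + p.2) = p.1.qs p.2; rw [Nat.zero_add]
        · rw [hv]; show p.1.vs (0 + p.2) = p.1.vs p.2; rw [Nat.zero_add])
    set k : ℕ → ℕ := fun m => ∑ r ∈ Finset.range m, (f r).2 with hk
    have hksucc : ∀ m, k (m + 1) = k m + (f m).2 := fun m => Finset.sum_range_succ _ m
    have hk0 : k 0 = 0 := Finset.sum_range_zero _
    have hkmono : StrictMono k := strictMono_nat_of_lt_succ (fun n => by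
      rw [hksucc n]; have := (hQ n).2.1; omega)
    have hidx : ∀ i : ℕ, ∃ m, i < k (m + 1) := fun i =>
      ⟨i, lt_of_lt_of_le (Nat.lt_succ_self i) (hkmono.le_apply)⟩
    have key : ∀ i : ℕ, ∃ m, k m ≤ i ∧ i < k (m + 1) := by
      intro i
      have hs := Nat.find_spec (hidx i)
      rcases Nat.eq_zero_or_pos (Nat.find (hidx i)) with h | h
      · refine ⟨Nat.find (hidx i), ?_, hs⟩
        rw [h, hk0]
        exact Nat.zero_le i
      · have hmin := Nat.find_min (hidx i) (Nat.sub_lt h Nat.one_pos)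
        have e : Nat.find (hidx i) - 1 + 1 = Nat.find (hidx i) := by omega
        rw [e] at hmin
        exact ⟨Nat.find (hidx i), by omega, hs⟩
    choose idx hidx1 hidx2 using key
    have hidxu : ∀ i m, k m ≤ i → i < k (m + 1) → idx i = m := by
      intro i m h1 h2
      by_contra hne
      rcases lt_or_gt_of_ne hne with h | h
      · have hx : k (idx i + 1) ≤ k m := hkmono.monotone (by omega)
        have := hidx2 i
        omega
      · have hx : k (m + 1) ≤ k (idx i) := hkmono.monotone (by omega)
        have := hidx1 i
        omega
    set Qs : ℕ → M.Q := fun i => (f (idx i)).1.qs (i - k (idx i)) with hQs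
    set Vs : ℕ → ℕ → ℕ := fun i => (f (idx i)).1.vs (i - k (idx i)) with hVs
    set Ws : ℕ → Option A := fun i => (f (idx i)).1.ws (i - k (idx i)) with hWs
    set Ls : ℕ → CInstr := fun i => (f (idx i)).1.ls (i - k (idx i)) with hLs
    have hk01 : k 0 < k (0 + 1) := hkmono (Nat.lt_succ_self 0)
    have hidx0 : idx 0 = 0 := hidxu 0 0 (by omega) (by omega)
    refine ⟨Qs, Vs, Ws, Ls, k, ?_, ?_, ?_, hk0, hkmono, ?_, ?_, ?_⟩
    · -- Qs 0 = qI
      show (f (idx 0)).1.qs (0 - k (idx 0)) = M.qI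
      rw [hidx0, hk0, hf0]
      calc (S0, t0).1.qs (0 - 0) = S0.qs 0 := rfl
        _ = R0.qs 0 := hS0q
        _ = M.qI := hq0
    · -- Vs 0 = 0
      show (f (idx 0)).1.vs (0 - k (idx 0)) = (fun _ => 0)
      rw [hidx0, hk0, hf0]
      calc (S0, t0).1.vs (0 - 0) = S0.vs 0 := rfl
        _ = R0.vs 0 := hS0v
        _ = vs 0 := hvs'0
        _ = (fun _ => 0) := hv0
    · -- steps
      intro i
      have h1 := hidx1 i
      have h2 := hidx2 i
      set m := idx i with hm
      rcases lt_or_eq_of_le (Nat.succ_le_of_lt h2) with hlt | heq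
      · have hidxs : idx (i + 1) = m := hidxu (i + 1) m (by omega) hlt
        have e : i + 1 - k m = (i - k m) + 1 := by omega
        show FStep M ((f (idx i)).1.qs (i - k (idx i))) ((f (idx i)).1.vs (i - k (idx i)))
          ((f (idx i)).1.ws (i - k (idx i))) ((f (idx i)).1.ls (i - k (idx i)))
          ((f (idx (i+1))).1.qs (i + 1 - k (idx (i+1)))) ((f (idx (i+1))).1.vs (i + 1 - k (idx (i+1))))
        rw [hidxs, ← hm, e]
        exact (hQ m).1.1 (i - k m)
      · -- i + 1 = k (m + 1)
        have hidxs : idx (i + 1) = m + 1 := by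
          have hlt2 : k (m + 1) < k (m + 1 + 1) := hkmono (Nat.lt_succ_self (m + 1))
          apply hidxu
          · omega
          · omega
        have htm := (hQ m).2.1
        have hks := hksucc m
        have e1 : i - k m = (f m).2 - 1 := by omega
        have e2 : (f m).2 - 1 + 1 = (f m).2 := by omega
        have hs := (hQ m).1.1 ((f m).2 - 1)
        rw [e2] at hs
        show FStep M ((f (idx i)).1.qs (i - k (idx i))) ((f (idx i)).1.vs (i - k (idx i)))
          ((f (idx i)).1.ws (i - k (idx i))) ((f (idx i)).1.ls (i - k (idx i)))
          ((f (idx (i+1))).1.qs (i + 1 - k (idx (i+1)))) ((f (idx (i+1))).1.vs (i + 1 - k (idx (i+1))))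
        rw [hidxs, ← hm, e1]
        have e3 : i + 1 - k (m + 1) = 0 := by omega
        rw [e3, (hP m).1, (hP m).2]
        exact hs
    · -- accepting restart points
      intro m
      have hidxk : idx (k (m + 1)) = m + 1 := by
        have hlt2 : k (m + 1) < k (m + 1 + 1) := hkmono (Nat.lt_succ_self (m + 1))
        exact hidxu _ _ (le_refl _) hlt2
      show (f (idx (k (m+1)))).1.qs (k (m+1) - k (idx (k (m+1)))) ∈ M.F
      rw [hidxk, Nat.sub_self, (hP m).1]
      exact (hQ m).2.2.1
    · -- no domination within segments
      intro m i j hi hij hj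
      have hidi : idx i = m := hidxu i m hi (by omega)
      have hidj : idx j = m := hidxu j m (by omega) hj
      rintro ⟨hqe, hve⟩
      have hks := hksucc m
      refine (hQ m).2.2.2.2 (i - k m) (j - k m) (by omega) (by omega) ?_
      constructor
      · have h := hqe
        simp only [hQs] at h
        rwa [hidi, hidj] at h
      · have h := hve
        simp only [hVs] at h
        rwa [hidi, hidj] at h
    · -- no intermediate accepting locations
      intro m i hi1 hi2
      have hidi : idx i = m := hidxu i m (by omega) hi2
      have hks := hksucc m
      show (f (idx i)).1.qs (i - k (idx i)) ∉ M.F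
      rw [hidi]
      exact (hQ m).2.2.2.1 (i - k m) (by omega) (by omega)
end

section
/- The product rank assignment used for intersecting weak automata is correct: the function (m, k) ↦ (m+1)(k+1)+1 on ℕ × ℕ is even iff both m and k are even, and is monotone in each argument; consequently, if ranks ρ₁ and ρ₂ are non-increasing along transitions of A₁ and A₂, then ρ(⟨q₁,q₂⟩) = (ρ₁(q₁)+1)(ρ₂(q₂)+1)+1 is non-increasing along transitions of the product automaton, and an infinite play of the product acceptance game has even limit rank iff its projections have even limit ranks in both components. -/
lemma prodRank_parity (m k : ℕ) :
    ((m + 1) * (k + 1) + 1) % 2 = 0 ↔ (m % 2 = 0 ∧ k % 2 = 0) := by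
  rcases Nat.even_or_odd m with ⟨a, ha⟩ | ⟨a, ha⟩ <;>
  rcases Nat.even_or_odd k with ⟨b, hb⟩ | ⟨b, hb⟩ <;>
  subst ha hb <;> ring_nf <;> omega

lemma prodRank_mono (m m' k k' : ℕ) (hm : m ≤ m') (hk : k ≤ k') :
    (m + 1) * (k + 1) + 1 ≤ (m' + 1) * (k' + 1) + 1 := by
  have := Nat.mul_le_mul (Nat.add_le_add_right hm 1) (Nat.add_le_add_right hk 1)
  omega

-- product constant with antitone positive factors ⇒ both factors constant
lemma factor_eq {a a' b b' : ℕ} (ha : a' ≤ a) (hb : b' ≤ b)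
    (ha0 : 0 < a') (hb0 : 0 < b') (h : a' * b' = a * b) : a' = a ∧ b' = b := by
  have h1 : a' * b' ≤ a * b' := Nat.mul_le_mul_right _ ha
  have h2 : a * b' ≤ a * b := Nat.mul_le_mul_left _ hb
  have e1 : a * b' = a * b := le_antisymm h2 (by omega)
  have e2 : a' * b' = a * b' := by omega
  constructor
  · exact Nat.eq_of_mul_eq_mul_right hb0 e2
  · exact Nat.eq_of_mul_eq_mul_left (lt_of_lt_of_le ha0 ha) e1

/-- Correctness of the product rank assignment `(m, k) ↦ (m+1)(k+1)+1` used for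
intersecting weak automata: it is even iff both arguments are even; it is monotone in
each argument, so it is non-increasing along any pair of non-increasing rank sequences;
and the limit of the combined sequence is even iff the limits of both projections are
even. -/
theorem productRank_correct :
    (∀ m k : ℕ, ((m + 1) * (k + 1) + 1) % 2 = 0 ↔ (m % 2 = 0 ∧ k % 2 = 0)) ∧
    (∀ m m' k k' : ℕ, m ≤ m' → k ≤ k' →
      (m + 1) * (k + 1) + 1 ≤ (m' + 1) * (k' + 1) + 1) ∧
    (∀ f g : ℕ → ℕ, (∀ i, f (i + 1) ≤ f i) → (∀ i, g (i + 1) ≤ g i) →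
      (∀ i, (f (i + 1) + 1) * (g (i + 1) + 1) + 1 ≤ (f i + 1) * (g i + 1) + 1) ∧
      ((∃ N, (∀ j, N ≤ j →
            (f j + 1) * (g j + 1) + 1 = (f N + 1) * (g N + 1) + 1) ∧
          ((f N + 1) * (g N + 1) + 1) % 2 = 0) ↔
        ((∃ N, (∀ j, N ≤ j → f j = f N) ∧ f N % 2 = 0) ∧
         (∃ N, (∀ j, N ≤ j → g j = g N) ∧ g N % 2 = 0)))) := by
  refine ⟨prodRank_parity, prodRank_mono, ?_⟩
  intro f g hf hg
  have hfle : ∀ i j, i ≤ j → f j ≤ f i := fun i j h =>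
    antitone_nat_of_succ_le hf h
  have hgle : ∀ i j, i ≤ j → g j ≤ g i := fun i j h =>
    antitone_nat_of_succ_le hg h
  constructor
  · intro i
    exact prodRank_mono _ _ _ _ (hf i) (hg i)
  · constructor
    · rintro ⟨N, hconst, heven⟩
      have hfg : ∀ j, N ≤ j → f j = f N ∧ g j = g N := by
        intro j hj
        have h := hconst j hj
        have := factor_eq (Nat.add_le_add_right (hfle N j hj) 1)
          (Nat.add_le_add_right (hgle N j hj) 1)
          (Nat.succ_pos _) (Nat.succ_pos _) (by omega)
        omega
      have hpar := (prodRank_parity (f N) (g N)).mp heven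
      exact ⟨⟨N, fun j hj => (hfg j hj).1, hpar.1⟩,
             ⟨N, fun j hj => (hfg j hj).2, hpar.2⟩⟩
    · rintro ⟨⟨N₁, hf1, hf2⟩, ⟨N₂, hg1, hg2⟩⟩
      refine ⟨max N₁ N₂, ?_, ?_⟩
      · intro j hj
        have ef : f j = f (max N₁ N₂) := by
          rw [hf1 j (le_trans (le_max_left _ _) hj), hf1 _ (le_max_left _ _)]
        have eg : g j = g (max N₁ N₂) := by
          rw [hg1 j (le_trans (le_max_right _ _) hj), hg1 _ (le_max_right _ _)]
        rw [ef, eg]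
      · rw [prodRank_parity, hf1 _ (le_max_left _ _), hg1 _ (le_max_right _ _)]
        exact ⟨hf2, hg2⟩
end

section
/- Simple LTL↓₁(𝒪_m) translates to two-variable first-order logic: for each sentence φ of simple LTL with one register and operators 𝒪_m, the translation T_j defined by T_j(a) = P_a(x_j), T_j(↑₁) = x_{1−j} ∼ x_j, T_j(𝖮^k ψ) = ∃x_{1−j}(χ^j_k ∧ T_{1−j}(ψ)) (commuting with Boolean connectives) yields a formula of FO²(∼, <, +1, …, +m) with at most x_j free that is equivalent to φ: for every data word σ over Σ and every position 0 ≤ i < |σ|, σ, i ⊨_∅ φ iff σ ⊨_{[x_j ↦ i]} T_j(φ). -/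
open scoped Classical

/-- A data word: a nonempty (finite or infinite) word together with an equivalence
relation on its positions. Positions are `i` with `(i : ℕ∞) < len`. -/
structure DataWord (A : Type) where
  len : ℕ∞
  len_pos : 0 < len
  letter : ℕ → A
  sim : ℕ → ℕ → Prop
  sim_refl : ∀ i : ℕ, (i : ℕ∞) < len → sim i i
  sim_symm : ∀ i j : ℕ, sim i j → sim j i
  sim_trans : ∀ i j k : ℕ, sim i j → sim j k → sim i k

def DataWord.IsFinite {A : Type} (σ : DataWord A) : Prop := σ.len ≠ ⊤
def DataWord.IsInfinite {A : Type} (σ : DataWord A) : Prop := σ.len = ⊤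
/-- The class of position `i`. -/
def DataWord.cls {A : Type} (σ : DataWord A) (i : ℕ) : Set ℕ := {j | σ.sim i j}

/-- Two-variable first-order logic over data words: the two variables are indexed by
`Bool`; atomic predicates are letter tests, data equivalence `∼`, order `<`, and
offsets `x = y + k`. -/
inductive FO2 (A : Type) where
  | pa (a : A) (x : Bool)
  | sim (x y : Bool)
  | lt (x y : Bool)
  | plus (x y : Bool) (k : ℕ)
  | neg (φ : FO2 A)
  | and (φ ψ : FO2 A)
  | ex (x : Bool) (φ : FO2 A)

/-- First-order satisfaction over data words; quantifiers range over word positions. -/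
def fosat {A : Type} (σ : DataWord A) : FO2 A → (Bool → ℕ) → Prop
  | .pa a x, e => σ.letter (e x) = a
  | .sim x y, e => σ.sim (e x) (e y)
  | .lt x y, e => e x < e y
  | .plus x y k, e => e x = e y + k
  | .neg φ, e => ¬ fosat σ φ e
  | .and φ ψ, e => fosat σ φ e ∧ fosat σ ψ e
  | .ex x φ, e => ∃ i : ℕ, (i : ℕ∞) < σ.len ∧ fosat σ φ (Function.update e x i)

/-- The formula only uses offset predicates `+k` with `1 ≤ k ≤ m`. -/
def FO2.offsetsLE {A : Type} (m : ℕ) : FO2 A → Prop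
  | .plus _ _ k => 1 ≤ k ∧ k ≤ m
  | .neg φ => φ.offsetsLE m
  | .and φ ψ => φ.offsetsLE m ∧ ψ.offsetsLE m
  | .ex _ φ => φ.offsetsLE m
  | _ => True

/-- Free variables of a two-variable formula. -/
def FO2.freeVars {A : Type} : FO2 A → Set Bool
  | .pa _ x => {x}
  | .sim x y | .lt x y | .plus x y _ => {x, y}
  | .neg φ => φ.freeVars
  | .and φ ψ => φ.freeVars ∪ ψ.freeVars
  | .ex x φ => φ.freeVars \ {x}

/-- Simple LTL↓₁(𝒪ₘ): one register, and each temporal operator `𝖮ᵏ` (for `|k| ≤ m+1`)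
is the freeze quantifier `↓₁` immediately followed by `Xᵏ` (for `|k| ≤ m`), by
`X^{m+1}F` (for `k = m+1`), or by `X^{-(m+1)}F⁻¹` (for `k = -(m+1)`). -/
inductive SLTL (A : Type) where
  | atom (a : A)
  | tt
  | up
  | neg (φ : SLTL A)
  | and (φ ψ : SLTL A)
  | op (k : ℤ) (φ : SLTL A)

/-- Satisfaction of simple formulas; the single register holds an optional class. -/
def ssat {A : Type} (m : ℕ) (σ : DataWord A) : SLTL A → ℕ → Option (Set ℕ) → Prop
  | .atom a, i, _ => σ.letter i = a
  | .tt, _, _ => True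
  | .up, i, v => ∃ C, v = some C ∧ i ∈ C
  | .neg φ, i, v => ¬ ssat m σ φ i v
  | .and φ ψ, i, v => ssat m σ φ i v ∧ ssat m σ ψ i v
  | .op k φ, i, _ =>
      if k = (m : ℤ) + 1 then
        ∃ j : ℕ, i + m + 1 ≤ j ∧ (j : ℕ∞) < σ.len ∧ ssat m σ φ j (some (σ.cls i))
      else if k = -((m : ℤ) + 1) then
        ∃ j : ℕ, j + m + 1 ≤ i ∧ ssat m σ φ j (some (σ.cls i))
      else
        ∃ j : ℕ, (j : ℤ) = (i : ℤ) + k ∧ (j : ℕ∞) < σ.len ∧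
          ssat m σ φ j (some (σ.cls i))

/-- Well-formedness for 𝒪ₘ: every operator `𝖮ᵏ` has `|k| ≤ m + 1`. -/
def SLTL.wf {A : Type} (m : ℕ) : SLTL A → Prop
  | .op k φ => k.natAbs ≤ m + 1 ∧ φ.wf m
  | .neg φ => φ.wf m
  | .and φ ψ => φ.wf m ∧ ψ.wf m
  | _ => True

/-- Sentences: no free occurrence of the register test `↑₁` (every occurrence is in the
scope of some `𝖮ᵏ`, whose leading `↓₁` binds it). -/
def SLTL.closed {A : Type} : SLTL A → Prop
  | .up => False
  | .neg φ => φ.closed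
  | .and φ ψ => φ.closed ∧ ψ.closed
  | .op _ _ => True
  | _ => True

/-- Equality of variables, expressed using `<`. -/
def varE {A : Type} (x y : Bool) : FO2 A :=
  FO2.and (FO2.neg (FO2.lt x y)) (FO2.neg (FO2.lt y x))

/-- The guard `χʲₖ` describing the order type between `x_j` and `x_{1-j}`. -/
def chi {A : Type} (m : ℕ) (j : Bool) (k : ℤ) : FO2 A :=
  if k = 0 then varE (!j) j
  else if 0 < k ∧ k ≤ (m : ℤ) then FO2.plus (!j) j k.natAbs
  else if -(m : ℤ) ≤ k ∧ k < 0 then FO2.plus j (!j) k.natAbs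
  else if k = (m : ℤ) + 1 then
    (List.range m).foldr
      (fun k' acc => FO2.and (FO2.neg (FO2.plus (!j) j (k' + 1))) acc)
      (FO2.lt j (!j))
  else
    (List.range m).foldr
      (fun k' acc => FO2.and (FO2.neg (FO2.plus j (!j) (k' + 1))) acc)
      (FO2.lt (!j) j)

/-- The translation `T_j` from simple LTL↓₁(𝒪ₘ) to FO²(∼, <, +1, …, +m). -/
def transSL {A : Type} (m : ℕ) : SLTL A → Bool → FO2 A
  | .atom a, j => FO2.pa a j
  | .tt, j => FO2.neg (FO2.lt j j)
  | .up, j => FO2.sim (!j) j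
  | .neg φ, j => FO2.neg (transSL m φ j)
  | .and φ ψ, j => FO2.and (transSL m φ j) (transSL m ψ j)
  | .op k φ, j => FO2.ex (!j) (FO2.and (chi m j k) (transSL m φ (!j)))


section AuxProof

variable {A : Type}

lemma cast_lt_len {x y : ℕ} {L : ℕ∞} (h : x ≤ y) (hy : (y : ℕ∞) < L) : (x : ℕ∞) < L :=
  lt_of_le_of_lt (by exact_mod_cast h) hy

lemma fosat_foldr (σ : DataWord A) (x y : Bool) (base : FO2 A) (l : List ℕ) (e : Bool → ℕ) :
    fosat σ (l.foldr (fun k' acc => FO2.and (FO2.neg (FO2.plus x y (k' + 1))) acc) base) e ↔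
    ((∀ k' ∈ l, ¬ (e x = e y + (k' + 1))) ∧ fosat σ base e) := by
  induction l with
  | nil => simp
  | cons a l ih =>
    simp only [List.foldr_cons, fosat, ih, List.mem_cons]
    constructor
    · rintro ⟨h1, h2, h3⟩
      exact ⟨fun k' hk' => by rcases hk' with rfl | hk' ; exact h1; exact h2 k' hk', h3⟩
    · rintro ⟨h1, h2⟩
      exact ⟨h1 a (Or.inl rfl), fun k' hk' => h1 k' (Or.inr hk'), h2⟩

lemma offsets_foldr (m : ℕ) (x y : Bool) (base : FO2 A) (l : List ℕ)
    (hb : base.offsetsLE m) (hl : ∀ k' ∈ l, k' + 1 ≤ m) :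
    (l.foldr (fun k' acc => FO2.and (FO2.neg (FO2.plus x y (k' + 1))) acc) base).offsetsLE m := by
  induction l with
  | nil => exact hb
  | cons a l ih =>
    exact ⟨⟨by omega, hl a (List.mem_cons_self)⟩,
      ih (fun k' hk' => hl k' (List.mem_cons_of_mem a hk'))⟩

lemma chi_offsets (m : ℕ) (j : Bool) (k : ℤ) (hk : k.natAbs ≤ m + 1) :
    (chi (A := A) m j k).offsetsLE m := by
  rw [chi]
  split_ifs with h0 h1 h2 h3
  · exact ⟨trivial, trivial⟩
  · exact ⟨by omega, by omega⟩
  · exact ⟨by omega, by omega⟩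
  · exact offsets_foldr m _ _ _ _ trivial (fun k' hk' => by
      simp only [List.mem_range] at hk'; omega)
  · exact offsets_foldr m _ _ _ _ trivial (fun k' hk' => by
      simp only [List.mem_range] at hk'; omega)

lemma offsets_trans (m : ℕ) : ∀ φ : SLTL A, φ.wf m → ∀ j : Bool,
    (transSL m φ j).offsetsLE m := by
  intro φ
  induction φ with
  | atom a => exact fun _ _ => trivial
  | tt => exact fun _ _ => trivial
  | up => exact fun _ _ => trivial
  | neg φ ih => exact fun hwf j => ih hwf j
  | and φ ψ ih1 ih2 => exact fun hwf j => ⟨ih1 hwf.1 j, ih2 hwf.2 j⟩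
  | op k φ ih => exact fun hwf j => ⟨chi_offsets m j k hwf.1, ih hwf.2 (!j)⟩

lemma fv_ex (j : Bool) (φ : FO2 A) : (FO2.ex (!j) φ).freeVars ⊆ {j} := by
  intro b hb
  rcases hb with ⟨_, h⟩
  simp only [Set.mem_singleton_iff] at h ⊢
  cases b <;> cases j <;> simp_all

lemma fv_trans (m : ℕ) : ∀ φ : SLTL A, φ.closed → ∀ j : Bool,
    (transSL m φ j).freeVars ⊆ {j} := by
  intro φ
  induction φ with
  | atom a => intro _ j; simp [transSL, FO2.freeVars]
  | tt => intro _ j; simp [transSL, FO2.freeVars]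
  | up => intro hcl; exact absurd hcl (by simp [SLTL.closed])
  | neg φ ih => exact fun hcl j => ih hcl j
  | and φ ψ ih1 ih2 => exact fun hcl j => Set.union_subset (ih1 hcl.1 j) (ih2 hcl.2 j)
  | op k φ ih => exact fun _ j => fv_ex j _

lemma ssat_closed_indep (m : ℕ) (σ : DataWord A) :
    ∀ φ : SLTL A, φ.closed → ∀ (i : ℕ) (v v' : Option (Set ℕ)),
      (ssat m σ φ i v ↔ ssat m σ φ i v') := by
  intro φ
  induction φ with
  | atom a => exact fun _ _ _ _ => Iff.rfl
  | tt => exact fun _ _ _ _ => Iff.rfl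
  | up => intro hcl; exact absurd hcl (by simp [SLTL.closed])
  | neg φ ih => exact fun hcl i v v' => not_congr (ih hcl i v v')
  | and φ ψ ih1 ih2 => exact fun hcl i v v' => and_congr (ih1 hcl.1 i v v') (ih2 hcl.2 i v v')
  | op k φ ih => exact fun _ _ _ _ => Iff.rfl

lemma master (m : ℕ) : ∀ φ : SLTL A, φ.wf m →
    ∀ (j : Bool) (σ : DataWord A) (i : ℕ), (i : ℕ∞) < σ.len →
    ∀ e : Bool → ℕ, e j = i →
      (ssat m σ φ i (some (σ.cls (e (!j)))) ↔ fosat σ (transSL m φ j) e) := by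
  intro φ
  induction φ with
  | atom a =>
    intro _ j σ i hi e he
    simp [ssat, transSL, fosat, he]
  | tt =>
    intro _ j σ i hi e he
    simp [ssat, transSL, fosat]
  | up =>
    intro _ j σ i hi e he
    simp only [ssat, transSL, fosat, he, DataWord.cls]
    constructor
    · rintro ⟨C, hC, hiC⟩
      rw [Option.some_inj] at hC
      subst hC
      exact hiC
    · intro h
      exact ⟨_, rfl, h⟩
  | neg φ ih =>
    intro hwf j σ i hi e he
    simpa only [ssat, transSL, fosat] using not_congr (ih hwf j σ i hi e he)
  | and φ ψ ih1 ih2 =>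
    intro hwf j σ i hi e he
    simpa only [ssat, transSL, fosat] using
      and_congr (ih1 hwf.1 j σ i hi e he) (ih2 hwf.2 j σ i hi e he)
  | op k φ ih =>
    intro hwf j σ i hi e he
    obtain ⟨hk, hwφ⟩ := hwf
    have hne : j ≠ !j := by cases j <;> simp
    have hup : ∀ a : ℕ, Function.update e (!j) a (!j) = a :=
      fun a => Function.update_self _ _ _
    have hupj : ∀ a : ℕ, Function.update e (!j) a j = i :=
      fun a => by rw [Function.update_of_ne hne, he]
    have IH : ∀ a : ℕ, (a : ℕ∞) < σ.len →
        (ssat m σ φ a (some (σ.cls i)) ↔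
          fosat σ (transSL m φ (!j)) (Function.update e (!j) a)) := by
      intro a ha
      have h2 := ih hwφ (!j) σ a ha (Function.update e (!j) a) (hup a)
      rw [Bool.not_not, hupj a] at h2
      exact h2
    simp only [transSL, fosat]
    by_cases hk1 : k = (m : ℤ) + 1
    · subst hk1
      simp only [ssat, if_pos rfl]
      have hchi : ∀ a : ℕ,
          fosat σ (chi m j ((m : ℤ) + 1)) (Function.update e (!j) a) ↔ i + m + 1 ≤ a := by
        intro a
        rw [chi, if_neg (by omega), if_neg (by omega), if_neg (by omega), if_pos rfl,
          fosat_foldr]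
        simp only [fosat, hup, hupj, List.mem_range]
        constructor
        · rintro ⟨h1, h2⟩
          by_contra hc
          push_neg at hc
          exact h1 (a - i - 1) (by omega) (by omega)
        · intro h
          exact ⟨fun k' hk' => by omega, by omega⟩
      constructor
      · rintro ⟨b, hb1, hb2, hb3⟩
        exact ⟨b, hb2, (hchi b).mpr hb1, (IH b hb2).mp hb3⟩
      · rintro ⟨b, hb1, hb2, hb3⟩
        exact ⟨b, (hchi b).mp hb2, hb1, (IH b hb1).mpr hb3⟩
    · by_cases hk2 : k = -((m : ℤ) + 1)
      · subst hk2
        simp only [ssat, if_neg hk1, if_pos rfl]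
        have hchi : ∀ a : ℕ,
            fosat σ (chi m j (-((m : ℤ) + 1))) (Function.update e (!j) a) ↔
              a + m + 1 ≤ i := by
          intro a
          rw [chi, if_neg (by omega), if_neg (by omega), if_neg (by omega),
            if_neg (by omega), fosat_foldr]
          simp only [fosat, hup, hupj, List.mem_range]
          constructor
          · rintro ⟨h1, h2⟩
            by_contra hc
            push_neg at hc
            exact h1 (i - a - 1) (by omega) (by omega)
          · intro h
            exact ⟨fun k' hk' => by omega, by omega⟩
        constructor
        · rintro ⟨b, hb1, hb3⟩
          have hb2 : (b : ℕ∞) < σ.len := cast_lt_len (by omega) hi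
          exact ⟨b, hb2, (hchi b).mpr hb1, (IH b hb2).mp hb3⟩
        · rintro ⟨b, hb1, hb2, hb3⟩
          exact ⟨b, (hchi b).mp hb2, (IH b hb1).mpr hb3⟩
      · simp only [ssat, if_neg hk1, if_neg hk2]
        rcases lt_trichotomy k 0 with hneg | h0 | hpos
        · have hchi : ∀ a : ℕ,
              fosat σ (chi m j k) (Function.update e (!j) a) ↔ i = a + k.natAbs := by
            intro a
            rw [chi, if_neg (by omega), if_neg (by omega), if_pos ⟨by omega, hneg⟩]
            simp only [fosat, hup, hupj]
          constructor
          · rintro ⟨b, hb1, hb2, hb3⟩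
            exact ⟨b, hb2, (hchi b).mpr (by omega), (IH b hb2).mp hb3⟩
          · rintro ⟨b, hb1, hb2, hb3⟩
            have := (hchi b).mp hb2
            exact ⟨b, by omega, hb1, (IH b hb1).mpr hb3⟩
        · subst h0
          have hchi : ∀ a : ℕ,
              fosat σ (chi m j 0) (Function.update e (!j) a) ↔ a = i := by
            intro a
            rw [chi, if_pos rfl]
            simp only [varE, fosat, hup, hupj]
            omega
          constructor
          · rintro ⟨b, hb1, hb2, hb3⟩
            exact ⟨b, hb2, (hchi b).mpr (by omega), (IH b hb2).mp hb3⟩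
          · rintro ⟨b, hb1, hb2, hb3⟩
            have := (hchi b).mp hb2
            exact ⟨b, by omega, hb1, (IH b hb1).mpr hb3⟩
        · have hchi : ∀ a : ℕ,
              fosat σ (chi m j k) (Function.update e (!j) a) ↔ a = i + k.natAbs := by
            intro a
            rw [chi, if_neg (by omega), if_pos ⟨hpos, by omega⟩]
            simp only [fosat, hup, hupj]
          constructor
          · rintro ⟨b, hb1, hb2, hb3⟩
            exact ⟨b, hb2, (hchi b).mpr (by omega), (IH b hb2).mp hb3⟩
          · rintro ⟨b, hb1, hb2, hb3⟩
            have := (hchi b).mp hb2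
            exact ⟨b, by omega, hb1, (IH b hb1).mpr hb3⟩

end AuxProof

/-- Simple LTL↓₁(𝒪ₘ) translates to FO²(∼, <, +1, …, +m): for every sentence `φ`, the
formula `T_j(φ)` uses only offsets ≤ m, has at most `x_j` free, and is equivalent
to `φ`. -/
theorem simpleLTL_to_FO2_correct {A : Type} (m : ℕ) (φ : SLTL A)
    (hwf : φ.wf m) (hcl : φ.closed) (j : Bool) :
    (transSL m φ j).offsetsLE m ∧
    (transSL m φ j).freeVars ⊆ {j} ∧
    ∀ (σ : DataWord A) (i : ℕ), (i : ℕ∞) < σ.len →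
      ∀ e : Bool → ℕ, e j = i →
        (ssat m σ φ i none ↔ fosat σ (transSL m φ j) e) := by
  refine ⟨offsets_trans m φ hwf j, fv_trans m φ hcl j, ?_⟩
  intro σ i hi e he
  rw [ssat_closed_indep m σ φ hcl i none (some (σ.cls (e (!j))))]
  exact master m φ hwf j σ i hi e he
end

section
/- FO²(∼, <, +1, …, +m) over data words is no more expressive than simple LTL↓₁(𝒪_m): for every formula φ(x_j) of two-variable first-order logic over data words with predicates ∼, <, +1, …, +m, there exists an equivalent sentence of simple LTL↓₁(𝒪_m), i.e., a sentence ψ with the same alphabet such that for every data word σ and every position i, σ ⊨_{[x_j ↦ i]} φ(x_j) iff σ, i ⊨_∅ ψ. -/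
open scoped Classical

namespace FO2toSLTL

variable {A : Type}

/-- clamp a difference to the window `[-(m+1), m+1]`. -/
def clamp (m : ℕ) (d : ℤ) : ℤ := max (-(m+1 : ℤ)) (min (m+1) d)

lemma clamp_neg (m : ℕ) (d : ℤ) : clamp m (-d) = - clamp m d := by
  unfold clamp; omega

/-- disjunction -/
def orF (a b : SLTL A) : SLTL A := .neg (.and (.neg a) (.neg b))

def bigOr : List (SLTL A) → SLTL A
  | [] => .neg .tt
  | a :: l => orF a (bigOr l)

lemma ssat_orF (m : ℕ) (σ : DataWord A) (a b : SLTL A) (i : ℕ) (v : Option (Set ℕ)) :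
    ssat m σ (orF a b) i v ↔ ssat m σ a i v ∨ ssat m σ b i v := by
  simp [orF, ssat]; tauto

lemma ssat_bigOr (m : ℕ) (σ : DataWord A) (l : List (SLTL A)) (i : ℕ) (v : Option (Set ℕ)) :
    ssat m σ (bigOr l) i v ↔ ∃ a ∈ l, ssat m σ a i v := by
  induction l with
  | nil => simp [bigOr, ssat]
  | cons a l ih => simp [bigOr, ssat_orF, ih]

lemma bigOr_wf (m : ℕ) (l : List (SLTL A)) (h : ∀ a ∈ l, a.wf m) : (bigOr l).wf m := by
  induction l with
  | nil => simp [bigOr, SLTL.wf]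
  | cons a l ih =>
    simp only [bigOr, orF, SLTL.wf]
    exact ⟨h a (by simp), ih fun b hb => h b (by simp [hb])⟩

lemma bigOr_closed (l : List (SLTL A)) (h : ∀ a ∈ l, a.closed) : (bigOr l).closed := by
  induction l with
  | nil => simp [bigOr, SLTL.closed]
  | cons a l ih =>
    simp only [bigOr, orF, SLTL.closed]
    exact ⟨h a (by simp), ih fun b hb => h b (by simp [hb])⟩

/-- a closed formula does not look at the register -/
lemma ssat_closed (m : ℕ) (σ : DataWord A) (ψ : SLTL A) (hc : ψ.closed) (i : ℕ)
    (v v' : Option (Set ℕ)) : ssat m σ ψ i v ↔ ssat m σ ψ i v' := by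
  induction ψ with
  | atom a => simp [ssat]
  | tt => simp [ssat]
  | up => exact absurd hc (by simp [SLTL.closed])
  | neg φ ih => exact not_congr (ih hc)
  | and φ ψ ih1 ih2 => exact and_congr (ih1 hc.1) (ih2 hc.2)
  | op k φ ih => exact Iff.rfl

/-- a pair is satisfied at a pair of positions -/
def pairSat (m : ℕ) (σ : DataWord A) (i₀ i₁ : ℕ) (p : SLTL A × SLTL A) : Prop :=
  ssat m σ p.1 i₀ none ∧ ssat m σ p.2 i₁ none

def pairGood (m : ℕ) (p : SLTL A × SLTL A) : Prop :=
  p.1.wf m ∧ p.1.closed ∧ p.2.wf m ∧ p.2.closed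

/-- negation of a disjunction of pairs, as a disjunction of pairs -/
def negList : List (SLTL A × SLTL A) → List (SLTL A × SLTL A)
  | [] => [(.tt, .tt)]
  | p :: L => (negList L).map (fun q => (.and (.neg p.1) q.1, q.2)) ++
              (negList L).map (fun q => (q.1, .and (.neg p.2) q.2))

lemma negList_spec (m : ℕ) (σ : DataWord A) (i₀ i₁ : ℕ) (L : List (SLTL A × SLTL A)) :
    (∃ p ∈ negList L, pairSat m σ i₀ i₁ p) ↔ ¬ ∃ p ∈ L, pairSat m σ i₀ i₁ p := by
  induction L with
  | nil => simp [negList, pairSat, ssat]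
  | cons p L ih =>
    simp only [negList, List.mem_append, List.mem_map, List.mem_cons] at *
    constructor
    · rintro ⟨q, (⟨r, hr, rfl⟩ | ⟨r, hr, rfl⟩), hq1, hq2⟩
      · rintro ⟨s, (rfl | hs), hsat⟩
        · exact hq1.1 hsat.1
        · exact (ih.mp ⟨r, hr, hq1.2, hq2⟩) ⟨s, hs, hsat⟩
      · rintro ⟨s, (rfl | hs), hsat⟩
        · exact hq2.1 hsat.2
        · exact (ih.mp ⟨r, hr, hq1, hq2.2⟩) ⟨s, hs, hsat⟩
    · intro h
      have hrest : ¬ ∃ q ∈ L, pairSat m σ i₀ i₁ q := fun ⟨q, hq, hs⟩ => h ⟨q, Or.inr hq, hs⟩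
      obtain ⟨r, hr, hr1, hr2⟩ := ih.mpr hrest
      by_cases hp : ssat m σ p.1 i₀ none
      · have hp2 : ¬ ssat m σ p.2 i₁ none := fun h2 => h ⟨p, Or.inl rfl, hp, h2⟩
        exact ⟨_, Or.inr ⟨r, hr, rfl⟩, hr1, hp2, hr2⟩
      · exact ⟨_, Or.inl ⟨r, hr, rfl⟩, ⟨hp, hr1⟩, hr2⟩

lemma negList_good (m : ℕ) (L : List (SLTL A × SLTL A)) (h : ∀ p ∈ L, pairGood m p) :
    ∀ p ∈ negList L, pairGood m p := by
  induction L with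
  | nil => intro p hp; simp [negList] at hp; subst hp; exact ⟨trivial, trivial, trivial, trivial⟩
  | cons q L ih =>
    intro p hp
    have hq := h q (by simp)
    have hL := ih (fun r hr => h r (by simp [hr]))
    simp only [negList, List.mem_append, List.mem_map] at hp
    rcases hp with ⟨r, hr, rfl⟩ | ⟨r, hr, rfl⟩
    · obtain ⟨r1, r2, r3, r4⟩ := hL r hr
      exact ⟨⟨hq.1, r1⟩, ⟨hq.2.1, r2⟩, r3, r4⟩
    · obtain ⟨r1, r2, r3, r4⟩ := hL r hr
      exact ⟨r1, r2, ⟨hq.2.2.1, r3⟩, ⟨hq.2.2.2, r4⟩⟩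

/-- conjunction of two disjunctions of pairs -/
def prodList (L₁ L₂ : List (SLTL A × SLTL A)) : List (SLTL A × SLTL A) :=
  L₁.flatMap fun p => L₂.map fun q => (.and p.1 q.1, .and p.2 q.2)

lemma prodList_spec (m : ℕ) (σ : DataWord A) (i₀ i₁ : ℕ) (L₁ L₂ : List (SLTL A × SLTL A)) :
    (∃ p ∈ prodList L₁ L₂, pairSat m σ i₀ i₁ p) ↔
      (∃ p ∈ L₁, pairSat m σ i₀ i₁ p) ∧ (∃ p ∈ L₂, pairSat m σ i₀ i₁ p) := by
  simp only [prodList, List.mem_flatMap, List.mem_map]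
  constructor
  · rintro ⟨r, ⟨p, hp, q, hq, rfl⟩, ⟨h1a, h1b⟩, h2a, h2b⟩
    exact ⟨⟨p, hp, h1a, h2a⟩, ⟨q, hq, h1b, h2b⟩⟩
  · rintro ⟨⟨p, hp, hp1, hp2⟩, ⟨q, hq, hq1, hq2⟩⟩
    exact ⟨_, ⟨p, hp, q, hq, rfl⟩, ⟨hp1, hq1⟩, hp2, hq2⟩

lemma prodList_good (m : ℕ) (L₁ L₂ : List (SLTL A × SLTL A))
    (h₁ : ∀ p ∈ L₁, pairGood m p) (h₂ : ∀ p ∈ L₂, pairGood m p) :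
    ∀ p ∈ prodList L₁ L₂, pairGood m p := by
  intro p hp
  simp only [prodList, List.mem_flatMap, List.mem_map] at hp
  obtain ⟨q, hq, r, hr, rfl⟩ := hp
  obtain ⟨q1, q2, q3, q4⟩ := h₁ q hq
  obtain ⟨r1, r2, r3, r4⟩ := h₂ r hr
  exact ⟨⟨q1, r1⟩, ⟨q2, r2⟩, ⟨q3, r3⟩, ⟨q4, r4⟩⟩

/-- the list of all order types -/
def tlist (m : ℕ) : List ℤ := (List.range (2*m+3)).map fun n : ℕ => ((n : ℤ) - (m+1) : ℤ)

lemma mem_tlist (m : ℕ) (t : ℤ) : t ∈ tlist m ↔ -(m+1 : ℤ) ≤ t ∧ t ≤ m+1 := by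
  constructor
  · intro h
    obtain ⟨n, hn, rfl⟩ := List.mem_map.mp h
    have := List.mem_range.mp hn
    omega
  · intro ⟨h1, h2⟩
    exact List.mem_map.mpr ⟨(t + (m+1)).toNat, List.mem_range.mpr (by omega), by omega⟩

def andUp (b : Bool) (ψ : SLTL A) : SLTL A := .and (if b then .up else .neg .up) ψ

lemma fosat_congr (σ : DataWord A) (φ : FO2 A) :
    ∀ e e' : Bool → ℕ, (∀ x ∈ φ.freeVars, e x = e' x) → (fosat σ φ e ↔ fosat σ φ e') := by
  induction φ with
  | pa a x =>
    intro e e' h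
    rw [show fosat σ (.pa a x) e = (σ.letter (e x) = a) from rfl,
        show fosat σ (.pa a x) e' = (σ.letter (e' x) = a) from rfl,
        h x (by simp [FO2.freeVars])]
  | sim x y =>
    intro e e' h
    rw [show fosat σ (.sim x y) e = σ.sim (e x) (e y) from rfl,
        show fosat σ (.sim x y) e' = σ.sim (e' x) (e' y) from rfl,
        h x (by simp [FO2.freeVars]), h y (by simp [FO2.freeVars])]
  | lt x y =>
    intro e e' h
    rw [show fosat σ (.lt x y) e = (e x < e y) from rfl,
        show fosat σ (.lt x y) e' = (e' x < e' y) from rfl,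
        h x (by simp [FO2.freeVars]), h y (by simp [FO2.freeVars])]
  | plus x y k =>
    intro e e' h
    rw [show fosat σ (.plus x y k) e = (e x = e y + k) from rfl,
        show fosat σ (.plus x y k) e' = (e' x = e' y + k) from rfl,
        h x (by simp [FO2.freeVars]), h y (by simp [FO2.freeVars])]
  | neg φ ih =>
    intro e e' h
    exact not_congr (ih e e' h)
  | and φ ψ ih1 ih2 =>
    intro e e' h
    exact and_congr (ih1 e e' fun x hx => h x (Or.inl hx))
      (ih2 e e' fun x hx => h x (Or.inr hx))
  | ex x φ ih =>
    intro e e' h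
    refine exists_congr fun i => and_congr_right fun _ => ih _ _ fun y hy => ?_
    by_cases hxy : y = x
    · subst hxy; simp
    · rw [Function.update_of_ne hxy, Function.update_of_ne hxy]
      exact h y ⟨hy, hxy⟩

lemma cast_lt_len (σ : DataWord A) {i j : ℕ} (hij : j < i) (hi : (i : ℕ∞) < σ.len) :
    (j : ℕ∞) < σ.len := lt_trans (by exact_mod_cast hij) hi

/-- the key unfolding of the operator semantics -/
lemma op_spec (m : ℕ) (σ : DataWord A) (i : ℕ) (hi : (i : ℕ∞) < σ.len) (t : ℤ)
    (ht : t.natAbs ≤ m + 1) (b : Bool) (ψ : SLTL A) (hψ : ψ.closed) :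
    ssat m σ (.op t (andUp b ψ)) i none ↔
      ∃ j : ℕ, (j : ℕ∞) < σ.len ∧ clamp m ((j : ℤ) - i) = t ∧
        (b = true ↔ σ.sim i j) ∧ ssat m σ ψ j none := by
  have hup : ∀ j : ℕ, ssat m σ (andUp b ψ) j (some (σ.cls i)) ↔
      ((b = true ↔ σ.sim i j) ∧ ssat m σ ψ j none) := by
    intro j
    have hreg : ssat m σ ψ j (some (σ.cls i)) ↔ ssat m σ ψ j none :=
      ssat_closed m σ ψ hψ j _ _
    cases b with
    | true =>
      show (∃ C, some (σ.cls i) = some C ∧ j ∈ C) ∧ _ ↔ _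
      rw [hreg]
      constructor
      · rintro ⟨⟨C, hC, hjC⟩, h2⟩
        obtain rfl := Option.some_inj.mp hC
        exact ⟨⟨fun _ => hjC, fun _ => rfl⟩, h2⟩
      · rintro ⟨h1, h2⟩
        exact ⟨⟨σ.cls i, rfl, h1.mp rfl⟩, h2⟩
    | false =>
      show (¬ ∃ C, some (σ.cls i) = some C ∧ j ∈ C) ∧ _ ↔ _
      rw [hreg]
      constructor
      · rintro ⟨h1, h2⟩
        refine ⟨⟨fun h => absurd h (by simp), fun hs => absurd ⟨σ.cls i, rfl, hs⟩ h1⟩, h2⟩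
      · rintro ⟨h1, h2⟩
        refine ⟨?_, h2⟩
        rintro ⟨C, hC, hjC⟩
        obtain rfl := Option.some_inj.mp hC
        exact absurd (h1.mpr hjC) (by simp)
  show (if t = (m : ℤ) + 1 then _ else if t = -((m : ℤ) + 1) then _ else _) ↔ _
  by_cases h1 : t = (m : ℤ) + 1
  · rw [if_pos h1]
    constructor
    · rintro ⟨j, hj1, hj2, hj3⟩
      exact ⟨j, hj2, by unfold clamp; omega, (hup j).mp hj3⟩
    · rintro ⟨j, hj1, hj2, hj3⟩
      refine ⟨j, ?_, hj1, (hup j).mpr hj3⟩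
      unfold clamp at hj2; omega
  · rw [if_neg h1]
    by_cases h2 : t = -((m : ℤ) + 1)
    · rw [if_pos h2]
      constructor
      · rintro ⟨j, hj1, hj3⟩
        refine ⟨j, cast_lt_len σ (by omega) hi, by unfold clamp; omega, (hup j).mp hj3⟩
      · rintro ⟨j, hj1, hj2, hj3⟩
        refine ⟨j, ?_, (hup j).mpr hj3⟩
        unfold clamp at hj2; omega
    · rw [if_neg h2]
      constructor
      · rintro ⟨j, hj0, hj1, hj3⟩
        exact ⟨j, hj1, by unfold clamp; omega, (hup j).mp hj3⟩
      · rintro ⟨j, hj1, hj2, hj3⟩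
        refine ⟨j, ?_, hj1, (hup j).mpr hj3⟩
        unfold clamp at hj2; omega

lemma goodtt : pairGood (A := A) m (.tt, .tt) := ⟨trivial, trivial, trivial, trivial⟩

theorem main (m : ℕ) (φ : FO2 A) : φ.offsetsLE m →
    ∃ G : ℤ → Bool → List (SLTL A × SLTL A),
      (∀ t b, ∀ p ∈ G t b, pairGood m p) ∧
      ∀ (σ : DataWord A) (e : Bool → ℕ),
        ((e false : ℕ) : ℕ∞) < σ.len → ((e true : ℕ) : ℕ∞) < σ.len →
        ∀ b : Bool, (b = true ↔ σ.sim (e false) (e true)) →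
        (fosat σ φ e ↔
          ∃ p ∈ G (clamp m ((e true : ℤ) - (e false : ℤ))) b,
            pairSat m σ (e false) (e true) p) := by
  induction φ with
  | pa a x =>
    intro _
    refine ⟨fun _ _ => if x then [(.tt, .atom a)] else [(.atom a, .tt)], ?_, ?_⟩
    · intro t b p hp
      cases x <;> simp at hp <;> subst hp <;> exact ⟨trivial, trivial, trivial, trivial⟩
    · intro σ e h0 h1 b hb
      cases x <;> simp [fosat, pairSat, ssat]
  | sim x y =>
    intro _
    cases x <;> cases y
    · refine ⟨fun _ _ => [(.tt, .tt)], fun t b p hp => by simp at hp; subst hp; exact goodtt, ?_⟩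
      intro σ e h0 h1 b hb
      simp only [fosat, List.mem_singleton, pairSat]
      simp [ssat]
      exact σ.sim_refl _ h0
    · refine ⟨fun _ b => if b then [(.tt, .tt)] else [],
        fun t b p hp => by by_cases h : b <;> simp [h] at hp; subst hp; exact goodtt, ?_⟩
      intro σ e h0 h1 b hb
      cases b with
      | true => simp [fosat, pairSat, ssat]; exact hb.mp rfl
      | false =>
        simp [fosat, pairSat, ssat]
        intro h; exact absurd (hb.mpr h) (by simp)
    · refine ⟨fun _ b => if b then [(.tt, .tt)] else [],
        fun t b p hp => by by_cases h : b <;> simp [h] at hp; subst hp; exact goodtt, ?_⟩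
      intro σ e h0 h1 b hb
      cases b with
      | true => simp [fosat, pairSat, ssat]; exact σ.sim_symm _ _ (hb.mp rfl)
      | false =>
        simp [fosat, pairSat, ssat]
        intro h; exact absurd (hb.mpr (σ.sim_symm _ _ h)) (by simp)
    · refine ⟨fun _ _ => [(.tt, .tt)], fun t b p hp => by simp at hp; subst hp; exact goodtt, ?_⟩
      intro σ e h0 h1 b hb
      simp [fosat, pairSat, ssat]
      exact σ.sim_refl _ h1
  | lt x y =>
    intro _
    cases x <;> cases y
    · exact ⟨fun _ _ => [], fun t b p hp => by simp at hp, by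
        intro σ e h0 h1 b hb; simp [fosat, pairSat]⟩
    · refine ⟨fun t _ => if 0 < t then [(.tt, .tt)] else [],
        fun t b p hp => by by_cases h : 0 < t <;> simp [h] at hp; subst hp; exact goodtt, ?_⟩
      intro σ e h0 h1 b hb
      by_cases h : 0 < clamp m ((e true : ℤ) - (e false : ℤ)) <;>
        simp [fosat, pairSat, ssat, h] <;> unfold clamp at h <;> omega
    · refine ⟨fun t _ => if t < 0 then [(.tt, .tt)] else [],
        fun t b p hp => by by_cases h : t < 0 <;> simp [h] at hp; subst hp; exact goodtt, ?_⟩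
      intro σ e h0 h1 b hb
      by_cases h : clamp m ((e true : ℤ) - (e false : ℤ)) < 0 <;>
        simp [fosat, pairSat, ssat, h] <;> unfold clamp at h <;> omega
    · exact ⟨fun _ _ => [], fun t b p hp => by simp at hp, by
        intro σ e h0 h1 b hb; simp [fosat, pairSat]⟩
  | plus x y k =>
    intro hoff
    obtain ⟨hk1, hk2⟩ : 1 ≤ k ∧ k ≤ m := hoff
    cases x <;> cases y
    · exact ⟨fun _ _ => [], fun t b p hp => by simp at hp, by
        intro σ e h0 h1 b hb; simp [fosat, pairSat]; omega⟩
    · refine ⟨fun t _ => if t = -(k : ℤ) then [(.tt, .tt)] else [],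
        fun t b p hp => by by_cases h : t = -(k : ℤ) <;> simp [h] at hp; subst hp; exact goodtt, ?_⟩
      intro σ e h0 h1 b hb
      by_cases h : clamp m ((e true : ℤ) - (e false : ℤ)) = -(k : ℤ) <;>
        simp [fosat, pairSat, ssat, h] <;> unfold clamp at h <;> omega
    · refine ⟨fun t _ => if t = (k : ℤ) then [(.tt, .tt)] else [],
        fun t b p hp => by by_cases h : t = (k : ℤ) <;> simp [h] at hp; subst hp; exact goodtt, ?_⟩
      intro σ e h0 h1 b hb
      by_cases h : clamp m ((e true : ℤ) - (e false : ℤ)) = (k : ℤ) <;>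
        simp [fosat, pairSat, ssat, h] <;> unfold clamp at h <;> omega
    · exact ⟨fun _ _ => [], fun t b p hp => by simp at hp, by
        intro σ e h0 h1 b hb; simp [fosat, pairSat]; omega⟩
  | neg φ ih =>
    intro hoff
    obtain ⟨G, hG, hsem⟩ := ih hoff
    refine ⟨fun t b => negList (G t b), fun t b => negList_good m _ (hG t b), ?_⟩
    intro σ e h0 h1 b hb
    rw [show fosat σ (.neg φ) e = ¬ fosat σ φ e from rfl, negList_spec]
    exact not_congr (hsem σ e h0 h1 b hb)
  | and φ ψ ih1 ih2 =>
    intro hoff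
    obtain ⟨G1, hG1, hsem1⟩ := ih1 hoff.1
    obtain ⟨G2, hG2, hsem2⟩ := ih2 hoff.2
    refine ⟨fun t b => prodList (G1 t b) (G2 t b),
      fun t b => prodList_good m _ _ (hG1 t b) (hG2 t b), ?_⟩
    intro σ e h0 h1 b hb
    rw [show fosat σ (.and φ ψ) e = (fosat σ φ e ∧ fosat σ ψ e) from rfl, prodList_spec]
    exact and_congr (hsem1 σ e h0 h1 b hb) (hsem2 σ e h0 h1 b hb)
  | ex x φ ih =>
    intro hoff
    obtain ⟨G, hG, hsem⟩ := ih hoff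
    cases x
    · -- quantify x₀ = e false; result lives at e true
      refine ⟨fun _ _ => [(.tt, bigOr ((tlist m).flatMap fun t => [true, false].flatMap fun b' =>
          (G t b').map fun p => .and p.2 (.op (-t) (andUp b' p.1))))], ?_, ?_⟩
      · intro t b p hp
        simp only [List.mem_singleton] at hp; subst hp
        refine ⟨trivial, trivial, ?_, ?_⟩
        · refine bigOr_wf m _ ?_
          intro a ha
          simp only [List.mem_flatMap, List.mem_map] at ha
          obtain ⟨t', ht', b', -, p, hp, rfl⟩ := ha
          have hb := (mem_tlist m t').mp ht'
          refine ⟨(hG t' b' p hp).2.2.1, ⟨by omega, ?_, (hG t' b' p hp).1⟩⟩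
          cases b' <;> exact trivial
        · refine bigOr_closed _ ?_
          intro a ha
          simp only [List.mem_flatMap, List.mem_map] at ha
          obtain ⟨t', ht', b', -, p, hp, rfl⟩ := ha
          exact ⟨(hG t' b' p hp).2.2.2, trivial⟩
      · intro σ e h0 h1 b hb
        rw [show fosat σ (.ex false φ) e =
          (∃ i : ℕ, (i : ℕ∞) < σ.len ∧ fosat σ φ (Function.update e false i)) from rfl]
        simp only [List.mem_singleton]
        constructor
        · rintro ⟨i', hi'len, hφ⟩
          refine ⟨_, rfl, trivial, ?_⟩
          rw [ssat_bigOr]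
          have he'f : Function.update e false i' false = i' := Function.update_self _ _ _
          have he't : Function.update e false i' true = e true :=
            Function.update_of_ne (by simp) _ _
          set b' : Bool := if σ.sim i' (e true) then true else false with hb'def
          have hb' : (b' = true ↔ σ.sim (Function.update e false i' false)
              (Function.update e false i' true)) := by
            rw [he'f, he't]; by_cases h : σ.sim i' (e true) <;> simp [hb'def, h]
          obtain ⟨p, hp, hp1, hp2⟩ :=
            (hsem σ _ (by rw [he'f]; exact hi'len) (by rw [he't]; exact h1) b' hb').mp hφ
          rw [he'f, he't] at hp
          rw [he'f] at hp1
          rw [he't] at hp2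
          set t' : ℤ := clamp m ((e true : ℤ) - (i' : ℤ)) with ht'def
          refine ⟨.and p.2 (.op (-t') (andUp b' p.1)), ?_, ?_⟩
          · simp only [List.mem_flatMap, List.mem_map]
            exact ⟨t', (mem_tlist m t').mpr (by rw [ht'def]; unfold clamp; omega), b',
              by cases b' <;> simp, p, hp, rfl⟩
          · refine ⟨hp2, ?_⟩
            refine (op_spec m σ (e true) h1 (-t') (by rw [ht'def]; unfold clamp; omega) b' p.1
              ((hG t' b' p hp).2.1)).mpr ⟨i', hi'len, ?_, ?_, hp1⟩
            · rw [show ((i' : ℤ) - (e true : ℤ)) = -((e true : ℤ) - (i' : ℤ)) by ring,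
                clamp_neg]
            · constructor
              · intro h; exact σ.sim_symm _ _ (hb'.mp h)
              · intro h; exact hb'.mpr (σ.sim_symm _ _ h)
        · rintro ⟨q, hq, -, hΨ⟩
          subst hq
          rw [ssat_bigOr] at hΨ
          obtain ⟨a, ha, hsat⟩ := hΨ
          simp only [List.mem_flatMap, List.mem_map] at ha
          obtain ⟨t', ht', b', -, p, hp, rfl⟩ := ha
          have hs1 : ssat m σ p.2 (e true) none := hsat.1
          have hs2 : ssat m σ (.op (-t') (andUp b' p.1)) (e true) none := hsat.2
          have hta := (mem_tlist m t').mp ht'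
          obtain ⟨j, hjlen, hjc, hjb, hjp⟩ :=
            (op_spec m σ (e true) h1 (-t') (by simp; omega) b' p.1
              ((hG t' b' p hp).2.1)).mp hs2
          refine ⟨j, hjlen, ?_⟩
          have he'f : Function.update e false j false = j := Function.update_self _ _ _
          have he't : Function.update e false j true = e true :=
            Function.update_of_ne (by simp) _ _
          have hb' : (b' = true ↔ σ.sim (Function.update e false j false)
              (Function.update e false j true)) := by
            rw [he'f, he't]
            constructor
            · intro h; exact σ.sim_symm _ _ (hjb.mp h)
            · intro h; exact hjb.mpr (σ.sim_symm _ _ h)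
          refine (hsem σ _ (by rw [he'f]; exact hjlen) (by rw [he't]; exact h1) b' hb').mpr ?_
          have hcl : clamp m ((Function.update e false j true : ℤ) -
              (Function.update e false j false : ℤ)) = t' := by
            rw [he'f, he't]
            rw [show ((e true : ℤ) - (j : ℤ)) = -((j : ℤ) - (e true : ℤ)) by ring, clamp_neg,
              hjc]
            ring
          rw [hcl, he'f, he't]
          exact ⟨p, hp, hjp, hs1⟩
    · -- quantify x₁ = e true; result lives at e false
      refine ⟨fun _ _ => [(bigOr ((tlist m).flatMap fun t => [true, false].flatMap fun b' =>
          (G t b').map fun p => .and p.1 (.op t (andUp b' p.2))), .tt)], ?_, ?_⟩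
      · intro t b p hp
        simp only [List.mem_singleton] at hp; subst hp
        refine ⟨?_, ?_, trivial, trivial⟩
        · refine bigOr_wf m _ ?_
          intro a ha
          simp only [List.mem_flatMap, List.mem_map] at ha
          obtain ⟨t', ht', b', -, p, hp, rfl⟩ := ha
          have hb := (mem_tlist m t').mp ht'
          refine ⟨(hG t' b' p hp).1, ⟨by omega, ?_, (hG t' b' p hp).2.2.1⟩⟩
          cases b' <;> exact trivial
        · refine bigOr_closed _ ?_
          intro a ha
          simp only [List.mem_flatMap, List.mem_map] at ha
          obtain ⟨t', ht', b', -, p, hp, rfl⟩ := ha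
          exact ⟨(hG t' b' p hp).2.1, trivial⟩
      · intro σ e h0 h1 b hb
        rw [show fosat σ (.ex true φ) e =
          (∃ i : ℕ, (i : ℕ∞) < σ.len ∧ fosat σ φ (Function.update e true i)) from rfl]
        simp only [List.mem_singleton]
        constructor
        · rintro ⟨i', hi'len, hφ⟩
          refine ⟨_, rfl, ?_, trivial⟩
          rw [ssat_bigOr]
          have he't : Function.update e true i' true = i' := Function.update_self _ _ _
          have he'f : Function.update e true i' false = e false :=
            Function.update_of_ne (by simp) _ _
          set b' : Bool := if σ.sim (e false) i' then true else false with hb'def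
          have hb' : (b' = true ↔ σ.sim (Function.update e true i' false)
              (Function.update e true i' true)) := by
            rw [he'f, he't]; by_cases h : σ.sim (e false) i' <;> simp [hb'def, h]
          obtain ⟨p, hp, hp1, hp2⟩ :=
            (hsem σ _ (by rw [he'f]; exact h0) (by rw [he't]; exact hi'len) b' hb').mp hφ
          rw [he'f, he't] at hp
          rw [he'f] at hp1
          rw [he't] at hp2
          set t' : ℤ := clamp m ((i' : ℤ) - (e false : ℤ)) with ht'def
          refine ⟨.and p.1 (.op t' (andUp b' p.2)), ?_, ?_⟩
          · simp only [List.mem_flatMap, List.mem_map]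
            exact ⟨t', (mem_tlist m t').mpr (by rw [ht'def]; unfold clamp; omega), b',
              by cases b' <;> simp, p, hp, rfl⟩
          · refine ⟨hp1, ?_⟩
            refine (op_spec m σ (e false) h0 t' (by rw [ht'def]; unfold clamp; omega) b' p.2
              ((hG t' b' p hp).2.2.2)).mpr ⟨i', hi'len, rfl, ?_, hp2⟩
            rw [he'f, he't] at hb'
            exact hb'
        · rintro ⟨q, hq, hΨ, -⟩
          subst hq
          rw [ssat_bigOr] at hΨ
          obtain ⟨a, ha, hsat⟩ := hΨ
          simp only [List.mem_flatMap, List.mem_map] at ha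
          obtain ⟨t', ht', b', -, p, hp, rfl⟩ := ha
          have hs1 : ssat m σ p.1 (e false) none := hsat.1
          have hs2 : ssat m σ (.op t' (andUp b' p.2)) (e false) none := hsat.2
          have hta := (mem_tlist m t').mp ht'
          obtain ⟨j, hjlen, hjc, hjb, hjp⟩ :=
            (op_spec m σ (e false) h0 t' (by omega) b' p.2
              ((hG t' b' p hp).2.2.2)).mp hs2
          refine ⟨j, hjlen, ?_⟩
          have he't : Function.update e true j true = j := Function.update_self _ _ _
          have he'f : Function.update e true j false = e false :=
            Function.update_of_ne (by simp) _ _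
          have hb' : (b' = true ↔ σ.sim (Function.update e true j false)
              (Function.update e true j true)) := by rw [he'f, he't]; exact hjb
          refine (hsem σ _ (by rw [he'f]; exact h0) (by rw [he't]; exact hjlen) b' hb').mpr ?_
          have hcl : clamp m ((Function.update e true j true : ℤ) -
              (Function.update e true j false : ℤ)) = t' := by rw [he'f, he't, hjc]
          rw [hcl, he'f, he't]
          exact ⟨p, hp, hs1, hjp⟩

end FO2toSLTL

/-- FO²(∼, <, +1, …, +m) is no more expressive than simple LTL↓₁(𝒪ₘ): every
two-variable formula with at most `x_j` free is equivalent to a sentence of simple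
LTL↓₁(𝒪ₘ) over the same alphabet. -/
theorem FO2_to_simpleLTL {A : Type} (m : ℕ) (φ : FO2 A)
    (hoff : φ.offsetsLE m) (j : Bool) (hfree : φ.freeVars ⊆ {j}) :
    ∃ ψ : SLTL A, ψ.wf m ∧ ψ.closed ∧
      ∀ (σ : DataWord A) (e : Bool → ℕ), ((e j : ℕ) : ℕ∞) < σ.len →
        (fosat σ φ e ↔ ssat m σ ψ (e j) none) := by
  obtain ⟨G, hG, hsem⟩ := FO2toSLTL.main m φ hoff
  refine ⟨FO2toSLTL.bigOr ((G 0 true).map fun p => .and p.1 p.2), ?_, ?_, ?_⟩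
  · refine FO2toSLTL.bigOr_wf m _ ?_
    intro a ha
    obtain ⟨p, hp, rfl⟩ := List.mem_map.mp ha
    exact ⟨(hG 0 true p hp).1, (hG 0 true p hp).2.2.1⟩
  · refine FO2toSLTL.bigOr_closed _ ?_
    intro a ha
    obtain ⟨p, hp, rfl⟩ := List.mem_map.mp ha
    exact ⟨(hG 0 true p hp).2.1, (hG 0 true p hp).2.2.2⟩
  · intro σ e he
    have hcongr := FO2toSLTL.fosat_congr σ φ e (fun _ => e j)
      (fun x hx => by rw [Set.mem_singleton_iff.mp (hfree hx)])
    rw [hcongr]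
    have hs := hsem σ (fun _ => e j) he he true
      ⟨fun _ => σ.sim_refl _ he, fun _ => rfl⟩
    rw [show FO2toSLTL.clamp m ((e j : ℤ) - (e j : ℤ)) = 0 from by
      unfold FO2toSLTL.clamp; omega] at hs
    rw [hs, FO2toSLTL.ssat_bigOr]
    constructor
    · rintro ⟨p, hp, h1, h2⟩
      exact ⟨_, List.mem_map.mpr ⟨p, hp, rfl⟩, h1, h2⟩
    · rintro ⟨a, ha, hsat⟩
      obtain ⟨p, hp, rfl⟩ := List.mem_map.mp ha
      exact ⟨p, hp, hsat.1, hsat.2⟩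
end
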